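/- arXiv:1103.6203 — 5 statements merged into one kernel-verified Lean document; each statement's English description precedes it below -/
import Mathlib

section
/- The k-th large Schröder number satisfies r_k = (1/k)·∑_{j=0}^{k} C(k,j)·C(k,j-1)·2^j for every positive integer k, where C(k,-1) = 0. -/
open Finset

/-- A large Schröder path to `(k,k)`: a list of steps each equal to `(1,0)`, `(0,1)` or
`(1,1)`, whose total displacement is `(k,k)`, and such that no partial sum rises above
the diagonal (the `y`-coordinate never exceeds the `x`-coordinate). -/
def IsSchroederPath (k : ℕ) (l : List (ℕ × ℕ)) : Prop :=
  (∀ s ∈ l, s = ((1 : ℕ), (0 : ℕ)) ∨ s = (0, 1) ∨ s = (1, 1)) ∧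
  (l.map Prod.fst).sum = k ∧ (l.map Prod.snd).sum = k ∧
  ∀ i : ℕ, ((l.take i).map Prod.snd).sum ≤ ((l.take i).map Prod.fst).sum

namespace SchroAux

open PowerSeries

def S : ℕ → ℕ
  | 0 => 1
  | n + 1 => S n + ∑ i : Fin n.succ, S i * S (n - i)

def xs (l : List (ℕ × ℕ)) : ℕ := (l.map Prod.fst).sum
def ys (l : List (ℕ × ℕ)) : ℕ := (l.map Prod.snd).sum

@[simp] lemma xs_nil : xs [] = 0 := rfl
@[simp] lemma ys_nil : ys [] = 0 := rfl
@[simp] lemma xs_cons (a : ℕ × ℕ) (l : List (ℕ × ℕ)) : xs (a :: l) = a.1 + xs l := rfl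
@[simp] lemma ys_cons (a : ℕ × ℕ) (l : List (ℕ × ℕ)) : ys (a :: l) = a.2 + ys l := rfl
@[simp] lemma xs_append (a b : List (ℕ × ℕ)) : xs (a ++ b) = xs a + xs b := by
  simp [xs]
@[simp] lemma ys_append (a b : List (ℕ × ℕ)) : ys (a ++ b) = ys a + ys b := by
  simp [ys]

lemma isp_iff (k : ℕ) (l : List (ℕ × ℕ)) :
    IsSchroederPath k l ↔
      (∀ s ∈ l, s = ((1 : ℕ), (0 : ℕ)) ∨ s = (0, 1) ∨ s = (1, 1)) ∧
      xs l = k ∧ ys l = k ∧ ∀ i : ℕ, ys (l.take i) ≤ xs (l.take i) :=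
  Iff.rfl

lemma length_le_sum {l : List (ℕ × ℕ)}
    (h : ∀ s ∈ l, s = ((1 : ℕ), (0 : ℕ)) ∨ s = (0, 1) ∨ s = (1, 1)) :
    l.length ≤ xs l + ys l := by
  induction l with
  | nil => simp
  | cons a l ih =>
      have ha := h a List.mem_cons_self
      have ihl := ih (fun s hs => h s (List.mem_cons_of_mem a hs))
      rcases ha with h' | h' | h' <;> rw [h'] <;> simp <;> omega

lemma finite_schroeder (k : ℕ) : {l : List (ℕ × ℕ) | IsSchroederPath k l}.Finite := by
  have hfin : ((List.map (fun q : Fin 2 × Fin 2 => ((q.1 : ℕ), (q.2 : ℕ)))) ''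
      {m : List (Fin 2 × Fin 2) | m.length ≤ 2 * k}).Finite :=
    (List.finite_length_le (Fin 2 × Fin 2) (2 * k)).image _
  apply Set.Finite.subset hfin
  intro l hl
  simp only [Set.mem_setOf_eq] at hl
  rw [isp_iff] at hl
  obtain ⟨hsteps, hx, hy, -⟩ := hl
  have hlen := length_le_sum hsteps
  refine ⟨l.map (fun p : ℕ × ℕ => (Fin.ofNat 2 p.1, Fin.ofNat 2 p.2)), ?_, ?_⟩
  · simp only [Set.mem_setOf_eq, List.length_map]
    omega
  · rw [List.map_map]
    conv_rhs => rw [← List.map_id l]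
    apply List.map_congr_left
    intro s hs
    rcases hsteps s hs with rfl | rfl | rfl <;> rfl

lemma schroeder_zero : {l : List (ℕ × ℕ) | IsSchroederPath 0 l} = {[]} := by
  ext l
  simp only [Set.mem_setOf_eq, Set.mem_singleton_iff]
  constructor
  · intro hl
    rw [isp_iff] at hl
    obtain ⟨hsteps, hx, hy, -⟩ := hl
    have := length_le_sum hsteps
    rw [← List.length_eq_zero_iff]
    omega
  · rintro rfl
    exact ⟨by simp, rfl, rfl, by simp⟩

/- Constructors -/

lemma isp_cons11 {n : ℕ} {l : List (ℕ × ℕ)} (h : IsSchroederPath n l) :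
    IsSchroederPath (n + 1) (((1 : ℕ), (1 : ℕ)) :: l) := by
  rw [isp_iff] at h ⊢
  obtain ⟨hsteps, hx, hy, hpre⟩ := h
  refine ⟨?_, by simp [hx, Nat.add_comm], by simp [hy, Nat.add_comm], ?_⟩
  · intro s hs
    rcases List.mem_cons.mp hs with rfl | hs
    · right; right; rfl
    · exact hsteps s hs
  · intro i
    cases i with
    | zero => simp
    | succ i =>
        rw [List.take_succ_cons]
        simpa using Nat.add_le_add_left (hpre i) 1

lemma isp_comp {a b : ℕ} {A B : List (ℕ × ℕ)}
    (hA : IsSchroederPath a A) (hB : IsSchroederPath b B) :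
    IsSchroederPath (a + b + 1) (((1 : ℕ), (0 : ℕ)) :: (A ++ ((0 : ℕ), (1 : ℕ)) :: B)) := by
  rw [isp_iff] at hA hB ⊢
  obtain ⟨hAsteps, hAx, hAy, hApre⟩ := hA
  obtain ⟨hBsteps, hBx, hBy, hBpre⟩ := hB
  refine ⟨?_, by simp [hAx, hBx]; omega, by simp [hAy, hBy]; omega, ?_⟩
  · intro s hs
    rcases List.mem_cons.mp hs with rfl | hs
    · left; rfl
    · rcases List.mem_append.mp hs with h | h
      · exact hAsteps s h
      · rcases List.mem_cons.mp h with rfl | h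
        · right; left; rfl
        · exact hBsteps s h
  · intro i
    cases i with
    | zero => simp
    | succ i =>
        rw [List.take_succ_cons]
        rw [xs_cons, ys_cons]
        rw [List.take_append, xs_append, ys_append]
        have hmid : ∀ j : ℕ, ys ((((0 : ℕ), (1 : ℕ)) :: B).take j) ≤
            1 + xs ((((0 : ℕ), (1 : ℕ)) :: B).take j) := by
          intro j
          cases j with
          | zero => simp
          | succ j =>
              rw [List.take_succ_cons, xs_cons, ys_cons]
              have := hBpre j
              omega
        have h1 := hApre i
        have h2 := hmid (i - A.length)
        simp only []
        omega

/- Uniqueness of splitting -/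

lemma split_unique_aux {A A' B B' : List (ℕ × ℕ)}
    (hlen : A.length ≤ A'.length)
    (hA : ys A = xs A)
    (hA'pre : ∀ i : ℕ, ys (A'.take i) ≤ xs (A'.take i))
    (heq : A ++ ((0 : ℕ), (1 : ℕ)) :: B = A' ++ ((0 : ℕ), (1 : ℕ)) :: B') :
    A = A' := by
  have htake : List.take A.length A' = A := by
    have h1 : (A ++ ((0 : ℕ), (1 : ℕ)) :: B).take A.length = A := by
      rw [List.take_append, Nat.sub_self, List.take_length, List.take_zero,
        List.append_nil]
    have h2 : (A' ++ ((0 : ℕ), (1 : ℕ)) :: B').take A.length = A'.take A.length := by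
      rw [List.take_append, Nat.sub_eq_zero_of_le hlen, List.take_zero,
        List.append_nil]
    rw [← h2, ← heq, h1]
  obtain ⟨n, hn⟩ : ∃ n, A'.take n = A := ⟨A.length, htake⟩
  have hsplit : A ++ A'.drop n = A' := by
    rw [← hn]; exact List.take_append_drop _ _
  have heq2 : ((0 : ℕ), (1 : ℕ)) :: B = A'.drop n ++ ((0 : ℕ), (1 : ℕ)) :: B' := by
    apply List.append_cancel_left (as := A)
    rw [← List.append_assoc, hsplit]
    exact heq
  rw [List.cons_eq_append_iff] at heq2
  rcases heq2 with ⟨hnil, -⟩ | ⟨C, hC, -⟩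
  · rw [← hsplit, hnil, List.append_nil]
  · exfalso
    have hA'eq : A' = A ++ ((0 : ℕ), (1 : ℕ)) :: C := by
      rw [← hsplit, hC]
    have hpre := hA'pre (A.length + 1)
    have htakesucc : A'.take (A.length + 1) = A ++ [((0 : ℕ), (1 : ℕ))] := by
      rw [hA'eq, List.take_append, List.take_of_length_le (by omega),
        Nat.add_sub_cancel_left, List.take_succ_cons, List.take_zero]
    rw [htakesucc, xs_append, ys_append] at hpre
    simp at hpre
    omega

lemma split_unique {A A' B B' : List (ℕ × ℕ)}
    (hA : ys A = xs A) (hA' : ys A' = xs A')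
    (hApre : ∀ i : ℕ, ys (A.take i) ≤ xs (A.take i))
    (hA'pre : ∀ i : ℕ, ys (A'.take i) ≤ xs (A'.take i))
    (heq : A ++ ((0 : ℕ), (1 : ℕ)) :: B = A' ++ ((0 : ℕ), (1 : ℕ)) :: B') :
    A = A' ∧ B = B' := by
  have hAA' : A = A' := by
    rcases le_total A.length A'.length with h | h
    · exact split_unique_aux h hA hA'pre heq
    · exact (split_unique_aux h hA' hApre heq.symm).symm
  subst hAA'
  exact ⟨rfl, by simpa using heq⟩

lemma decompose {n : ℕ} {l : List (ℕ × ℕ)} (hl : IsSchroederPath (n + 1) l) :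
    (∃ t, l = ((1 : ℕ), (1 : ℕ)) :: t ∧ IsSchroederPath n t) ∨
    (∃ a A B, a ≤ n ∧ l = ((1 : ℕ), (0 : ℕ)) :: (A ++ ((0 : ℕ), (1 : ℕ)) :: B) ∧
      IsSchroederPath a A ∧ IsSchroederPath (n - a) B) := by
  classical
  rw [isp_iff] at hl
  obtain ⟨hsteps, hx, hy, hpre⟩ := hl
  cases l with
  | nil => simp [xs] at hx
  | cons s tl =>
  rcases hsteps s List.mem_cons_self with rfl | rfl | rfl
  · -- first step (1,0) : the hard case
    right
    set l := ((1 : ℕ), (0 : ℕ)) :: tl with hldef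
    have hq : ∃ m, 1 ≤ m ∧ ys (l.take m) = xs (l.take m) :=
      ⟨l.length, by simp [hldef], by rw [List.take_length, hy, hx]⟩
    obtain ⟨hm1, hmbal⟩ := Nat.find_spec hq
    have hmin : ∀ j, j < Nat.find hq → ¬ (1 ≤ j ∧ ys (l.take j) = xs (l.take j)) :=
      fun j hj => Nat.find_min hq hj
    have hmlen : Nat.find hq ≤ l.length :=
      Nat.find_min' hq ⟨by simp [hldef], by rw [List.take_length, hy, hx]⟩
    generalize hgen : Nat.find hq = m at hm1 hmbal hmin hmlen
    have hm2 : 2 ≤ m := by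
      by_contra hcon
      have hm1' : m = 1 := by omega
      rw [hm1', hldef, List.take_succ_cons, List.take_zero] at hmbal
      simp only [ys_cons, xs_cons, ys_nil, xs_nil] at hmbal
      omega
    obtain ⟨mm, rfl⟩ : ∃ mm, m = mm + 2 := ⟨m - 2, by omega⟩
    have hstrict : ∀ j, 1 ≤ j → j < mm + 2 → ys (l.take j) + 1 ≤ xs (l.take j) := by
      intro j h1 h2
      have h3 := hpre j
      have h4 := hmin j h2
      simp only [not_and] at h4
      have := h4 h1
      omega
    have htllen : mm < tl.length := by
      simp only [hldef, List.length_cons] at hmlen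
      omega
    -- the step at position mm of tl is (0,1)
    have hget : tl[mm]'htllen = ((0 : ℕ), (1 : ℕ)) := by
      have htk : tl.take (mm + 1) = tl.take mm ++ [tl[mm]'htllen] := by
        rw [← List.take_concat_get htllen, List.concat_eq_append]
      have hbal2 : ys (l.take (mm + 2)) = xs (l.take (mm + 2)) := hmbal
      have hexp : l.take (mm + 2) = ((1 : ℕ), (0 : ℕ)) :: (tl.take mm ++ [tl[mm]'htllen]) := by
        rw [hldef, List.take_succ_cons, htk]
      have hstrict1 := hstrict (mm + 1) (by omega) (by omega)
      have hexp1 : l.take (mm + 1) = ((1 : ℕ), (0 : ℕ)) :: tl.take mm := by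
        rw [hldef, List.take_succ_cons]
      rw [hexp] at hbal2
      rw [hexp1] at hstrict1
      simp at hstrict1
      rcases hsteps (tl[mm]'htllen)
          (List.mem_cons_of_mem _ (List.getElem_mem htllen)) with h | h | h
      · exfalso; rw [h] at hbal2; simp at hbal2; omega
      · exact h
      · exfalso; rw [h] at hbal2; simp at hbal2; omega
    set A := tl.take mm with hAdef
    set B := tl.drop (mm + 1) with hBdef
    have hlenA : A.length = mm := by
      rw [hAdef, List.length_take]
      omega
    have htl : tl = A ++ ((0 : ℕ), (1 : ℕ)) :: B := by
      rw [hAdef, hBdef, ← hget]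
      rw [← List.drop_eq_getElem_cons htllen, List.take_append_drop]
    have hlEq : l = ((1 : ℕ), (0 : ℕ)) :: (A ++ ((0 : ℕ), (1 : ℕ)) :: B) := by
      rw [hldef, htl]
    have hbalA : ys A = xs A := by
      have hexp : l.take (mm + 2) = ((1 : ℕ), (0 : ℕ)) :: (A ++ [((0 : ℕ), (1 : ℕ))]) := by
        rw [hldef, List.take_succ_cons, ← hget, hAdef,
          ← List.concat_eq_append, List.take_concat_get]
      have := hmbal
      rw [hexp] at this
      simp at this
      omega
    have hApre : ∀ i, ys (A.take i) ≤ xs (A.take i) := by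
      intro i
      rcases Nat.lt_or_ge i mm with h | h
      · have hAi : A.take i = tl.take i := by
          rw [hAdef, List.take_take, min_eq_left (by omega)]
        have hs := hstrict (i + 1) (by omega) (by omega)
        rw [hldef, List.take_succ_cons, ← hAi] at hs
        simp at hs
        omega
      · rw [List.take_of_length_le (by omega)]
        omega
    have hxl : 1 + (xs A + xs B) = n + 1 := by
      rw [hlEq] at hx
      simpa using hx
    have hyl : ys A + (1 + ys B) = n + 1 := by
      rw [hlEq] at hy
      simpa using hy
    refine ⟨xs A, A, B, by omega, hlEq, ?_, ?_⟩
    · rw [isp_iff]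
      refine ⟨?_, rfl, hbalA, hApre⟩
      intro s hs
      exact hsteps s (List.mem_cons_of_mem _ (List.mem_of_mem_take hs))
    · rw [isp_iff]
      refine ⟨?_, by omega, by omega, ?_⟩
      · intro s hs
        exact hsteps s (List.mem_cons_of_mem _ (List.mem_of_mem_drop hs))
      · intro i
        have hp := hpre (mm + 2 + i)
        have hexp : l.take (mm + 2 + i)
            = ((1 : ℕ), (0 : ℕ)) :: (A ++ ((0 : ℕ), (1 : ℕ)) :: B.take i) := by
          have : mm + 2 + i = (mm + 1 + i) + 1 := by omega
          rw [hlEq, this, List.take_succ_cons, List.take_append,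
            List.take_of_length_le (by omega), hlenA,
            show mm + 1 + i - mm = i + 1 by omega, List.take_succ_cons]
        rw [hexp] at hp
        simp at hp
        omega
  · -- first step (0,1) : impossible
    exfalso
    have := hpre 1
    simp [List.take_succ_cons, xs, ys] at this
  · -- first step (1,1)
    left
    refine ⟨tl, rfl, ?_⟩
    rw [isp_iff]
    refine ⟨fun s hs => hsteps s (List.mem_cons_of_mem _ hs),
      by simp only [xs_cons] at hx; omega,
      by simp only [ys_cons] at hy; omega, ?_⟩
    intro i
    have := hpre (i + 1)
    rw [List.take_succ_cons] at this
    simp only [ys_cons, xs_cons] at this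
    omega

/-- Domain of the decomposition bijection. -/
abbrev Dom (n : ℕ) := {l : List (ℕ × ℕ) // IsSchroederPath n l} ⊕
  (Σ i : Fin (n + 1), {A : List (ℕ × ℕ) // IsSchroederPath i A} ×
    {B : List (ℕ × ℕ) // IsSchroederPath (n - i) B})

def phi (n : ℕ) : Dom n → {l : List (ℕ × ℕ) // IsSchroederPath (n + 1) l}
  | Sum.inl ⟨t, ht⟩ => ⟨((1 : ℕ), (1 : ℕ)) :: t, isp_cons11 ht⟩
  | Sum.inr ⟨i, ⟨A, hA⟩, ⟨B, hB⟩⟩ =>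
      ⟨((1 : ℕ), (0 : ℕ)) :: (A ++ ((0 : ℕ), (1 : ℕ)) :: B), by
        have h := isp_comp hA hB
        rwa [show (i : ℕ) + (n - (i : ℕ)) + 1 = n + 1 by omega] at h⟩

theorem card_schroeder : ∀ k : ℕ, {l : List (ℕ × ℕ) | IsSchroederPath k l}.ncard = S k := by
  intro k
  induction k using Nat.strong_induction_on with
  | _ k ih =>
    match k with
    | 0 => rw [schroeder_zero]; simp [S]
    | (n + 1) =>
      haveI hfinI : ∀ j : ℕ, Finite {l : List (ℕ × ℕ) // IsSchroederPath j l} :=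
        fun j => (finite_schroeder j).to_subtype
      have hinj : Function.Injective (phi n) := by
        rintro (⟨t, ht⟩ | ⟨i, ⟨A, hA⟩, ⟨B, hB⟩⟩) (⟨t', ht'⟩ | ⟨i', ⟨A', hA'⟩, ⟨B', hB'⟩⟩) hxy <;>
          simp only [phi, Subtype.mk.injEq, List.cons.injEq, Prod.mk.injEq] at hxy
        · simp only [Sum.inl.injEq, Subtype.mk.injEq]
          exact hxy.2
        · exact absurd hxy.1.2 one_ne_zero
        · exact absurd hxy.1.2 zero_ne_one
        · obtain ⟨-, heq⟩ := hxy
          obtain ⟨hAA, hBB⟩ := split_unique (hA.2.2.1.trans hA.2.1.symm)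
            (hA'.2.2.1.trans hA'.2.1.symm) hA.2.2.2 hA'.2.2.2 heq
          have hii : i = i' := by
            apply Fin.ext
            rw [← hA.2.1, ← hA'.2.1, hAA]
          subst hii
          subst hAA
          subst hBB
          rfl
      have hsurj : Function.Surjective (phi n) := by
        rintro ⟨l, hl⟩
        rcases decompose hl with ⟨t, rfl, ht⟩ | ⟨a, A, B, ha, hlEq, hA, hB⟩
        · exact ⟨Sum.inl ⟨t, ht⟩, rfl⟩
        · refine ⟨Sum.inr ⟨⟨a, by omega⟩, ⟨A, hA⟩, ⟨B, hB⟩⟩, ?_⟩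
          simp only [phi]
          exact Subtype.ext hlEq.symm
      have hcard : Nat.card (Dom n) = Nat.card {l : List (ℕ × ℕ) // IsSchroederPath (n + 1) l} :=
        Nat.card_congr (Equiv.ofBijective (phi n) ⟨hinj, hsurj⟩)
      have h0 : {l : List (ℕ × ℕ) | IsSchroederPath (n + 1) l}.ncard
          = Nat.card {l : List (ℕ × ℕ) // IsSchroederPath (n + 1) l} := rfl
      rw [h0, ← hcard]
      have hsum : Nat.card (Dom n)
          = Nat.card {l : List (ℕ × ℕ) // IsSchroederPath n l}
            + Nat.card (Σ i : Fin (n + 1), {A : List (ℕ × ℕ) // IsSchroederPath i A} ×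
                {B : List (ℕ × ℕ) // IsSchroederPath (n - i) B}) := Nat.card_sum
      rw [hsum]
      letI : ∀ i : Fin (n + 1), Fintype ({A : List (ℕ × ℕ) // IsSchroederPath i A} ×
          {B : List (ℕ × ℕ) // IsSchroederPath (n - i) B}) := fun i => Fintype.ofFinite _
      have hsig : Nat.card (Σ i : Fin (n + 1), {A : List (ℕ × ℕ) // IsSchroederPath i A} ×
          {B : List (ℕ × ℕ) // IsSchroederPath (n - i) B})
          = ∑ i : Fin (n + 1), Nat.card ({A : List (ℕ × ℕ) // IsSchroederPath i A} ×
            {B : List (ℕ × ℕ) // IsSchroederPath (n - i) B}) := by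
        rw [Nat.card_eq_fintype_card, Fintype.card_sigma]
        exact Finset.sum_congr rfl (fun i _ => (Nat.card_eq_fintype_card).symm)
      rw [hsig]
      have hterm : ∀ i : Fin (n + 1),
          Nat.card ({A : List (ℕ × ℕ) // IsSchroederPath i A} ×
            {B : List (ℕ × ℕ) // IsSchroederPath (n - i) B}) = S i * S (n - i) := by
        intro i
        rw [Nat.card_prod]
        have h1 : Nat.card {A : List (ℕ × ℕ) // IsSchroederPath i A} = S i := by
          rw [show (Nat.card {A : List (ℕ × ℕ) // IsSchroederPath i A})
            = {l : List (ℕ × ℕ) | IsSchroederPath i l}.ncard from rfl]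
          exact ih i (by omega)
        have h2 : Nat.card {B : List (ℕ × ℕ) // IsSchroederPath (n - i) B} = S (n - i) := by
          rw [show (Nat.card {B : List (ℕ × ℕ) // IsSchroederPath (n - i) B})
            = {l : List (ℕ × ℕ) | IsSchroederPath (n - i) l}.ncard from rfl]
          exact ih (n - i) (by omega)
        rw [h1, h2]
      rw [Finset.sum_congr rfl (fun i _ => hterm i)]
      have hN : Nat.card {l : List (ℕ × ℕ) // IsSchroederPath n l} = S n := by
        rw [show (Nat.card {l : List (ℕ × ℕ) // IsSchroederPath n l})
          = {l : List (ℕ × ℕ) | IsSchroederPath n l}.ncard from rfl]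
        exact ih n (by omega)
      rw [hN, S]

@[simp] theorem S_zero : S 0 = 1 := by rw [S]

theorem S_succ (n : ℕ) : S (n + 1) = S n + ∑ i ∈ range (n + 1), S i * S (n - i) := by
  rw [S, Fin.sum_univ_eq_sum_range (fun i => S i * S (n - i))]

noncomputable def F : PowerSeries ℚ := PowerSeries.mk fun n => (S n : ℚ)

theorem hg1 : F = 1 + X * F + X * F ^ 2 := by
  ext n
  cases n with
  | zero => simp [F]
  | succ n =>
      simp only [map_add, PowerSeries.coeff_succ_X_mul, pow_two]
      rw [PowerSeries.coeff_one, if_neg (Nat.succ_ne_zero n)]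
      simp only [F, PowerSeries.coeff_mk, PowerSeries.coeff_mul]
      rw [S_succ]
      push_cast
      rw [Finset.Nat.sum_antidiagonal_eq_sum_range_succ (f := fun i j => (S i : ℚ) * (S j : ℚ))]
      simp [PowerSeries.coeff_mk]

theorem hg2 : d⁄dX ℚ F = F + X * d⁄dX ℚ F + F ^ 2 + 2 * X * F * d⁄dX ℚ F := by
  have := congrArg (d⁄dX ℚ) hg1
  rw [map_add, map_add, Derivation.leibniz, Derivation.leibniz, Derivation.leibniz_pow,
    derivative_X, Derivation.map_one_eq_zero] at this
  simp only [smul_eq_mul, pow_one, mul_one, zero_add] at this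
  linear_combination this


theorem hODE : X * (X * (X * d⁄dX ℚ F)) - C (6 : ℚ) * (X * (X * d⁄dX ℚ F)) + X * d⁄dX ℚ F
    = C (3 : ℚ) * (X * F) - F + X + 1 := by
  have c6 : (C (6 : ℚ) : ℚ⟦X⟧) = 6 := by simp [map_ofNat]
  have c3 : (C (3 : ℚ) : ℚ⟦X⟧) = 3 := by simp [map_ofNat]
  rw [c6, c3]
  linear_combination ((1 - X - 2*X*F)*X) * hg2 + (4*X^2*(d⁄dX ℚ F) + 2 - (1 - X - 2*X*F)) * hg1

theorem S_linrec (n : ℕ) :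
    ((n : ℚ) + 4) * S (n + 3) = 3 * (2 * n + 5) * S (n + 2) - (n + 1) * S (n + 1) := by
  have h := congrArg (PowerSeries.coeff (n + 3)) hODE
  simp only [map_add, map_sub, PowerSeries.coeff_succ_X_mul, PowerSeries.coeff_C_mul,
    PowerSeries.coeff_derivative, PowerSeries.coeff_X, PowerSeries.coeff_one, F,
    PowerSeries.coeff_mk] at h
  norm_num at h
  rw [if_neg (by omega : ¬ n + 3 = 1)] at h
  linear_combination h

/-! ### Formula side -/

/-- Summand of the Schröder-number formula. -/
def Ft (n j : ℕ) : ℚ :=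
  (n.choose j : ℚ) * (if j = 0 then 0 else (n.choose (j - 1) : ℚ)) * 2 ^ j

def t (n : ℕ) : ℚ := ∑ j ∈ range (n + 1), Ft n j

/-- Telescoping certificate. -/
def gg (m j : ℕ) : ℚ :=
  if j ≤ 1 then 0 else
    ((m : ℚ) + 2) / ((m : ℚ) + 1) *
      ((j : ℚ) ^ 2 - 3 * (j : ℚ) - 2 * ((m : ℚ) + 1) ^ 2 - ((m : ℚ) + 1) + 2) * 2 ^ j *
      ((m + 1).choose (j - 2) : ℚ) * ((m + 1).choose (j - 1) : ℚ)

theorem L1 (n k : ℕ) : ((k : ℚ) + 1) * (n.choose (k + 1) : ℚ) = ((n : ℚ) - k) * (n.choose k : ℚ) := by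
  by_cases h : k ≤ n
  · have hn := Nat.choose_succ_right_eq n k
    have := congrArg (Nat.cast : ℕ → ℚ) hn
    push_cast [Nat.cast_sub h] at this
    linear_combination this
  · rw [Nat.choose_eq_zero_of_lt (by omega), Nat.choose_eq_zero_of_lt (by omega)]
    ring

theorem L3 (m k : ℕ) :
    ((m : ℚ) + 1) * (m.choose k : ℚ) = ((m : ℚ) + 1 - k) * ((m + 1).choose k : ℚ) := by
  by_cases h : k ≤ m + 1
  · have hn : (m + 1) * m.choose k = (m + 1).choose k * (m + 1 - k) := by
      rw [← Nat.choose_succ_right_eq, ← Nat.add_one_mul_choose_eq]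
    have := congrArg (Nat.cast : ℕ → ℚ) hn
    push_cast [Nat.cast_sub h] at this
    linear_combination this
  · rw [Nat.choose_eq_zero_of_lt (by omega), Nat.choose_eq_zero_of_lt (by omega)]
    ring

theorem term (m j : ℕ) :
    ((m : ℚ) + 1) * ((m : ℚ) + 3) * Ft (m + 2) j
      - 3 * (2 * (m : ℚ) + 3) * ((m : ℚ) + 2) * Ft (m + 1) j
      + ((m : ℚ) + 1) * ((m : ℚ) + 2) * Ft m j
      = gg m (j + 1) - gg m j := by
  have hm1 : ((m : ℚ) + 1) ≠ 0 := by positivity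
  match j with
  | 0 => simp [Ft, gg]
  | 1 =>
      simp only [Ft, gg, if_neg (by norm_num : ¬ (1 : ℕ) = 0), if_pos (by norm_num : (1:ℕ) ≤ 1),
        if_neg (by norm_num : ¬ (2 : ℕ) ≤ 1)]
      norm_num [Nat.choose_one_right]
      field_simp
      ring
  | (jj + 2) =>
      have e1 : (m.choose (jj + 2) : ℚ)
          = ((m : ℚ) - jj - 1) * ((m + 1).choose (jj + 2) : ℚ) / ((m : ℚ) + 1) := by
        rw [eq_div_iff hm1]
        have h := L3 m (jj + 2)
        push_cast at h
        linear_combination h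
      have e2 : (m.choose (jj + 1) : ℚ)
          = ((m : ℚ) - jj) * ((m + 1).choose (jj + 1) : ℚ) / ((m : ℚ) + 1) := by
        rw [eq_div_iff hm1]
        have h := L3 m (jj + 1)
        push_cast at h
        linear_combination h
      have e3 : ((m + 1).choose (jj + 2) : ℚ)
          = ((m : ℚ) - jj) * ((m + 1).choose (jj + 1) : ℚ) / ((jj : ℚ) + 2) := by
        rw [eq_div_iff (by positivity : ((jj : ℚ) + 2) ≠ 0)]
        have h := L1 (m + 1) (jj + 1)
        push_cast at h
        linear_combination h
      have e4 : ((m + 1).choose (jj + 1) : ℚ)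
          = ((m : ℚ) + 1 - jj) * ((m + 1).choose jj : ℚ) / ((jj : ℚ) + 1) := by
        rw [eq_div_iff (by positivity : ((jj : ℚ) + 1) ≠ 0)]
        have h := L1 (m + 1) jj
        push_cast at h
        linear_combination h
      simp only [Ft, gg, if_neg (by omega : ¬ jj + 2 = 0), if_neg (by omega : ¬ jj + 2 ≤ 1),
        if_neg (by omega : ¬ jj + 2 + 1 ≤ 1)]
      have i1 : jj + 2 - 1 = jj + 1 := by omega
      have i2 : jj + 2 + 1 - 2 = jj + 1 := by omega
      have i3 : jj + 2 + 1 - 1 = jj + 2 := by omega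
      have i4 : jj + 2 - 2 = jj := by omega
      rw [i1, i2, i3, i4]
      rw [show m + 2 = (m + 1) + 1 from rfl, Nat.choose_succ_succ (m + 1) (jj + 1),
        Nat.choose_succ_succ (m + 1) jj]
      push_cast
      rw [e1, e2, e3, e4]
      field_simp
      ring

theorem t_rec (m : ℕ) :
    ((m : ℚ) + 1) * ((m : ℚ) + 3) * t (m + 2)
      = 3 * (2 * (m : ℚ) + 3) * ((m : ℚ) + 2) * t (m + 1)
        - ((m : ℚ) + 1) * ((m : ℚ) + 2) * t m := by
  have ht1 : ∑ j ∈ range (m + 3), Ft (m + 1) j = t (m + 1) := by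
    rw [Finset.sum_range_succ]
    have : Ft (m + 1) (m + 2) = 0 := by
      simp [Ft, Nat.choose_eq_zero_of_lt (by omega : m + 1 < m + 2)]
    rw [this, add_zero]; rfl
  have ht0 : ∑ j ∈ range (m + 3), Ft m j = t m := by
    rw [Finset.sum_range_succ, Finset.sum_range_succ]
    have h1 : Ft m (m + 2) = 0 := by
      simp [Ft, Nat.choose_eq_zero_of_lt (by omega : m < m + 2)]
    have h2 : Ft m (m + 1) = 0 := by
      simp [Ft, Nat.choose_eq_zero_of_lt (by omega : m < m + 1)]
    rw [h1, h2, add_zero, add_zero]; rfl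
  have key : ∑ j ∈ range (m + 3),
      (((m : ℚ) + 1) * ((m : ℚ) + 3) * Ft (m + 2) j
        - 3 * (2 * (m : ℚ) + 3) * ((m : ℚ) + 2) * Ft (m + 1) j
        + ((m : ℚ) + 1) * ((m : ℚ) + 2) * Ft m j) = 0 := by
    rw [Finset.sum_congr rfl (fun j _ => term m j), Finset.sum_range_sub (gg m)]
    have hgtop : gg m (m + 3) = 0 := by
      have : (m + 1).choose (m + 3 - 1) = 0 := by
        rw [show m + 3 - 1 = m + 2 from rfl]
        exact Nat.choose_eq_zero_of_lt (by omega)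
      simp [gg, this]
    have hg0 : gg m 0 = 0 := by simp [gg]
    rw [hgtop, hg0, sub_zero]
  simp only [Finset.sum_add_distrib, Finset.sum_sub_distrib, ← Finset.mul_sum] at key
  rw [ht1, ht0] at key
  have : (∑ j ∈ range (m + 3), Ft (m + 2) j) = t (m + 2) := rfl
  rw [this] at key
  linarith

/-- The claimed closed form. -/
noncomputable def r (n : ℕ) : ℚ := if n = 0 then 1 else t n / n

theorem r_rec (n : ℕ) :
    ((n : ℚ) + 4) * r (n + 3) = 3 * (2 * (n : ℚ) + 5) * r (n + 2) - ((n : ℚ) + 1) * r (n + 1) := by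
  have h := t_rec (n + 1)
  push_cast at h
  simp only [r, if_neg (Nat.succ_ne_zero _)]
  have h3 : ((n : ℚ) + 3) ≠ 0 := by positivity
  have h2 : ((n : ℚ) + 2) ≠ 0 := by positivity
  have h1 : ((n : ℚ) + 1) ≠ 0 := by positivity
  push_cast
  field_simp
  ring_nf
  ring_nf at h
  linarith

theorem S_eq_r (n : ℕ) : (S n : ℚ) = r n := by
  induction n using Nat.strong_induction_on with
  | _ n ih =>
    match n with
    | 0 => simp [r]
    | 1 =>
        rw [show S 1 = 2 by rw [S_succ]; simp]
        norm_num [r, t, Ft, Finset.sum_range_succ]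
    | 2 =>
        rw [show S 2 = 6 by rw [S_succ, S_succ]; simp [Finset.sum_range_succ]; rw [show S 1 = 2 by rw [S_succ]; simp]; norm_num]
        norm_num [r, t, Ft, Finset.sum_range_succ]
    | (n + 3) =>
        have hS := S_linrec n
        have hr := r_rec n
        have e2 : (S (n + 2) : ℚ) = r (n + 2) := ih (n + 2) (by omega)
        have e1 : (S (n + 1) : ℚ) = r (n + 1) := ih (n + 1) (by omega)
        rw [e2, e1] at hS
        have h4 : ((n : ℚ) + 4) ≠ 0 := by positivity
        have : ((n : ℚ) + 4) * (S (n + 3) : ℚ) = ((n : ℚ) + 4) * r (n + 3) := by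
          rw [hS, hr]
        exact mul_left_cancel₀ h4 this

end SchroAux

/-- The `k`-th large Schröder number equals
`(1/k) ∑_{j=0}^{k} C(k,j) C(k,j-1) 2^j`, with the convention `C(k,-1) = 0`. -/
theorem schroeder_number_eq (k : ℕ) (hk : 0 < k) :
    (({l : List (ℕ × ℕ) | IsSchroederPath k l}.ncard : ℚ)) =
      (1 / k) * ∑ j ∈ Finset.range (k + 1),
        (Nat.choose k j : ℚ) * (if j = 0 then 0 else (Nat.choose k (j - 1) : ℚ)) * 2 ^ j := by
  rw [SchroAux.card_schroeder k, SchroAux.S_eq_r k, SchroAux.r, if_neg (by omega : ¬ k = 0)]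
  have ht : SchroAux.t k = ∑ j ∈ Finset.range (k + 1),
      (Nat.choose k j : ℚ) * (if j = 0 then 0 else (Nat.choose k (j - 1) : ℚ)) * 2 ^ j := rfl
  rw [← ht]
  have hk0 : (k : ℚ) ≠ 0 := by positivity
  field_simp
end

section
/- For the Laguerre Unitary Ensemble with parameter b and dimension n, the k-th moment of the eigenvalue density equals M(k,n) = (1/k)·∑_{j=0}^{min(n,k)} C(k,j)·C(k,j-1)·(b+n)_{(k-j+1)}/(n+1)_{(-j)} for every positive integer k, where (a)_{(m)} = Γ(a+m)/Γ(a). -/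
open Polynomial Finset MeasureTheory Real

open Finset

namespace LUEaux

noncomputable def RF (c : ℝ) : ℕ → ℝ
  | 0 => 1
  | m+1 => RF c m * (c + m)

@[simp] lemma RF_zero (c : ℝ) : RF c 0 = 1 := rfl
lemma RF_succ (c : ℝ) (m : ℕ) : RF c (m+1) = RF c m * (c + m) := rfl

lemma RF_succ' (c : ℝ) (m : ℕ) : RF c (m+1) = c * RF (c+1) m := by
  induction m with
  | zero => simp [RF]
  | succ m ih => rw [RF_succ, ih, RF_succ]; push_cast; ring

lemma Gamma_RF {c : ℝ} (hc : 0 < c) (m : ℕ) :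
    Real.Gamma c * RF c m = Real.Gamma (c + m) := by
  induction m with
  | zero => simp [RF]
  | succ m ih =>
    have h1 : c + (m+1:ℕ) = (c + m) + 1 := by push_cast; ring
    rw [h1, Real.Gamma_add_one (by positivity), RF_succ, ← ih]; ring

lemma sum_shift (g : ℕ → ℝ) (j : ℕ) (htop : g (j+1) = 0) :
    g 0 + ∑ i ∈ range (j+1), g (i+1) = ∑ i ∈ range (j+1), g i := by
  have := Finset.sum_range_succ' g (j+1)
  rw [add_comm, ← this, Finset.sum_range_succ, htop, add_zero]

/-- Chu–Vandermonde style collapse. -/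
lemma V1 (j : ℕ) : ∀ b z : ℝ,
    ∑ i ∈ range (j+1), (-1:ℝ)^i * (j.choose i) * RF (b+i+1) (j-i) * RF z i
      = RF (b+1-z) j := by
  induction j with
  | zero => intro b z; simp [RF]
  | succ j ih =>
    intro b z
    set F : ℕ → ℝ := fun i => (-1:ℝ)^i * ((j+1).choose i) * RF (b+i+1) (j+1-i) * RF z i with hF
    set G : ℕ → ℝ := fun i => (-1:ℝ)^i * (j.choose i) * RF (b+i+1) ((j-i)+1) * RF z i with hG
    set H : ℕ → ℝ := fun i => (-1:ℝ)^i * (j.choose i) * RF ((b+1)+i+1) (j-i) * RF (z+1) i with hH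
    show ∑ i ∈ range (j+1+1), F i = RF (b+1-z) (j+1)
    rw [Finset.sum_range_succ' F (j+1)]
    have h1 : ∀ i ∈ range (j+1), F (i+1) = G (i+1) + (-z) * H i := by
      intro i hi
      simp only [mem_range] at hi
      by_cases hij : i = j
      · subst hij
        simp only [hF, hG, hH, Nat.choose_succ_self, Nat.choose_self, Nat.choose_succ_succ,
          Nat.sub_self, Nat.add_sub_cancel_left, RF_zero]
        rw [RF_succ' z]
        push_cast
        ring
      · have hlt : i < j := by omega
        simp only [hF, hG, hH]
        rw [Nat.choose_succ_succ' j i]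
        have h2 : RF z (i+1) = z * RF (z+1) i := RF_succ' z i
        have h3 : (b+(i+1:ℕ)+1 : ℝ) = (b+1)+i+1 := by push_cast; ring
        have h4 : j+1-(i+1) = j-i := by omega
        have h5 : j - (i+1) + 1 = j - i := by omega
        rw [h2, h3, h4, h5]
        push_cast
        ring
    rw [Finset.sum_congr rfl h1, Finset.sum_add_distrib, ← Finset.mul_sum]
    have h6 : F 0 = G 0 := by simp [hF, hG]
    have h7 : G (j+1) = 0 := by simp [hG, Nat.choose_succ_self]
    have h8 : ∀ i ∈ range (j+1), G i = (b+j+1) * ((-1:ℝ)^i * (j.choose i) * RF (b+i+1) (j-i) * RF z i) := by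
      intro i hi
      simp only [mem_range] at hi
      simp only [hG, RF_succ]
      have : ((j:ℝ) - i : ℝ) = ((j - i : ℕ) : ℝ) := by
        have : i ≤ j := by omega
        push_cast [this]; ring
      have h9 : (b + i + 1 + ((j-i:ℕ):ℝ)) = b + j + 1 := by
        rw [← this]; ring
      rw [h9]; ring
    calc ∑ i ∈ range (j+1), G (i+1) + -z * ∑ i ∈ range (j+1), H i + F 0
        = (F 0 + ∑ i ∈ range (j+1), G (i+1)) + -z * ∑ i ∈ range (j+1), H i := by ring
      _ = (∑ i ∈ range (j+1), G i) + -z * RF ((b+1)+1-(z+1)) j := by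
          rw [h6, sum_shift G j h7, ih (b+1) (z+1)]
      _ = (b+j+1) * (∑ i ∈ range (j+1), (-1:ℝ)^i * (j.choose i) * RF (b+i+1) (j-i) * RF z i)
            + -z * RF ((b+1)+1-(z+1)) j := by rw [Finset.sum_congr rfl h8, ← Finset.mul_sum]
      _ = (b+j+1) * RF (b+1-z) j + -z * RF (b+1-z) j := by rw [ih b z]; norm_num
      _ = RF (b+1-z) (j+1) := by rw [RF_succ]; ring

/-- `RF (-m) j = (-1)^j j! C(m,j)`. -/
lemma V2 (m j : ℕ) : RF (-(m:ℝ)) j = (-1:ℝ)^j * (j.factorial) * (m.choose j) := by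
  induction j with
  | zero => simp [RF]
  | succ j ih =>
    rw [RF_succ, ih]
    have key : ((m.choose j : ℝ)) * ((m:ℝ) - j) = (j+1) * (m.choose (j+1)) := by
      rcases le_or_gt j m with h | h
      · have := Nat.choose_succ_right_eq m j
        have hc : ((m.choose (j+1) * (j+1) : ℕ) : ℝ) = ((m.choose j * (m - j) : ℕ) : ℝ) := by
          exact_mod_cast congrArg (Nat.cast : ℕ → ℝ) this
        push_cast [h] at hc
        linarith
      · rcases Nat.lt_or_ge j m with h' | h'
        · omega
        · rw [Nat.choose_eq_zero_of_lt (by omega), Nat.choose_eq_zero_of_lt (by omega)]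
          simp
    push_cast [Nat.factorial_succ, pow_succ]
    linear_combination (-(-1:ℝ)^j * (j.factorial : ℝ)) * key

/-- Rising factorial Vandermonde. -/
lemma V4 (k : ℕ) : ∀ x y : ℝ,
    RF (x+y) k = ∑ s ∈ range (k+1), (k.choose s : ℝ) * RF x s * RF y (k-s) := by
  induction k with
  | zero => intro x y; simp [RF]
  | succ k ih =>
    intro x y
    set F : ℕ → ℝ := fun s => ((k+1).choose s : ℝ) * RF x s * RF y (k+1-s) with hF
    set A : ℕ → ℝ := fun s => (k.choose s : ℝ) * RF x (s+1) * RF y (k-s) with hA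
    set B : ℕ → ℝ := fun s => (k.choose s : ℝ) * RF x s * RF y ((k-s)+1) with hB
    have expand : RF (x+y) (k+1) = ∑ s ∈ range (k+1), (A s + B s) := by
      rw [RF_succ, ih x y, Finset.sum_mul]
      refine Finset.sum_congr rfl fun s hs => ?_
      simp only [mem_range] at hs
      have hsk : s ≤ k := by omega
      have hcast : ((k - s : ℕ) : ℝ) = (k:ℝ) - s := by push_cast [hsk]; ring
      simp only [hA, hB, RF_succ]
      rw [hcast]
      ring
    set G : ℕ → ℝ := fun s => (k.choose s : ℝ) * RF x s * RF y (k+1-s) with hG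
    have h1 : ∀ s ∈ range (k+1), F (s+1) = A s + G (s+1) := by
      intro s hs
      simp only [hF, hA, hG]
      rw [Nat.choose_succ_succ' k s]
      have h4 : k+1-(s+1) = k-s := by omega
      rw [h4]
      push_cast
      ring
    have h3 : F 0 = G 0 := by simp [hF, hG]
    have h7 : G (k+1) = 0 := by simp [hG, Nat.choose_succ_self]
    have h8 : ∀ s ∈ range (k+1), G s = B s := by
      intro s hs
      simp only [mem_range] at hs
      simp only [hG, hB]
      have : k+1-s = (k-s)+1 := by omega
      rw [this]
    have e1 : (∑ s ∈ range (k+1), F (s+1)) = (∑ s ∈ range (k+1), A s) + (∑ s ∈ range (k+1), G (s+1)) := by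
      rw [← Finset.sum_add_distrib]
      exact Finset.sum_congr rfl h1
    have e2 : (∑ s ∈ range (k+1), B s) = G 0 + ∑ s ∈ range (k+1), G (s+1) := by
      rw [sum_shift G k h7]
      exact (Finset.sum_congr rfl h8).symm
    rw [expand, Finset.sum_add_distrib]
    show _ = ∑ s ∈ range (k+1+1), F s
    rw [Finset.sum_range_succ' F (k+1), e1, e2, h3]
    ring

/-- Alternating partial binomial sum. -/
lemma V5 : ∀ m N k : ℕ, m ≤ N → m < k →
    ∑ t ∈ range (m+1), (-1:ℝ)^t * (m.choose t) * ((N-t).choose k) = (((N-m).choose (k-m)) : ℝ) := by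
  intro m
  induction m with
  | zero => intro N k _ _; simp
  | succ m ih =>
    intro N k hm hk
    set F : ℕ → ℝ := fun t => (-1:ℝ)^t * ((m+1).choose t) * ((N-t).choose k) with hF
    set G : ℕ → ℝ := fun t => (-1:ℝ)^t * (m.choose t) * ((N-t).choose k) with hG
    set H : ℕ → ℝ := fun t => (-1:ℝ)^t * (m.choose t) * (((N-1)-t).choose k) with hH
    have h1 : ∀ t ∈ range (m+1), F (t+1) = G (t+1) + (-1) * H t := by
      intro t ht
      simp only [mem_range] at ht
      simp only [hF, hG, hH]
      rw [Nat.choose_succ_succ' m t]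
      have h4 : N-(t+1) = (N-1)-t := by omega
      rw [h4]
      push_cast
      ring
    have h3 : F 0 = G 0 := by simp [hF, hG]
    have h7 : G (m+1) = 0 := by simp [hG, Nat.choose_succ_self]
    show ∑ t ∈ range (m+1+1), F t = _
    rw [Finset.sum_range_succ' F (m+1), Finset.sum_congr rfl h1, Finset.sum_add_distrib]
    have e2 : (∑ t ∈ range (m+1), G (t+1)) + F 0 = ∑ t ∈ range (m+1), G t := by
      rw [h3, add_comm]; exact sum_shift G m h7
    have eIH1 : ∑ t ∈ range (m+1), G t = (((N-m).choose (k-m)) : ℝ) := ih N k (by omega) (by omega)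
    have eIH2 : ∑ t ∈ range (m+1), H t = (((N-1-m).choose (k-m)) : ℝ) := ih (N-1) k (by omega) (by omega)
    have pascal : ((N-m).choose (k-m) : ℝ) = ((N-(m+1)).choose (k-(m+1)) : ℝ) + ((N-1-m).choose (k-m) : ℝ) := by
      have ha : N-m = (N-(m+1))+1 := by omega
      have hc : k-m = (k-(m+1))+1 := by omega
      have hb : N-1-m = N-(m+1) := by omega
      rw [ha, hc, hb, Nat.choose_succ_succ]
      push_cast; ring
    calc (∑ t ∈ range (m+1), G (t+1)) + ∑ t ∈ range (m+1), (-1) * H t + F 0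
        = ((∑ t ∈ range (m+1), G (t+1)) + F 0) - ∑ t ∈ range (m+1), H t := by
          rw [← Finset.mul_sum]; ring
      _ = (((N-m).choose (k-m)) : ℝ) - (((N-1-m).choose (k-m)) : ℝ) := by rw [e2, eIH1, eIH2]
      _ = (((N-(m+1)).choose (k-(m+1))) : ℝ) := by rw [pascal]; ring

lemma T1nat (u v k : ℕ) : k.choose u * (k+v).choose k = (u+v).choose u * (k+v).choose (u+v) := by
  by_cases hk : u ≤ k
  · have A := Nat.choose_mul (n := k+v) hk
    have B := Nat.choose_mul (n := k+v) (show u ≤ u+v by omega)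
    have h2 : u+v-u = v := by omega
    rw [h2] at B
    have h3 : (k+v-u).choose (k-u) = (k+v-u).choose v := by
      rw [← Nat.choose_symm (show k-u ≤ k+v-u by omega)]
      congr 1; omega
    calc k.choose u * (k+v).choose k = (k+v).choose k * k.choose u := by ring
      _ = (k+v).choose u * ((k+v)-u).choose (k-u) := A
      _ = (k+v).choose u * (k+v-u).choose v := by rw [h3]
      _ = (k+v).choose (u+v) * (u+v).choose u := B.symm
      _ = (u+v).choose u * (k+v).choose (u+v) := by ring
  · rw [Nat.choose_eq_zero_of_lt (by omega : k < u), Nat.choose_eq_zero_of_lt (by omega : k+v < u+v)]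
    simp

lemma T2nat (q u s : ℕ) (hsu : s ≤ u) : q.choose u * u.choose s = q.choose s * (q-s).choose (u-s) := by
  by_cases hq : u ≤ q
  · exact Nat.choose_mul hsu
  · rw [Nat.choose_eq_zero_of_lt (by omega : q < u)]
    by_cases hs : s ≤ q
    · rw [Nat.choose_eq_zero_of_lt (by omega : q - s < u - s)]
      simp
    · rw [Nat.choose_eq_zero_of_lt (by omega : q < s)]
      simp

lemma neg_one_pow_sub (i j : ℕ) (hij : i ≤ j) : (-1:ℝ)^(j-i) = (-1)^j * (-1)^i := by
  have h := pow_add (-1:ℝ) (j-i) i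
  rw [Nat.sub_add_cancel hij] at h
  rw [h, mul_assoc, ← mul_pow]
  norm_num

open MeasureTheory Set Polynomial

lemma int_mono {b : ℝ} (hb : -1 < b) (i : ℕ) :
    IntegrableOn (fun x : ℝ => x ^ b * Real.exp (-x) * x ^ i) (Ioi 0) := by
  have h : (0:ℝ) < b + i + 1 := by
    have : (0:ℝ) ≤ i := Nat.cast_nonneg i
    linarith
  have H := Real.GammaIntegral_convergent h
  refine H.congr_fun (fun x hx => ?_) measurableSet_Ioi
  have hx0 : (0:ℝ) < x := hx
  beta_reduce
  rw [show b + (i:ℝ) + 1 - 1 = b + i by ring, Real.rpow_add hx0, Real.rpow_natCast]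
  ring

lemma int_mono_val {b : ℝ} (hb : -1 < b) (i : ℕ) :
    ∫ x in Ioi (0:ℝ), x ^ b * Real.exp (-x) * x ^ i = Real.Gamma (b + i + 1) := by
  have h : (0:ℝ) < b + i + 1 := by
    have : (0:ℝ) ≤ i := Nat.cast_nonneg i
    linarith
  rw [Real.Gamma_eq_integral h]
  refine MeasureTheory.setIntegral_congr_fun measurableSet_Ioi (fun x hx => ?_)
  have hx0 : (0:ℝ) < x := hx
  rw [show b + (i:ℝ) + 1 - 1 = b + i by ring, Real.rpow_add hx0, Real.rpow_natCast]
  ring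

lemma int_poly {b : ℝ} (hb : -1 < b) (p : Polynomial ℝ) :
    IntegrableOn (fun x : ℝ => x ^ b * Real.exp (-x) * p.eval x) (Ioi 0) := by
  have heq : (fun x : ℝ => x ^ b * Real.exp (-x) * p.eval x)
      = fun x => ∑ i ∈ range (p.natDegree + 1), p.coeff i * (x ^ b * Real.exp (-x) * x ^ i) := by
    funext x
    rw [Polynomial.eval_eq_sum_range, Finset.mul_sum]
    exact Finset.sum_congr rfl fun i _ => by ring
  rw [heq]
  exact integrable_finset_sum _ fun i _ => ((int_mono hb i).const_mul _)

noncomputable def Jone (b : ℝ) (p : Polynomial ℝ) : ℝ :=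
  ∫ x in Ioi (0:ℝ), x ^ b * Real.exp (-x) * p.eval x

lemma Jone_add {b : ℝ} (hb : -1 < b) (p q : Polynomial ℝ) :
    Jone b (p + q) = Jone b p + Jone b q := by
  unfold Jone
  rw [← integral_add (int_poly hb p) (int_poly hb q)]
  refine MeasureTheory.setIntegral_congr_fun measurableSet_Ioi (fun x hx => ?_)
  simp only [Polynomial.eval_add]
  ring

lemma Jone_Cmul (b : ℝ) (c : ℝ) (p : Polynomial ℝ) :
    Jone b (Polynomial.C c * p) = c * Jone b p := by
  unfold Jone
  rw [← MeasureTheory.integral_const_mul]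
  refine MeasureTheory.setIntegral_congr_fun measurableSet_Ioi (fun x hx => ?_)
  simp only [Polynomial.eval_mul, Polynomial.eval_C]
  ring

lemma Jone_monomial {b : ℝ} (hb : -1 < b) (i : ℕ) :
    Jone b (Polynomial.X ^ i) = Real.Gamma (b + i + 1) := by
  unfold Jone
  rw [← int_mono_val hb i]
  refine MeasureTheory.setIntegral_congr_fun measurableSet_Ioi (fun x hx => ?_)
  simp

lemma Jone_sum {b : ℝ} (hb : -1 < b) {ι : Type*} (s : Finset ι) (f : ι → Polynomial ℝ) :
    Jone b (∑ i ∈ s, f i) = ∑ i ∈ s, Jone b (f i) := by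
  classical
  induction s using Finset.induction_on with
  | empty => simp [Jone]
  | insert _ _ h ih =>
    rw [Finset.sum_insert h, Jone_add hb, ih, Finset.sum_insert h]

section Ortho

variable {b : ℝ} (L : ℕ → Polynomial ℝ)

lemma JoneLL (horth : ∀ m l : ℕ, m ≠ l →
      ∫ x in Ioi (0:ℝ), x ^ b * Real.exp (-x) * (L m).eval x * (L l).eval x = 0)
    (m l : ℕ) (hml : m ≠ l) : Jone b (L m * L l) = 0 := by
  rw [← horth m l hml]
  unfold Jone
  refine MeasureTheory.setIntegral_congr_fun measurableSet_Ioi (fun x hx => ?_)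
  simp only [Polynomial.eval_mul]
  ring

lemma O1 (hb : -1 < b)
    (hmonic : ∀ m : ℕ, (L m).Monic) (hdeg : ∀ m : ℕ, (L m).natDegree = m)
    (horth : ∀ m l : ℕ, m ≠ l →
      ∫ x in Ioi (0:ℝ), x ^ b * Real.exp (-x) * (L m).eval x * (L l).eval x = 0) :
    ∀ d : ℕ, ∀ p : Polynomial ℝ, p.natDegree ≤ d → ∀ m : ℕ, d < m → Jone b (p * L m) = 0 := by
  intro d
  induction d with
  | zero =>
    intro p hp m hm
    rw [Polynomial.eq_C_of_natDegree_le_zero hp, Jone_Cmul]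
    have hL0 : L 0 = 1 := (hmonic 0).natDegree_eq_zero.mp (hdeg 0)
    have h1 : Jone b (L m) = 0 := by
      have h2 := JoneLL L horth 0 m (by omega)
      rwa [hL0, one_mul] at h2
    rw [h1, mul_zero]
  | succ d ih =>
    intro p hp m hm
    set c := p.coeff (d+1) with hc
    set q := p - Polynomial.C c * L (d+1) with hq
    have hqdeg : q.natDegree ≤ d := by
      rw [Polynomial.natDegree_le_iff_coeff_eq_zero]
      intro N hN
      simp only [hq, Polynomial.coeff_sub, Polynomial.coeff_C_mul]
      rcases Nat.lt_or_ge (d+1) N with h | h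
      · rw [Polynomial.coeff_eq_zero_of_natDegree_lt (lt_of_le_of_lt hp h),
          Polynomial.coeff_eq_zero_of_natDegree_lt (by rw [hdeg]; exact h)]
        ring
      · have hN1 : N = d+1 := by omega
        subst hN1
        have hco : (L (d+1)).coeff (d+1) = 1 := by
          have h3 := (hmonic (d+1)).coeff_natDegree
          rwa [hdeg] at h3
        rw [hco, mul_one, ← hc, sub_self]
    have hdecomp : p * L m = q * L m + Polynomial.C c * (L (d+1) * L m) := by
      rw [hq]; ring
    rw [hdecomp, Jone_add hb, Jone_Cmul, ih q hqdeg m (by omega),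
      JoneLL L horth (d+1) m (by omega)]
    ring

end Ortho

noncomputable def ell (b : ℝ) (j : ℕ) : Polynomial ℝ :=
  ∑ i ∈ range (j+1),
    Polynomial.C ((-1:ℝ)^(j-i) * (j.choose i) * RF (b+i+1) (j-i)) * Polynomial.X ^ i

lemma ell_coeff_top (b : ℝ) (j : ℕ) : (ell b j).coeff j = 1 := by
  unfold ell
  rw [Polynomial.finset_sum_coeff]
  rw [Finset.sum_eq_single j]
  · rw [Polynomial.coeff_C_mul, Polynomial.coeff_X_pow, if_pos rfl, mul_one]
    simp
  · intro i hi hij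
    rw [Polynomial.coeff_C_mul, Polynomial.coeff_X_pow, if_neg (Ne.symm hij), mul_zero]
  · intro h
    exact absurd (Finset.self_mem_range_succ j) h

lemma ell_natDegree_le (b : ℝ) (j : ℕ) : (ell b j).natDegree ≤ j := by
  rw [Polynomial.natDegree_le_iff_coeff_eq_zero]
  intro N hN
  unfold ell
  rw [Polynomial.finset_sum_coeff]
  refine Finset.sum_eq_zero fun i hi => ?_
  simp only [Finset.mem_range] at hi
  rw [Polynomial.coeff_C_mul, Polynomial.coeff_X_pow, if_neg (by omega : ¬ (N = i)), mul_zero]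

lemma ell_natDegree (b : ℝ) (j : ℕ) : (ell b j).natDegree = j :=
  le_antisymm (ell_natDegree_le b j)
    (Polynomial.le_natDegree_of_ne_zero (by rw [ell_coeff_top]; exact one_ne_zero))

lemma ell_monic (b : ℝ) (j : ℕ) : (ell b j).Monic := by
  unfold Polynomial.Monic Polynomial.leadingCoeff
  rw [ell_natDegree, ell_coeff_top]

lemma Jone_Xpow_mul_ell {b : ℝ} (hb : -1 < b) (j r : ℕ) :
    Jone b (Polynomial.X ^ r * ell b j)
      = Real.Gamma (b + r + 1) * (j.factorial) * ((r.choose j) : ℝ) := by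
  have hbr : (0:ℝ) < b + r + 1 := by
    have : (0:ℝ) ≤ r := Nat.cast_nonneg r
    linarith
  have hsplit : Polynomial.X ^ r * ell b j
      = ∑ i ∈ range (j+1),
          Polynomial.C ((-1:ℝ)^(j-i) * (j.choose i) * RF (b+i+1) (j-i)) * Polynomial.X ^ (r+i) := by
    unfold ell
    rw [Finset.mul_sum]
    refine Finset.sum_congr rfl fun i hi => ?_
    rw [pow_add]; ring
  rw [hsplit, Jone_sum hb]
  have hterm : ∀ i ∈ range (j+1),
      Jone b (Polynomial.C ((-1:ℝ)^(j-i) * (j.choose i) * RF (b+i+1) (j-i)) * Polynomial.X ^ (r+i))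
      = Real.Gamma (b+r+1) * ((-1:ℝ)^j * ((-1:ℝ)^i * (j.choose i) * RF (b+i+1) (j-i) * RF (b+r+1) i)) := by
    intro i hi
    simp only [Finset.mem_range] at hi
    rw [Jone_Cmul, Jone_monomial hb]
    have h1 : Real.Gamma (b + (r+i:ℕ) + 1) = Real.Gamma (b+r+1) * RF (b+r+1) i := by
      rw [Gamma_RF hbr i]
      congr 1
      push_cast; ring
    rw [h1, neg_one_pow_sub i j (by omega)]
    ring
  rw [Finset.sum_congr rfl hterm, ← Finset.mul_sum, ← Finset.mul_sum, V1 j b (b+r+1)]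
  have h2 : b + 1 - (b+r+1) = -(r:ℝ) := by ring
  rw [h2, V2 r j]
  have h3 : (-1:ℝ)^j * (-1:ℝ)^j = 1 := by
    rw [← mul_pow]; norm_num
  calc Real.Gamma (b+r+1) * ((-1:ℝ)^j * ((-1:ℝ)^j * (j.factorial) * (r.choose j)))
      = Real.Gamma (b+r+1) * (((-1:ℝ)^j * (-1:ℝ)^j) * (j.factorial) * (r.choose j)) := by ring
    _ = Real.Gamma (b+r+1) * (j.factorial) * (r.choose j) := by rw [h3]; ring

lemma Jone_sub {b : ℝ} (hb : -1 < b) (p q : Polynomial ℝ) :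
    Jone b (p - q) = Jone b p - Jone b q := by
  have := Jone_add hb (p - q) q
  rw [sub_add_cancel] at this
  linarith

lemma L_eq_ell {b : ℝ} (hb : -1 < b) (L : ℕ → Polynomial ℝ)
    (hmonic : ∀ m : ℕ, (L m).Monic) (hdeg : ∀ m : ℕ, (L m).natDegree = m)
    (horth : ∀ m l : ℕ, m ≠ l →
      ∫ x in Ioi (0:ℝ), x ^ b * Real.exp (-x) * (L m).eval x * (L l).eval x = 0)
    (m : ℕ) : L m = ell b m := by
  by_contra hne
  set d := L m - ell b m with hd
  have hd0 : d ≠ 0 := sub_ne_zero.mpr hne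
  have hdegd : d.natDegree < m := by
    have h1 : (L m).degree = (ell b m).degree := by
      rw [Polynomial.degree_eq_natDegree (hmonic m).ne_zero,
        Polynomial.degree_eq_natDegree (ell_monic b m).ne_zero, hdeg m, ell_natDegree]
    have h2 := Polynomial.degree_sub_lt h1 (hmonic m).ne_zero
      (by rw [(hmonic m).leadingCoeff, (ell_monic b m).leadingCoeff])
    rw [Polynomial.degree_eq_natDegree (hmonic m).ne_zero, hdeg m] at h2
    exact (Polynomial.natDegree_lt_iff_degree_lt hd0).mpr h2
  have e1 : Jone b (d * L m) = 0 :=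
    O1 L hb hmonic hdeg horth d.natDegree d le_rfl m hdegd
  have e2 : Jone b (d * ell b m) = 0 := by
    have hrepr : d = ∑ r ∈ range m, Polynomial.C (d.coeff r) * Polynomial.X ^ r := by
      have h3 := Polynomial.as_sum_range' d m hdegd
      conv_lhs => rw [h3]
      exact Finset.sum_congr rfl fun r _ => (Polynomial.C_mul_X_pow_eq_monomial).symm
    have h4 : d * ell b m
        = ∑ r ∈ range m, Polynomial.C (d.coeff r) * (Polynomial.X ^ r * ell b m) := by
      conv_lhs => rw [hrepr]
      rw [Finset.sum_mul]
      exact Finset.sum_congr rfl fun r _ => by ring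
    rw [h4, Jone_sum hb]
    refine Finset.sum_eq_zero fun r hr => ?_
    simp only [Finset.mem_range] at hr
    rw [Jone_Cmul, Jone_Xpow_mul_ell hb m r, Nat.choose_eq_zero_of_lt hr]
    simp
  have hsq : Jone b (d * d) = 0 := by
    have h5 : d * d = d * L m - d * ell b m := by rw [hd]; ring
    rw [h5, Jone_sub hb, e1, e2, sub_zero]
  -- now positivity contradiction
  set f : ℝ → ℝ := fun x => x ^ b * Real.exp (-x) * (d.eval x)^2 with hf
  have hfint : IntegrableOn f (Ioi 0) := by
    refine (int_poly hb (d * d)).congr_fun (fun x hx => ?_) measurableSet_Ioi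
    simp only [hf, Polynomial.eval_mul]
    ring
  have hfnn : 0 ≤ᵐ[volume.restrict (Ioi (0:ℝ))] f := by
    filter_upwards [MeasureTheory.ae_restrict_mem measurableSet_Ioi] with x hx
    have hx0 : (0:ℝ) < x := hx
    have : (0:ℝ) ≤ x ^ b := Real.rpow_nonneg hx0.le b
    positivity
  have hJf : Jone b (d * d) = ∫ x in Ioi (0:ℝ), f x := by
    unfold Jone
    refine MeasureTheory.setIntegral_congr_fun measurableSet_Ioi (fun x hx => ?_)
    simp only [hf, Polynomial.eval_mul]
    ring
  have hfzero : ∫ x in Ioi (0:ℝ), f x = 0 := by rw [← hJf]; exact hsq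
  have haezero : f =ᵐ[volume.restrict (Ioi (0:ℝ))] 0 :=
    (MeasureTheory.integral_eq_zero_iff_of_nonneg_ae hfnn hfint).mp hfzero
  have haezero2 : ∀ᵐ x ∂(volume : Measure ℝ), x ∈ Ioi (0:ℝ) → f x = 0 := by
    rw [← MeasureTheory.ae_restrict_iff' measurableSet_Ioi]
    exact haezero
  have hbadnull : (volume : Measure ℝ) {x | ¬ (x ∈ Ioi (0:ℝ) → f x = 0)} = 0 := haezero2
  have hrootnull : (volume : Measure ℝ) {x | Polynomial.IsRoot d x} = 0 :=
    (Polynomial.finite_setOf_isRoot hd0).measure_zero _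
  have hsub : Ioi (0:ℝ) ⊆ {x | Polynomial.IsRoot d x} ∪ {x | ¬ (x ∈ Ioi (0:ℝ) → f x = 0)} := by
    intro x hx
    by_cases hroot : d.eval x = 0
    · exact Or.inl hroot
    · refine Or.inr ?_
      intro hcon
      have hx0 : (0:ℝ) < x := hx
      have hfx := hcon hx
      have hpos : 0 < f x := by
        have h6 : (0:ℝ) < x ^ b := Real.rpow_pos_of_pos hx0 b
        simp only [hf]
        positivity
      rw [hfx] at hpos
      exact lt_irrefl 0 hpos
  have : (volume : Measure ℝ) (Ioi (0:ℝ)) = 0 := by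
    refine le_antisymm ?_ zero_le
    calc (volume : Measure ℝ) (Ioi (0:ℝ))
        ≤ volume ({x | Polynomial.IsRoot d x} ∪ {x | ¬ (x ∈ Ioi (0:ℝ) → f x = 0)}) :=
          measure_mono hsub
      _ ≤ volume {x | Polynomial.IsRoot d x} + volume {x | ¬ (x ∈ Ioi (0:ℝ) → f x = 0)} :=
          measure_union_le _ _
      _ = 0 := by rw [hrootnull, hbadnull, add_zero]
  rw [Real.volume_Ioi] at this
  exact absurd this (by simp)

noncomputable def Sj (b : ℝ) (k j : ℕ) : ℝ :=
  ∑ i ∈ range (j+1),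
    (-1:ℝ)^j * (-1:ℝ)^i * (j.choose i) * (((k+i).choose j) : ℝ) * RF (b+i+1) k

noncomputable def Wn (b : ℝ) (k n : ℕ) : ℝ :=
  ∑ u ∈ range n,
    (-1:ℝ)^u * (((k-1).choose u) : ℝ) * (((k+(n-1-u)).choose k) : ℝ) * RF (b+(n-1-u:ℕ)+1) k

lemma moment_ell {b : ℝ} (hb : -1 < b) (k j : ℕ) :
    Jone b (Polynomial.X ^ k * (ell b j * ell b j))
      = (j.factorial : ℝ) * Real.Gamma (b + j + 1) * Sj b k j := by
  have hell : ell b j = ∑ i ∈ range (j+1),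
      Polynomial.C ((-1:ℝ)^(j-i) * (j.choose i) * RF (b+i+1) (j-i)) * Polynomial.X ^ i := rfl
  have hsplit : Polynomial.X ^ k * (ell b j * ell b j)
      = ∑ i ∈ range (j+1),
          Polynomial.C ((-1:ℝ)^(j-i) * (j.choose i) * RF (b+i+1) (j-i))
            * (Polynomial.X ^ (k+i) * ell b j) := by
    nth_rewrite 1 [hell]
    rw [Finset.sum_mul, Finset.mul_sum]
    refine Finset.sum_congr rfl fun i hi => ?_
    rw [pow_add]
    ring
  rw [hsplit, Jone_sum hb]
  have hterm : ∀ i ∈ range (j+1),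
      Jone b (Polynomial.C ((-1:ℝ)^(j-i) * (j.choose i) * RF (b+i+1) (j-i))
        * (Polynomial.X ^ (k+i) * ell b j))
      = (j.factorial : ℝ) * Real.Gamma (b+j+1)
          * ((-1:ℝ)^j * (-1:ℝ)^i * (j.choose i) * (((k+i).choose j) : ℝ) * RF (b+i+1) k) := by
    intro i hi
    simp only [Finset.mem_range] at hi
    have hij : i ≤ j := by omega
    have hbi : (0:ℝ) < b + i + 1 := by
      have : (0:ℝ) ≤ i := Nat.cast_nonneg i
      linarith
    rw [Jone_Cmul, Jone_Xpow_mul_ell hb j (k+i)]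
    have g1 : Real.Gamma (b+((k+i:ℕ):ℝ)+1) = Real.Gamma (b+i+1) * RF (b+i+1) k := by
      rw [Gamma_RF hbi k]
      congr 1
      push_cast; ring
    have g2 : Real.Gamma (b+i+1) * RF (b+i+1) (j-i) = Real.Gamma (b+j+1) := by
      rw [Gamma_RF hbi (j-i)]
      congr 1
      push_cast [hij]; ring
    rw [g1, neg_one_pow_sub i j hij]
    linear_combination ((-1:ℝ)^j * (-1:ℝ)^i * (j.choose i) * (((k+i).choose j) : ℝ)
      * RF (b+i+1) k * (j.factorial : ℝ)) * g2
  rw [Finset.sum_congr rfl hterm, ← Finset.mul_sum, Sj]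

lemma sum_Sj {b : ℝ} (k : ℕ) (hk : 0 < k) : ∀ n : ℕ,
    ∑ j ∈ range n, Sj b k j = Wn b k n := by
  intro n
  induction n with
  | zero => simp [Wn]
  | succ n ih =>
    rw [Finset.sum_range_succ, ih]
    set P : ℕ → ℝ := fun u =>
      (-1:ℝ)^u * (((k-1).choose u) : ℝ) * (((k+(n-u)).choose k) : ℝ) * RF (b+(n-u:ℕ)+1) k with hP
    set V : ℕ → ℝ := fun u =>
      (-1:ℝ)^u * (((k-1).choose u) : ℝ) * (((k+(n-1-u)).choose k) : ℝ) * RF (b+(n-1-u:ℕ)+1) k with hV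
    set R : ℕ → ℝ := fun u =>
      (-1:ℝ)^u * ((n.choose (n-u)) : ℝ) * (((k+(n-u)).choose n) : ℝ) * RF (b+(n-u:ℕ)+1) k with hR
    have hWn1 : Wn b k (n+1) = ∑ u ∈ range (n+1), P u := by
      unfold Wn
      refine Finset.sum_congr rfl fun u hu => ?_
      simp only [hP]
      have : n+1-1-u = n-u := by omega
      rw [this]
    have hWn : Wn b k n = ∑ u ∈ range n, V u := rfl
    have hSjR : Sj b k n = ∑ u ∈ range (n+1), R u := by
      unfold Sj
      rw [← Finset.sum_range_reflect]
      refine Finset.sum_congr rfl fun u hu => ?_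
      simp only [Finset.mem_range] at hu
      simp only [hR]
      have h1 : n+1-1-u = n-u := by omega
      rw [h1, neg_one_pow_sub u n (by omega)]
      have h3 : (-1:ℝ)^n * ((-1:ℝ)^n * (-1:ℝ)^u) = (-1:ℝ)^u := by
        rw [← mul_assoc, ← mul_pow]; norm_num
      linear_combination (((n.choose (n-u)) : ℝ) * (((k+(n-u)).choose n) : ℝ) * RF (b+(n-u:ℕ)+1) k) * h3
    have hP0 : P 0 = R 0 := by
      simp only [hP, hR]
      rw [Nat.sub_zero, Nat.choose_self]
      have : (k+n).choose k = (k+n).choose n := by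
        rw [← Nat.choose_symm (by omega : k ≤ k+n)]
        congr 1
        omega
      rw [this]
      simp
    have hPu : ∀ u ∈ range n, P (u+1) = R (u+1) + V u := by
      intro u hu
      simp only [Finset.mem_range] at hu
      simp only [hP, hR, hV]
      have hv : n-(u+1) = n-1-u := by omega
      rw [hv]
      set v := n-1-u with hvv
      have hpascal : ((k-1).choose (u+1) : ℝ) + ((k-1).choose u : ℝ) = (k.choose (u+1) : ℝ) := by
        have h := Nat.choose_succ_succ (k-1) u
        simp only [Nat.succ_eq_add_one] at h
        have hk1 : (k-1)+1 = k := by omega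
        rw [hk1] at h
        rw [h]; push_cast; ring
      have hT1 : (k.choose (u+1) : ℝ) * (((k+v).choose k) : ℝ) = ((n.choose v) : ℝ) * (((k+v).choose n) : ℝ) := by
        have h := T1nat (u+1) v k
        have huv : (u+1)+v = n := by omega
        rw [huv] at h
        have hnv : n.choose (u+1) = n.choose v := by
          rw [← Nat.choose_symm (by omega : u+1 ≤ n), hv]
        rw [hnv] at h
        exact_mod_cast congrArg (Nat.cast : ℕ → ℝ) h
      calc (-1:ℝ)^(u+1) * (((k-1).choose (u+1)) : ℝ) * (((k+v).choose k) : ℝ) * RF (b+(v:ℕ)+1) k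
          = (-1:ℝ)^(u+1) * ((((k-1).choose (u+1) : ℝ) + ((k-1).choose u : ℝ)) * (((k+v).choose k) : ℝ)) * RF (b+(v:ℕ)+1) k
            - (-1:ℝ)^(u+1) * (((k-1).choose u) : ℝ) * (((k+v).choose k) : ℝ) * RF (b+(v:ℕ)+1) k := by ring
        _ = (-1:ℝ)^(u+1) * (((n.choose v) : ℝ) * (((k+v).choose n) : ℝ)) * RF (b+(v:ℕ)+1) k
            + (-1:ℝ)^u * (((k-1).choose u) : ℝ) * (((k+v).choose k) : ℝ) * RF (b+(v:ℕ)+1) k := by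
            rw [hpascal, hT1]
            ring
        _ = _ := by ring
    rw [hWn1, hSjR, hWn, Finset.sum_range_succ' P n, Finset.sum_range_succ' R n,
      Finset.sum_congr rfl hPu, Finset.sum_add_distrib, hP0]
    ring

lemma RF_fact (v m : ℕ) : (v.factorial : ℝ) * RF ((v:ℝ)+1) m = ((v+m).factorial : ℝ) := by
  induction m with
  | zero => simp [RF]
  | succ m ih =>
    rw [RF_succ, show v + (m+1) = (v+m)+1 by omega, Nat.factorial_succ]
    push_cast
    linear_combination ((v:ℝ)+1+m) * ih

lemma RF_choose (n s : ℕ) (hsn : s+1 ≤ n) :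
    RF (((n-s:ℕ)):ℝ) (s+1) = (((s+1).factorial : ℝ)) * (n.choose (s+1)) := by
  have hv : n-s = (n-(s+1))+1 := by omega
  set v := n-(s+1) with hvv
  have h1 := RF_fact v (s+1)
  have h2 := Nat.choose_mul_factorial_mul_factorial hsn
  have h3 : v + (s+1) = n := by omega
  rw [h3] at h1
  have h4 : ((v:ℝ)+1) = ((n-s:ℕ):ℝ) := by rw [hv]; push_cast; ring
  rw [h4] at h1
  have h5 : (n.choose (s+1) : ℝ) * ((s+1).factorial : ℝ) * (v.factorial : ℝ) = (n.factorial : ℝ) := by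
    have : n - (s+1) = v := rfl
    rw [← this]
    exact_mod_cast congrArg (Nat.cast : ℕ → ℝ) h2
  have hvne : (v.factorial : ℝ) ≠ 0 := by positivity
  refine mul_left_cancel₀ hvne ?_
  rw [h1]
  linear_combination (-1 : ℝ) * h5

lemma inner_sum (n k s : ℕ) (hk : 0 < k) :
    ∑ u ∈ range n, (-1:ℝ)^u * (((k-1).choose u) : ℝ) * ((u.choose s) : ℝ)
        * (((k+(n-1-u)).choose k) : ℝ)
      = (-1:ℝ)^s * (((k-1).choose s) : ℝ) * ((n.choose (s+1)) : ℝ) := by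
  by_cases hsk : k ≤ s
  · rw [Nat.choose_eq_zero_of_lt (by omega : k-1 < s)]
    rw [Finset.sum_eq_zero]
    · simp
    · intro u hu
      rcases Nat.lt_or_ge u s with h | h
      · rw [Nat.choose_eq_zero_of_lt h]; ring
      · rw [Nat.choose_eq_zero_of_lt (by omega : k-1 < u)]; ring
  · by_cases hsn : n ≤ s
    · rw [Nat.choose_eq_zero_of_lt (by omega : n < s+1)]
      rw [Finset.sum_eq_zero]
      · simp
      · intro u hu
        simp only [Finset.mem_range] at hu
        rw [Nat.choose_eq_zero_of_lt (by omega : u < s)]; ring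
    · -- main case : s < k, s < n
      push_neg at hsk hsn
      set g : ℕ → ℝ := fun u => (-1:ℝ)^u * (((k-1).choose u) : ℝ) * ((u.choose s) : ℝ)
        * (((k+(n-1-u)).choose k) : ℝ) with hg
      set m := k-1-s with hm
      set N := k+n-1-s with hN
      set h : ℕ → ℝ := fun t => (-1:ℝ)^t * ((m.choose t) : ℝ) * (((N-t).choose k) : ℝ) with hh
      have hsplit : ∑ u ∈ range n, g u = ∑ t ∈ range (n-s), g (s+t) := by
        rw [Finset.range_eq_Ico, ← Finset.sum_Ico_consecutive g (Nat.zero_le s) (by omega : s ≤ n)]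
        rw [Finset.sum_Ico_eq_sum_range, Finset.sum_Ico_eq_sum_range]
        simp only [Nat.sub_zero, Nat.zero_add]
        have hfirst : ∀ u ∈ range s, g u = 0 := by
          intro u hu
          simp only [Finset.mem_range] at hu
          simp only [hg]
          rw [Nat.choose_eq_zero_of_lt (by omega : u < s)]
          ring
        rw [Finset.sum_eq_zero hfirst, zero_add, Finset.range_eq_Ico]
      have hterm : ∀ t ∈ range (n-s), g (s+t) = ((-1:ℝ)^s * (((k-1).choose s) : ℝ)) * h t := by
        intro t ht
        simp only [Finset.mem_range] at ht
        simp only [hg, hh]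
        have hT2 := T2nat (k-1) (s+t) s (by omega)
        have hT2' : (((k-1).choose (s+t)) : ℝ) * (((s+t).choose s) : ℝ)
            = (((k-1).choose s) : ℝ) * ((m.choose t) : ℝ) := by
          have e1 : (k-1)-s = m := rfl
          have e2 : (s+t)-s = t := by omega
          rw [e1, e2] at hT2
          exact_mod_cast congrArg (Nat.cast : ℕ → ℝ) hT2
        have harg : k+(n-1-(s+t)) = N-t := by omega
        rw [harg, pow_add]
        linear_combination ((-1:ℝ)^s * (-1:ℝ)^t * (((N-t).choose k) : ℝ)) * hT2'
      rw [hsplit, Finset.sum_congr rfl hterm, ← Finset.mul_sum]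
      have hextend : ∑ t ∈ range (n-s), h t = ∑ t ∈ range (m+1), h t := by
        set M := max (n-s) (m+1) with hM
        have e1 : ∑ t ∈ range (n-s), h t = ∑ t ∈ range M, h t := by
          refine Finset.sum_subset (Finset.range_subset_range.mpr (by omega)) (fun t ht htn => ?_)
          simp only [Finset.mem_range] at ht htn
          simp only [hh]
          rw [Nat.choose_eq_zero_of_lt (by omega : N-t < k)]
          ring
        have e2 : ∑ t ∈ range (m+1), h t = ∑ t ∈ range M, h t := by
          refine Finset.sum_subset (Finset.range_subset_range.mpr (by omega)) (fun t ht htn => ?_)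
          simp only [Finset.mem_range] at ht htn
          simp only [hh]
          rw [Nat.choose_eq_zero_of_lt (by omega : m < t)]
          ring
        rw [e1, e2]
      rw [hextend]
      have hV5 := V5 m N k (by omega) (by omega)
      simp only [hh]
      rw [hV5, show N-m = n by omega, show k-m = s+1 by omega]
      try ring

lemma final_identity {b : ℝ} (hb : -1 < b) (n k : ℕ) (hn : 0 < n) (hk : 0 < k) :
    Wn b k n = (1 / (k : ℝ)) * ∑ j ∈ range (min n k + 1),
        (Nat.choose k j : ℝ) * (if j = 0 then (0 : ℝ) else (Nat.choose k (j - 1) : ℝ)) *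
          (Real.Gamma (b + (n : ℝ) + (k : ℝ) - (j : ℝ) + 1) / Real.Gamma (b + (n : ℝ))) *
          (Real.Gamma ((n : ℝ) + 1) / Real.Gamma ((n : ℝ) + 1 - (j : ℝ))) := by
  have hbn : (0:ℝ) < b + n := by
    have h1 : (1:ℝ) ≤ n := by exact_mod_cast hn
    linarith
  -- Step 1: Wn as a double sum, swapped
  have hW2 : Wn b k n = ∑ s ∈ range (k+1),
      (k.choose s : ℝ) * (s.factorial : ℝ) * (((k-1).choose s) : ℝ) * ((n.choose (s+1)) : ℝ)
        * RF (b+n) (k-s) := by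
    unfold Wn
    have hu1 : ∀ u ∈ range n,
        (-1:ℝ)^u * (((k-1).choose u) : ℝ) * (((k+(n-1-u)).choose k) : ℝ) * RF (b+(n-1-u:ℕ)+1) k
        = ∑ s ∈ range (k+1), (-1:ℝ)^u * (((k-1).choose u) : ℝ) * ((u.choose s) : ℝ)
            * (((k+(n-1-u)).choose k) : ℝ)
            * ((k.choose s : ℝ) * (s.factorial : ℝ) * (-1:ℝ)^s * RF (b+n) (k-s)) := by
      intro u hu
      simp only [Finset.mem_range] at hu
      have harg : b+((n-1-u:ℕ):ℝ)+1 = -(u:ℝ) + (b+n) := by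
        push_cast [Nat.cast_sub (show u ≤ n-1 by omega), Nat.cast_sub (show 1 ≤ n by omega)]
        ring
      rw [harg, V4 k (-(u:ℝ)) (b+n), Finset.mul_sum]
      refine Finset.sum_congr rfl fun s hs => ?_
      rw [V2 u s]
      ring
    rw [Finset.sum_congr rfl hu1, Finset.sum_comm]
    refine Finset.sum_congr rfl fun s hs => ?_
    have := inner_sum n k s hk
    calc ∑ u ∈ range n, (-1:ℝ)^u * (((k-1).choose u) : ℝ) * ((u.choose s) : ℝ)
            * (((k+(n-1-u)).choose k) : ℝ)
            * ((k.choose s : ℝ) * (s.factorial : ℝ) * (-1:ℝ)^s * RF (b+n) (k-s))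
        = (∑ u ∈ range n, (-1:ℝ)^u * (((k-1).choose u) : ℝ) * ((u.choose s) : ℝ)
            * (((k+(n-1-u)).choose k) : ℝ))
            * ((k.choose s : ℝ) * (s.factorial : ℝ) * (-1:ℝ)^s * RF (b+n) (k-s)) := by
          rw [Finset.sum_mul]
      _ = ((-1:ℝ)^s * (((k-1).choose s) : ℝ) * ((n.choose (s+1)) : ℝ))
            * ((k.choose s : ℝ) * (s.factorial : ℝ) * (-1:ℝ)^s * RF (b+n) (k-s)) := by rw [this]
      _ = ((-1:ℝ)^s * (-1:ℝ)^s) * ((k.choose s : ℝ) * (s.factorial : ℝ) * (((k-1).choose s) : ℝ)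
            * ((n.choose (s+1)) : ℝ) * RF (b+n) (k-s)) := by ring
      _ = (k.choose s : ℝ) * (s.factorial : ℝ) * (((k-1).choose s) : ℝ)
            * ((n.choose (s+1)) : ℝ) * RF (b+n) (k-s) := by
          rw [← mul_pow]
          norm_num
  -- Step 2: extend the RHS sum to range (k+1)
  set T : ℕ → ℝ := fun j => (Nat.choose k j : ℝ) * (if j = 0 then (0 : ℝ) else (Nat.choose k (j - 1) : ℝ)) *
          (Real.Gamma (b + (n : ℝ) + (k : ℝ) - (j : ℝ) + 1) / Real.Gamma (b + (n : ℝ))) *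
          (Real.Gamma ((n : ℝ) + 1) / Real.Gamma ((n : ℝ) + 1 - (j : ℝ))) with hT
  have hext : ∑ j ∈ range (min n k + 1), T j = ∑ j ∈ range (k+1), T j := by
    refine Finset.sum_subset (Finset.range_subset_range.mpr (by omega)) (fun j hj hjn => ?_)
    simp only [Finset.mem_range] at hj hjn
    have hjn2 : n < j := by omega
    have hgz : Real.Gamma ((n:ℝ)+1-(j:ℝ)) = 0 := by
      have : (n:ℝ)+1-(j:ℝ) = -(((j-(n+1):ℕ)):ℝ) := by
        push_cast [Nat.cast_sub (show n+1 ≤ j by omega)]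
        ring
      rw [this]
      exact Real.Gamma_neg_nat_eq_zero _
    simp only [hT]
    rw [hgz, div_zero, mul_zero]
  -- Step 3: term-by-term match
  have hmatch : ∀ s ∈ range k,
      (k:ℝ) * ((k.choose s : ℝ) * (s.factorial : ℝ) * (((k-1).choose s) : ℝ) * ((n.choose (s+1)) : ℝ)
        * RF (b+n) (k-s)) = T (s+1) := by
    intro s hs
    simp only [Finset.mem_range] at hs
    have hGbn : Real.Gamma (b + (n : ℝ) + (k : ℝ) - ((s+1:ℕ) : ℝ) + 1) / Real.Gamma (b + (n : ℝ))
        = RF (b+n) (k-s) := by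
      have harg : b + (n : ℝ) + (k : ℝ) - ((s+1:ℕ) : ℝ) + 1 = (b+n) + ((k-s:ℕ):ℝ) := by
        push_cast [Nat.cast_sub (show s ≤ k by omega)]
        ring
      rw [harg, ← Gamma_RF hbn (k-s), mul_comm (Real.Gamma (b+(n:ℝ))) (RF (b+n) (k-s)),
        mul_div_assoc, div_self (ne_of_gt (Real.Gamma_pos_of_pos hbn)), mul_one]
    by_cases hsn : s+1 ≤ n
    · have harg2 : (n:ℝ)+1-((s+1:ℕ):ℝ) = ((n-s:ℕ):ℝ) := by
        push_cast [Nat.cast_sub (show s ≤ n by omega)]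
        ring
      have hpos : (0:ℝ) < ((n-s:ℕ):ℝ) := by
        have : 0 < n-s := by omega
        exact_mod_cast this
      have hGn : Real.Gamma ((n:ℝ)+1) / Real.Gamma ((n:ℝ)+1-((s+1:ℕ):ℝ))
          = ((s+1).factorial : ℝ) * ((n.choose (s+1)) : ℝ) := by
        have hGamma : Real.Gamma ((n:ℝ)+1) = Real.Gamma (((n-s:ℕ)):ℝ) * RF (((n-s:ℕ)):ℝ) (s+1) := by
          rw [Gamma_RF hpos (s+1)]
          congr 1
          push_cast [Nat.cast_sub (show s ≤ n by omega)]
          ring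
        rw [harg2, hGamma, mul_comm (Real.Gamma (((n-s:ℕ)):ℝ)) _, mul_div_assoc,
          div_self (ne_of_gt (Real.Gamma_pos_of_pos hpos)), mul_one, RF_choose n s hsn]
      have hNat : (k:ℝ) * (((k-1).choose s) : ℝ) = ((k.choose (s+1)) : ℝ) * ((s:ℝ)+1) := by
        have hN := Nat.add_one_mul_choose_eq (k-1) s
        rw [show k-1+1 = k by omega] at hN
        exact_mod_cast congrArg (Nat.cast : ℕ → ℝ) hN
      have hfac : ((s+1).factorial : ℝ) = ((s:ℝ)+1) * (s.factorial : ℝ) := by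
        rw [Nat.factorial_succ]; push_cast; ring
      simp only [hT]
      rw [if_neg (by omega : ¬ (s+1 = 0)), show (s+1)-1 = s from rfl, hGbn, hGn, hfac]
      push_cast
      linear_combination ((s.factorial : ℝ) * ((n.choose (s+1)) : ℝ) * RF (b+(n:ℝ)) (k-s)
        * ((k.choose s : ℝ))) * hNat
    · have hns : n < s+1 := by omega
      have hgz : Real.Gamma ((n:ℝ)+1-((s+1:ℕ):ℝ)) = 0 := by
        have : (n:ℝ)+1-((s+1:ℕ):ℝ) = -(((s-n:ℕ)):ℝ) := by
          push_cast [Nat.cast_sub (show n ≤ s by omega)]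
          ring
        rw [this]
        exact Real.Gamma_neg_nat_eq_zero _
      simp only [hT]
      rw [hgz, div_zero, mul_zero, Nat.choose_eq_zero_of_lt hns]
      push_cast
      ring
  -- Step 4: assemble
  have hk0 : ((k:ℝ)) ≠ 0 := Nat.cast_ne_zero.mpr (by omega)
  rw [hext, hW2]
  have hmain : (k:ℝ) * (∑ s ∈ range (k+1),
      (k.choose s : ℝ) * (s.factorial : ℝ) * (((k-1).choose s) : ℝ) * ((n.choose (s+1)) : ℝ)
        * RF (b+n) (k-s)) = ∑ j ∈ range (k+1), T j := by
    rw [Finset.mul_sum, Finset.sum_range_succ' T k, Finset.sum_range_succ]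
    have hT0 : T 0 = 0 := by simp [hT]
    have hFk : (k:ℝ) * ((k.choose k : ℝ) * (k.factorial : ℝ) * (((k-1).choose k) : ℝ)
        * ((n.choose (k+1)) : ℝ) * RF (b+n) (k-k)) = 0 := by
      rw [Nat.choose_eq_zero_of_lt (by omega : k-1 < k)]
      push_cast
      ring
    rw [hT0, hFk, add_zero, add_zero]
    exact Finset.sum_congr rfl hmatch
  rw [← hmain]
  field_simp

end LUEaux

/-- The `k`-th moment of the eigenvalue density of the `n`-dimensional Laguerre Unitary
Ensemble with parameter `b > -1`:
`M(k,n) = (1/k) ∑_{j=0}^{min(n,k)} C(k,j) C(k,j-1) (b+n)_{(k-j+1)}/(n+1)_{(-j)}`,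
with `(a)_{(m)} = Γ(a+m)/Γ(a)` and the convention `C(k,-1) = 0`. -/
theorem lue_positive_moments (b : ℝ) (hb : -1 < b) (n k : ℕ) (hn : 0 < n) (hk : 0 < k)
    (L : ℕ → Polynomial ℝ)
    (hmonic : ∀ m : ℕ, (L m).Monic)
    (hdeg : ∀ m : ℕ, (L m).natDegree = m)
    (horth : ∀ m l : ℕ, m ≠ l →
      ∫ x in Set.Ioi (0 : ℝ),
        x ^ b * Real.exp (-x) * (L m).eval x * (L l).eval x = 0)
    (hnorm : ∀ j : ℕ,
      ∫ x in Set.Ioi (0 : ℝ), x ^ b * Real.exp (-x) * ((L j).eval x) ^ 2 =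
        Real.Gamma ((j : ℝ) + 1) * Real.Gamma (b + (j : ℝ) + 1)) :
    ∫ x in Set.Ioi (0 : ℝ), x ^ (k : ℝ) *
        (x ^ b * Real.exp (-x) * ∑ j ∈ Finset.range n,
          ((L j).eval x) ^ 2 / (Real.Gamma ((j : ℝ) + 1) * Real.Gamma (b + (j : ℝ) + 1))) =
      (1 / (k : ℝ)) * ∑ j ∈ Finset.range (min n k + 1),
        (Nat.choose k j : ℝ) * (if j = 0 then (0 : ℝ) else (Nat.choose k (j - 1) : ℝ)) *
          (Real.Gamma (b + (n : ℝ) + (k : ℝ) - (j : ℝ) + 1) / Real.Gamma (b + (n : ℝ))) *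
          (Real.Gamma ((n : ℝ) + 1) / Real.Gamma ((n : ℝ) + 1 - (j : ℝ))) := by
  have hLell := LUEaux.L_eq_ell hb L hmonic hdeg horth
  have hpt : Set.EqOn
      (fun x : ℝ => x ^ (k:ℝ) * (x ^ b * Real.exp (-x) * ∑ j ∈ Finset.range n,
        ((L j).eval x)^2 / (Real.Gamma ((j:ℝ)+1) * Real.Gamma (b+(j:ℝ)+1))))
      (fun x : ℝ => ∑ j ∈ Finset.range n,
        (Real.Gamma ((j:ℝ)+1) * Real.Gamma (b+(j:ℝ)+1))⁻¹
          * (x ^ b * Real.exp (-x) * Polynomial.eval x (Polynomial.X^k * (L j * L j))))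
      (Set.Ioi 0) := by
    intro x hx
    simp only
    rw [Real.rpow_natCast]
    simp only [Polynomial.eval_mul, Polynomial.eval_pow, Polynomial.eval_X]
    rw [Finset.mul_sum, Finset.mul_sum]
    refine Finset.sum_congr rfl fun j _ => ?_
    rw [div_eq_mul_inv]
    ring
  have step1 : ∫ x in Set.Ioi (0:ℝ), x ^ (k:ℝ) * (x ^ b * Real.exp (-x) * ∑ j ∈ Finset.range n,
        ((L j).eval x)^2 / (Real.Gamma ((j:ℝ)+1) * Real.Gamma (b+(j:ℝ)+1)))
      = ∑ j ∈ Finset.range n, (Real.Gamma ((j:ℝ)+1) * Real.Gamma (b+(j:ℝ)+1))⁻¹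
          * LUEaux.Jone b (Polynomial.X^k * (L j * L j)) := by
    rw [MeasureTheory.setIntegral_congr_fun measurableSet_Ioi hpt,
      MeasureTheory.integral_finset_sum _ (fun j _ => ((LUEaux.int_poly hb _).const_mul _))]
    refine Finset.sum_congr rfl fun j _ => ?_
    rw [MeasureTheory.integral_const_mul]
    rfl
  have step2 : ∀ j : ℕ, (Real.Gamma ((j:ℝ)+1) * Real.Gamma (b+(j:ℝ)+1))⁻¹
      * LUEaux.Jone b (Polynomial.X^k * (L j * L j)) = LUEaux.Sj b k j := by
    intro j
    rw [hLell j, LUEaux.moment_ell hb k j]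
    have h1 : Real.Gamma ((j:ℝ)+1) = (j.factorial : ℝ) := by
      exact_mod_cast Real.Gamma_nat_eq_factorial j
    have h2 : (0:ℝ) < Real.Gamma (b+(j:ℝ)+1) := Real.Gamma_pos_of_pos
      (by have : (0:ℝ) ≤ j := Nat.cast_nonneg j; linarith)
    have h3 : (0:ℝ) < (j.factorial:ℝ) := by positivity
    rw [h1]
    field_simp
    try ring
  rw [step1, Finset.sum_congr rfl (fun j _ => step2 j), LUEaux.sum_Sj k hk n,
    LUEaux.final_identity hb n k hn hk]
end

section
/- For the Laguerre Unitary Ensemble with parameter b and dimension n, the negative moments satisfy M(-k,n) = (1/k)·∑_{j=0}^{n-1} C(k+j,k-1)·C(k+j-1,k-1)·(b+n)_{(-k-j)}/(n+1)_{(-j-1)} for every positive integer k < n+1 (assuming b > k so the integral converges). -/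
open Polynomial Finset MeasureTheory Real

/-- coefficient of monic generalized Laguerre polynomial -/
noncomputable def lueA (a : ℝ) (j i : ℕ) : ℝ :=
  (-1 : ℝ)^(j-i) * (j.choose i) * ∏ t ∈ Finset.range (j-i), (a + i + 1 + t)

/-- monic generalized Laguerre polynomial with parameter `a` -/
noncomputable def lueLag (a : ℝ) (j : ℕ) : Polynomial ℝ :=
  ∑ i ∈ Finset.range (j+1), Polynomial.monomial i (lueA a j i)

lemma lueLag_coeff (a : ℝ) (j r : ℕ) :
    (lueLag a j).coeff r = if r ≤ j then lueA a j r else 0 := by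
  rw [lueLag, finset_sum_coeff]
  simp only [coeff_monomial]
  rw [Finset.sum_ite_eq' (Finset.range (j+1)) r (fun i => lueA a j i)]
  simp [Nat.lt_succ_iff]

lemma lueA_self (a : ℝ) (j : ℕ) : lueA a j j = 1 := by
  simp [lueA]

lemma lueLag_natDegree_le (a : ℝ) (j : ℕ) : (lueLag a j).natDegree ≤ j := by
  apply Polynomial.natDegree_le_iff_coeff_eq_zero.2
  intro m hm
  rw [lueLag_coeff]
  simp only [if_neg (by omega : ¬ m ≤ j)]

lemma lueLag_coeff_self (a : ℝ) (j : ℕ) : (lueLag a j).coeff j = 1 := by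
  rw [lueLag_coeff]; simp [lueA_self]

lemma lueLag_natDegree (a : ℝ) (j : ℕ) : (lueLag a j).natDegree = j :=
  Polynomial.natDegree_eq_of_le_of_coeff_ne_zero (lueLag_natDegree_le a j)
    (by rw [lueLag_coeff_self]; norm_num)

lemma lueLag_monic (a : ℝ) (j : ℕ) : (lueLag a j).Monic := by
  unfold Polynomial.Monic Polynomial.leadingCoeff
  rw [lueLag_natDegree, lueLag_coeff_self]

lemma lueLag_eval (a : ℝ) (j : ℕ) (x : ℝ) :
    (lueLag a j).eval x = ∑ i ∈ Finset.range (j+1), lueA a j i * x^i := by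
  rw [lueLag, Polynomial.eval_finset_sum]
  simp [Polynomial.eval_monomial]

/-- helper: drop natDegree by one when top coeff vanishes -/
lemma natDegree_le_of_coeff_zero (p : Polynomial ℝ) (n : ℕ)
    (h1 : p.natDegree ≤ n + 1) (h2 : p.coeff (n+1) = 0) : p.natDegree ≤ n := by
  apply Polynomial.natDegree_le_iff_coeff_eq_zero.2
  intro m hm
  rcases Nat.lt_or_ge (n+1) m with h | h
  · exact Polynomial.coeff_eq_zero_of_natDegree_lt (lt_of_le_of_lt h1 h)
  · have : m = n + 1 := le_antisymm h hm
    rw [this]; exact h2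

/-- finite difference lemma: alternating binomial sum of polynomial values -/
lemma lue_findiff : ∀ (j : ℕ) (p : Polynomial ℝ), p.natDegree ≤ j →
    ∑ i ∈ Finset.range (j+1), (-1:ℝ)^(j-i) * (j.choose i) * p.eval (i:ℝ)
      = (j.factorial : ℝ) * p.coeff j := by
  intro j
  induction j with
  | zero =>
    intro p hp
    rw [Polynomial.eq_C_of_natDegree_le_zero hp]
    simp
  | succ j ih =>
    intro p hp
    set q : Polynomial ℝ := (Polynomial.taylor 1 p) - p with hq
    have hqdeg : q.natDegree ≤ j := by
      apply natDegree_le_of_coeff_zero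
      · calc q.natDegree ≤ max ((Polynomial.taylor 1 p).natDegree) p.natDegree :=
              Polynomial.natDegree_sub_le _ _
          _ ≤ j + 1 := by rw [Polynomial.natDegree_taylor]; simp [hp]
      · rw [Polynomial.coeff_sub, Polynomial.taylor_coeff]
        have hdeg : ((Polynomial.hasseDeriv (j+1)) p).natDegree ≤ 0 := by
          calc ((Polynomial.hasseDeriv (j+1)) p).natDegree ≤ p.natDegree - (j+1) :=
                Polynomial.natDegree_hasseDeriv_le _ _
            _ ≤ 0 := by omega
        rw [Polynomial.eq_C_of_natDegree_le_zero hdeg, Polynomial.eval_C,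
          Polynomial.hasseDeriv_coeff, Nat.zero_add, Nat.choose_self]
        push_cast
        ring
    have hqcoeff : q.coeff j = (j+1 : ℝ) * p.coeff (j+1) := by
      rw [hq, Polynomial.coeff_sub, Polynomial.taylor_coeff]
      have hdeg : ((Polynomial.hasseDeriv j) p).natDegree < 2 := by
        have := Polynomial.natDegree_hasseDeriv_le p j
        omega
      rw [Polynomial.eval_eq_sum_range' hdeg]
      simp only [Polynomial.hasseDeriv_coeff]
      rw [Finset.sum_range_succ, Finset.sum_range_succ]
      simp only [Polynomial.hasseDeriv_coeff, Finset.range_zero, Finset.sum_empty]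
      rw [Nat.zero_add, Nat.choose_self, Nat.add_comm 1 j, Nat.choose_succ_self_right]
      push_cast
      ring
    have hqeval : ∀ x : ℝ, q.eval x = p.eval (x+1) - p.eval x := by
      intro x
      rw [hq, Polynomial.eval_sub, Polynomial.taylor_eval]
    -- main rearrangement
    have key : ∑ i ∈ Finset.range (j+2), (-1:ℝ)^(j+1-i) * ((j+1).choose i) * p.eval (i:ℝ)
        = ∑ i ∈ Finset.range (j+1), (-1:ℝ)^(j-i) * (j.choose i) * q.eval (i:ℝ) := by
      have rhs_split : ∑ i ∈ Finset.range (j+1), (-1:ℝ)^(j-i) * (j.choose i) * q.eval (i:ℝ)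
          = (∑ i ∈ Finset.range (j+1), (-1:ℝ)^(j-i) * (j.choose i) * p.eval ((i:ℝ)+1))
            - ∑ i ∈ Finset.range (j+1), (-1:ℝ)^(j-i) * (j.choose i) * p.eval (i:ℝ) := by
        rw [← Finset.sum_sub_distrib]
        apply Finset.sum_congr rfl
        intro i _
        rw [hqeval]
        push_cast
        ring
      rw [rhs_split]
      rw [Finset.sum_range_succ' (fun i => (-1:ℝ)^(j+1-i) * ((j+1).choose i) * p.eval (i:ℝ)) (j+1)]
      push_cast
      have e1 : ∀ i ∈ Finset.range (j+1),
          (-1:ℝ)^(j-i) * ((j+1).choose (i+1)) * p.eval ((i:ℝ)+1)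
          = (-1:ℝ)^(j-i) * (j.choose i) * p.eval ((i:ℝ)+1)
            + (-1:ℝ)^(j-i) * (j.choose (i+1)) * p.eval ((i:ℝ)+1) := by
        intro i _
        rw [Nat.choose_succ_succ]
        push_cast
        ring
      rw [Finset.sum_congr rfl e1, Finset.sum_add_distrib]
      have e2 : ∑ i ∈ Finset.range (j+1), (-1:ℝ)^(j-i) * (j.choose (i+1)) * p.eval ((i:ℝ)+1)
          = ∑ i ∈ Finset.range j, (-1:ℝ)^(j-i) * (j.choose (i+1)) * p.eval ((i:ℝ)+1) := by
        rw [Finset.sum_range_succ]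
        simp
      have e3 : ∑ i ∈ Finset.range j, (-1:ℝ)^(j-i) * (j.choose (i+1)) * p.eval ((i:ℝ)+1)
            + (-1:ℝ)^(j+1) * p.eval 0
          = -∑ i ∈ Finset.range (j+1), (-1:ℝ)^(j-i) * (j.choose i) * p.eval (i:ℝ) := by
        rw [Finset.sum_range_succ' (fun i => (-1:ℝ)^(j-i) * (j.choose i) * p.eval (i:ℝ)) j]
        rw [neg_add]
        rw [← Finset.sum_neg_distrib]
        congr 1
        · apply Finset.sum_congr rfl
          intro i hi
          have hij : i < j := Finset.mem_range.1 hi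
          have hs : (-1:ℝ)^(j-i) = -(-1:ℝ)^(j-(i+1)) := by
            have h2 : j - i = (j-(i+1))+1 := by omega
            rw [h2, pow_succ]; ring
          rw [hs]; push_cast; ring
        · simp [pow_succ]
      rw [e2]
      simp only [Nat.choose_zero_right, Nat.cast_one, mul_one]
      linarith [e3]
    rw [key, ih q hqdeg, hqcoeff]
    push_cast [Nat.factorial_succ]
    ring

/-- Gamma recurrence iterated -/
lemma lue_Gamma_prod (z : ℝ) (hz : 0 < z) (r : ℕ) :
    Real.Gamma (z + r) = Real.Gamma z * ∏ t ∈ Finset.range r, (z + t) := by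
  induction r with
  | zero => simp
  | succ r ih =>
    have h1 : z + ((r:ℝ)+1) = (z + r) + 1 := by ring
    have h2 : z + (r:ℝ) ≠ 0 := by positivity
    push_cast
    rw [h1, Real.Gamma_add_one h2, ih, Finset.prod_range_succ]
    ring

lemma lue_int_mono (a : ℝ) (ha : -1 < a) :
    IntegrableOn (fun x : ℝ => x^a * Real.exp (-x)) (Set.Ioi 0) := by
  have h := Real.GammaIntegral_convergent (by linarith : (0:ℝ) < a+1)
  simp only [add_sub_cancel_right] at h
  exact h.congr_fun (fun x _ => mul_comm _ _) measurableSet_Ioi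

lemma lue_int_mono_val (a : ℝ) (ha : -1 < a) :
    ∫ x in Set.Ioi (0:ℝ), x^a * Real.exp (-x) = Real.Gamma (a+1) := by
  rw [Real.Gamma_eq_integral (by linarith : (0:ℝ) < a+1)]
  simp only [add_sub_cancel_right]
  exact MeasureTheory.setIntegral_congr_fun measurableSet_Ioi (fun x _ => mul_comm _ _)

lemma lue_int_monoN (a : ℝ) (ha : -1 < a) (c : ℝ) (i : ℕ) :
    IntegrableOn (fun x : ℝ => x^a * Real.exp (-x) * (c * x^i)) (Set.Ioi 0) := by
  have ha' : -1 < a + i := by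
    have : (0:ℝ) ≤ i := Nat.cast_nonneg i
    linarith
  have h : IntegrableOn (fun x : ℝ => c * (x^(a + (i:ℝ)) * Real.exp (-x))) (Set.Ioi 0) :=
    (lue_int_mono (a + i) ha').const_mul c
  apply h.congr_fun ?_ measurableSet_Ioi
  intro x hx
  have hx0 : (0:ℝ) < x := hx
  dsimp only
  rw [Real.rpow_add hx0, Real.rpow_natCast]
  ring

lemma lue_int_monoN_val (a : ℝ) (ha : -1 < a) (c : ℝ) (i : ℕ) :
    ∫ x in Set.Ioi (0:ℝ), x^a * Real.exp (-x) * (c * x^i) = c * Real.Gamma (a + i + 1) := by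
  have ha' : -1 < a + i := by
    have : (0:ℝ) ≤ i := Nat.cast_nonneg i
    linarith
  have key : ∫ x in Set.Ioi (0:ℝ), x^a * Real.exp (-x) * (c * x^i)
      = ∫ x in Set.Ioi (0:ℝ), c * (x^(a + (i:ℝ)) * Real.exp (-x)) := by
    apply MeasureTheory.setIntegral_congr_fun measurableSet_Ioi
    intro x hx
    have hx0 : (0:ℝ) < x := hx
    dsimp only
    rw [Real.rpow_add hx0, Real.rpow_natCast]
    ring
  rw [key, MeasureTheory.integral_const_mul, lue_int_mono_val _ ha']

lemma lue_int_sum (a : ℝ) (ha : -1 < a) (N : ℕ) (f : ℕ → ℝ) (r : ℕ) :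
    IntegrableOn (fun x : ℝ => x^a * Real.exp (-x) * (∑ i ∈ Finset.range N, f i * x^(i+r)))
      (Set.Ioi 0)
    ∧ ∫ x in Set.Ioi (0:ℝ), x^a * Real.exp (-x) * (∑ i ∈ Finset.range N, f i * x^(i+r))
      = ∑ i ∈ Finset.range N, f i * Real.Gamma (a + (i:ℝ) + (r:ℝ) + 1) := by
  have hfun : (fun x : ℝ => x^a * Real.exp (-x) * (∑ i ∈ Finset.range N, f i * x^(i+r)))
      = fun x => ∑ i ∈ Finset.range N, x^a * Real.exp (-x) * (f i * x^(i+r)) := by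
    funext x; rw [Finset.mul_sum]
  constructor
  · rw [hfun]
    exact MeasureTheory.integrable_finset_sum _ (fun i _ => lue_int_monoN a ha (f i) (i+r))
  · rw [hfun, MeasureTheory.integral_finset_sum _ (fun i _ => lue_int_monoN a ha (f i) (i+r))]
    apply Finset.sum_congr rfl
    intro i _
    rw [lue_int_monoN_val a ha (f i) (i+r)]
    push_cast
    ring_nf

lemma lue_int_poly (a : ℝ) (ha : -1 < a) (q : Polynomial ℝ) :
    IntegrableOn (fun x : ℝ => x^a * Real.exp (-x) * q.eval x) (Set.Ioi 0) := by
  have hfun : (fun x : ℝ => x^a * Real.exp (-x) * q.eval x)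
      = fun x => x^a * Real.exp (-x) * (∑ i ∈ Finset.range (q.natDegree+1), q.coeff i * x^(i+0)) := by
    funext x
    rw [Polynomial.eval_eq_sum_range]
    simp
  rw [hfun]
  exact (lue_int_sum a ha _ _ 0).1

lemma lue_int_poly_val (a : ℝ) (ha : -1 < a) (q : Polynomial ℝ) (N : ℕ) (hN : q.natDegree < N) :
    ∫ x in Set.Ioi (0:ℝ), x^a * Real.exp (-x) * q.eval x
      = ∑ i ∈ Finset.range N, q.coeff i * Real.Gamma (a + (i:ℝ) + 1) := by
  have hfun : (fun x : ℝ => x^a * Real.exp (-x) * q.eval x)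
      = fun x => x^a * Real.exp (-x) * (∑ i ∈ Finset.range N, q.coeff i * x^(i+0)) := by
    funext x
    rw [Polynomial.eval_eq_sum_range' hN]
    simp
  rw [hfun]
  have h := (lue_int_sum a ha N (fun i => q.coeff i) 0).2
  simpa using h

lemma lueA_mul_Gamma (a : ℝ) (ha : 0 < a) (m i : ℕ) (him : i ≤ m) :
    lueA a m i * Real.Gamma (a + i + 1)
      = (-1:ℝ)^(m-i) * (m.choose i) * Real.Gamma (a + m + 1) := by
  have h := lue_Gamma_prod (a + i + 1) (by positivity) (m - i)
  have harg : a + (i:ℝ) + 1 + ((m-i : ℕ):ℝ) = a + m + 1 := by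
    rw [Nat.cast_sub him]; ring
  rw [harg] at h
  rw [lueA, h]
  ring

lemma lue_M3 (a : ℝ) (ha : 0 < a) (m r : ℕ) (hrm : r ≤ m) :
    ∑ i ∈ Finset.range (m+1), lueA a m i * Real.Gamma (a + i + r + 1)
      = if r = m then (m.factorial : ℝ) * Real.Gamma (a + m + 1) else 0 := by
  set Q : Polynomial ℝ := ∏ t ∈ Finset.range r, (Polynomial.X + Polynomial.C (a + 1 + t)) with hQ
  have hQdeg : Q.natDegree = r := by
    rw [hQ, Polynomial.natDegree_prod _ _ (fun t _ => Polynomial.X_add_C_ne_zero _),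
      Finset.sum_congr rfl (fun t (_ : t ∈ Finset.range r) => Polynomial.natDegree_X_add_C (a+1+(t:ℝ)))]
    simp
  have hQmonic : Q.Monic := Polynomial.monic_prod_of_monic _ _
    (fun t _ => Polynomial.monic_X_add_C _)
  have hQeval : ∀ i : ℕ, Real.Gamma (a + i + r + 1) = Real.Gamma (a + i + 1) * Q.eval (i:ℝ) := by
    intro i
    have h := lue_Gamma_prod (a + i + 1) (by positivity) r
    have harg : a + (i:ℝ) + 1 + (r:ℝ) = a + i + r + 1 := by ring
    rw [harg] at h
    rw [h, hQ]
    congr 1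
    rw [Polynomial.eval_prod]
    apply Finset.prod_congr rfl
    intro t _
    simp only [Polynomial.eval_add, Polynomial.eval_X, Polynomial.eval_C]
    ring
  have step : ∀ i ∈ Finset.range (m+1), lueA a m i * Real.Gamma (a + i + r + 1)
      = (-1:ℝ)^(m-i) * (m.choose i) * Q.eval (i:ℝ) * Real.Gamma (a + m + 1) := by
    intro i hi
    rw [hQeval i, ← mul_assoc, lueA_mul_Gamma a ha m i (Nat.lt_succ_iff.1 (Finset.mem_range.1 hi))]
    ring
  rw [Finset.sum_congr rfl step]
  have sumQ : ∑ i ∈ Finset.range (m+1), (-1:ℝ)^(m-i) * (m.choose i) * Q.eval (i:ℝ) * Real.Gamma (a + m + 1)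
      = ((m.factorial : ℝ) * Q.coeff m) * Real.Gamma (a + m + 1) := by
    rw [← Finset.sum_mul]
    congr 1
    exact lue_findiff m Q (by rw [hQdeg]; exact hrm)
  rw [sumQ]
  rcases eq_or_lt_of_le hrm with h | h
  · rw [if_pos h]
    have : Q.coeff m = 1 := by
      have := hQmonic.coeff_natDegree
      rwa [hQdeg, h] at this
    rw [this]; ring
  · rw [if_neg (by omega)]
    have : Q.coeff m = 0 := Polynomial.coeff_eq_zero_of_natDegree_lt (by omega)
    rw [this]; ring

lemma lue_M2 (a : ℝ) (ha : 0 < a) (m r : ℕ) (hrm : r ≤ m) :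
    ∫ x in Set.Ioi (0:ℝ), x^a * Real.exp (-x) * ((lueLag a m).eval x * x^r)
      = if r = m then (m.factorial : ℝ) * Real.Gamma (a + m + 1) else 0 := by
  have hfun : (fun x : ℝ => x^a * Real.exp (-x) * ((lueLag a m).eval x * x^r))
      = fun x => x^a * Real.exp (-x) * (∑ i ∈ Finset.range (m+1), lueA a m i * x^(i+r)) := by
    funext x
    rw [lueLag_eval, Finset.sum_mul]
    congr 1
    apply Finset.sum_congr rfl
    intro i _
    rw [pow_add]
    ring
  rw [hfun, (lue_int_sum a (by linarith) (m+1) (lueA a m) r).2]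
  have harg : ∀ i : ℕ, a + (i:ℝ) + (r:ℝ) + 1 = a + i + r + 1 := fun i => rfl
  exact lue_M3 a ha m r hrm

lemma lue_ortho_le (a : ℝ) (ha : 0 < a) (I I' : ℕ) (hII' : I' ≤ I) :
    ∫ x in Set.Ioi (0:ℝ), x^a * Real.exp (-x) * ((lueLag a I).eval x * (lueLag a I').eval x)
      = if I' = I then (I.factorial : ℝ) * Real.Gamma (a + I + 1) else 0 := by
  have hfun : (fun x : ℝ => x^a * Real.exp (-x) * ((lueLag a I).eval x * (lueLag a I').eval x))
      = fun x => ∑ r ∈ Finset.range (I'+1),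
          lueA a I' r * (x^a * Real.exp (-x) * ((lueLag a I).eval x * x^r)) := by
    funext x
    rw [lueLag_eval a I', Finset.mul_sum, Finset.mul_sum]
    apply Finset.sum_congr rfl
    intro r _
    ring
  have hint : ∀ r : ℕ, IntegrableOn
      (fun x : ℝ => x^a * Real.exp (-x) * ((lueLag a I).eval x * x^r)) (Set.Ioi 0) := by
    intro r
    have h := lue_int_poly a (by linarith) (lueLag a I * Polynomial.X ^ r)
    apply h.congr_fun ?_ measurableSet_Ioi
    intro x _
    simp [Polynomial.eval_mul, Polynomial.eval_pow]
  rw [hfun, MeasureTheory.integral_finset_sum _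
    (fun r _ => ((hint r).const_mul (lueA a I' r)))]
  have hval : ∀ r ∈ Finset.range (I'+1),
      ∫ x in Set.Ioi (0:ℝ), lueA a I' r * (x^a * Real.exp (-x) * ((lueLag a I).eval x * x^r))
      = if r = I then lueA a I' r * ((I.factorial : ℝ) * Real.Gamma (a + I + 1)) else 0 := by
    intro r hr
    rw [MeasureTheory.integral_const_mul, lue_M2 a ha I r
      (le_trans (Nat.lt_succ_iff.1 (Finset.mem_range.1 hr)) hII')]
    rw [mul_ite, mul_zero]
  rw [Finset.sum_congr rfl hval, Finset.sum_ite_eq' (Finset.range (I'+1)) I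
    (fun r => lueA a I' r * ((I.factorial : ℝ) * Real.Gamma (a + I + 1)))]
  rcases eq_or_lt_of_le hII' with h | h
  · rw [if_pos (by rw [h]; exact Finset.self_mem_range_succ I), if_pos h, ← h, lueA_self]
    ring
  · rw [if_neg (by simp; omega), if_neg (by omega)]

lemma lue_ortho (a : ℝ) (ha : 0 < a) (I I' : ℕ) :
    ∫ x in Set.Ioi (0:ℝ), x^a * Real.exp (-x) * ((lueLag a I).eval x * (lueLag a I').eval x)
      = if I' = I then (I.factorial : ℝ) * Real.Gamma (a + I + 1) else 0 := by
  rcases le_or_gt I' I with h | h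
  · exact lue_ortho_le a ha I I' h
  · have key := lue_ortho_le a ha I' I (le_of_lt h)
    have hfun : (fun x : ℝ => x^a * Real.exp (-x) * ((lueLag a I).eval x * (lueLag a I').eval x))
        = fun x => x^a * Real.exp (-x) * ((lueLag a I').eval x * (lueLag a I).eval x) := by
      funext x; ring
    rw [hfun, key, if_neg (by omega), if_neg (by omega)]

lemma lue_N1 (k d u : ℕ) :
    d.choose (u+1) * k.ascFactorial (d-u)
      = d.choose (u+1) * (k.ascFactorial (d-(u+1)) * (k+d-(u+1))) := by
  rcases le_or_gt (u+1) d with h | h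
  · have h1 : d - u = (d - (u+1)) + 1 := by omega
    rw [h1, Nat.ascFactorial_succ]
    have h2 : k + (d - (u+1)) = k + d - (u+1) := by omega
    rw [h2, Nat.mul_comm (k+d-(u+1))]
  · rw [Nat.choose_eq_zero_of_lt h, Nat.zero_mul, Nat.zero_mul]

/-- Vandermonde convolution for rising factorials -/
lemma lue_van (k : ℕ) (c : ℝ) : ∀ d : ℕ, ∏ t ∈ Finset.range d, (c+1+t)
    = ∑ u ∈ Finset.range (d+1),
        ((d.choose u * k.ascFactorial (d-u) : ℕ) : ℝ) * ∏ t ∈ Finset.range u, (c-k+1+t) := by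
  intro d
  induction d with
  | zero => simp
  | succ d ih =>
    set pp : ℕ → ℝ := fun u => ∏ t ∈ Finset.range u, (c-k+1+t) with hpp
    set F : ℕ → ℝ := fun u =>
      ((d.choose u * k.ascFactorial (d-u) * (k+d-u) : ℕ) : ℝ) * pp u with hF
    set G : ℕ → ℝ := fun u => ((d.choose u * k.ascFactorial (d-u) : ℕ) : ℝ) with hG
    -- LHS
    have lhs1 : ∏ t ∈ Finset.range (d+1), (c+1+t)
        = ∑ u ∈ Finset.range (d+1), G u * pp u * (c+1+d) := by
      rw [Finset.prod_range_succ, ih, Finset.sum_mul]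
    have point1 : ∀ u ∈ Finset.range (d+1), G u * pp u * (c+1+d) = F u + G u * pp (u+1) := by
      intro u hu
      have hu' : u ≤ d := Nat.lt_succ_iff.1 (Finset.mem_range.1 hu)
      have hc : ((k+d-u : ℕ) : ℝ) = (k:ℝ) + d - u := by
        rw [Nat.cast_sub (by omega)]
        push_cast
        ring
      have hpps : pp (u+1) = pp u * (c-(k:ℝ)+1+u) := by rw [hpp]; exact Finset.prod_range_succ _ _
      rw [hpps, hF, hG]
      push_cast [hc]
      ring
    -- RHS peel
    have peel : ∑ u ∈ Finset.range (d+2),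
          (((d+1).choose u * k.ascFactorial (d+1-u) : ℕ) : ℝ) * pp u
        = ∑ u ∈ Finset.range (d+1),
            (((d+1).choose (u+1) * k.ascFactorial (d-u) : ℕ) : ℝ) * pp (u+1)
          + ((k.ascFactorial (d+1) : ℕ) : ℝ) := by
      rw [Finset.sum_range_succ'
        (fun u => (((d+1).choose u * k.ascFactorial (d+1-u) : ℕ) : ℝ) * pp u) (d+1)]
      simp [hpp, Nat.succ_sub_succ]
    have point2 : ∀ u ∈ Finset.range (d+1),
        (((d+1).choose (u+1) * k.ascFactorial (d-u) : ℕ) : ℝ) * pp (u+1)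
          = G u * pp (u+1) + F (u+1) := by
      intro u hu
      have hchoose : (d+1).choose (u+1) = d.choose u + d.choose (u+1) := Nat.choose_succ_succ d u
      have hsplit : (d+1).choose (u+1) * k.ascFactorial (d-u)
          = d.choose u * k.ascFactorial (d-u)
            + d.choose (u+1) * (k.ascFactorial (d-(u+1)) * (k+d-(u+1))) := by
        rw [hchoose, Nat.add_mul, ← lue_N1]
      rw [hsplit, hF, hG]
      push_cast
      ring
    have sumF1 : ∑ u ∈ Finset.range (d+2), F u
        = ∑ u ∈ Finset.range (d+1), F (u+1) + ((k.ascFactorial (d+1) : ℕ) : ℝ) := by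
      rw [Finset.sum_range_succ' F (d+1)]
      congr 1
      rw [hF]
      simp [hpp, Nat.ascFactorial_succ, Nat.mul_comm]
    have sumF2 : ∑ u ∈ Finset.range (d+2), F u = ∑ u ∈ Finset.range (d+1), F u := by
      rw [Finset.sum_range_succ]
      have : F (d+1) = 0 := by
        rw [hF]
        simp [Nat.choose_eq_zero_of_lt (Nat.lt_succ_self d)]
      rw [this, add_zero]
    rw [lhs1, Finset.sum_congr rfl point1, peel, Finset.sum_congr rfl point2,
      Finset.sum_add_distrib, Finset.sum_add_distrib]
    have : ∑ u ∈ Finset.range (d+1), F (u+1) + ((k.ascFactorial (d+1) : ℕ) : ℝ)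
        = ∑ u ∈ Finset.range (d+1), F u := by rw [← sumF1, sumF2]
    linarith [this]

/-- connection formula between Laguerre families with parameters b and b-k -/
lemma lue_conn (b : ℝ) (k : ℕ) (j : ℕ) :
    lueLag b j = ∑ i ∈ Finset.range (j+1),
      Polynomial.C ((-1:ℝ)^(j-i) * ((j.choose i * k.ascFactorial (j-i) : ℕ) : ℝ))
        * lueLag (b-k) i := by
  apply Polynomial.ext
  intro r
  rw [lueLag_coeff, Polynomial.finset_sum_coeff]
  have coeff_term : ∀ i : ℕ,
      (Polynomial.C ((-1:ℝ)^(j-i) * ((j.choose i * k.ascFactorial (j-i) : ℕ) : ℝ))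
        * lueLag (b-k) i).coeff r
      = (-1:ℝ)^(j-i) * ((j.choose i * k.ascFactorial (j-i) : ℕ) : ℝ)
          * (if r ≤ i then lueA (b-k) i r else 0) := by
    intro i
    rw [Polynomial.coeff_C_mul, lueLag_coeff]
  rw [Finset.sum_congr rfl (fun i _ => coeff_term i)]
  rcases le_or_gt r j with hrj | hrj
  swap
  · rw [if_neg (by omega)]
    symm
    apply Finset.sum_eq_zero
    intro i hi
    have : ¬ (r ≤ i) := by
      have := Finset.mem_range.1 hi
      omega
    rw [if_neg this, mul_zero]
  · rw [if_pos hrj]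
    set d := j - r with hd
    -- restrict the sum to i ≥ r
    have restrict : ∑ i ∈ Finset.range (j+1),
        (-1:ℝ)^(j-i) * ((j.choose i * k.ascFactorial (j-i) : ℕ) : ℝ)
          * (if r ≤ i then lueA (b-k) i r else 0)
        = ∑ i ∈ Finset.Ico r (j+1),
        (-1:ℝ)^(j-i) * ((j.choose i * k.ascFactorial (j-i) : ℕ) : ℝ)
          * (if r ≤ i then lueA (b-k) i r else 0) := by
      symm
      apply Finset.sum_subset
      · intro i hi
        have := Finset.mem_Ico.1 hi
        exact Finset.mem_range.2 this.2
      · intro i hi hni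
        have h1 := Finset.mem_range.1 hi
        have : ¬ (r ≤ i) := by
          intro hc
          exact hni (Finset.mem_Ico.2 ⟨hc, h1⟩)
        rw [if_neg this, mul_zero]
    rw [restrict, Finset.sum_Ico_eq_sum_range]
    have hlen : j + 1 - r = d + 1 := by omega
    rw [hlen]
    have per_term : ∀ u ∈ Finset.range (d+1),
        (-1:ℝ)^(j-(r+u)) * ((j.choose (r+u) * k.ascFactorial (j-(r+u)) : ℕ) : ℝ)
          * (if r ≤ r+u then lueA (b-k) (r+u) r else 0)
        = ((-1:ℝ)^d * (j.choose r : ℝ))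
            * (((d.choose u * k.ascFactorial (d-u) : ℕ) : ℝ)
               * ∏ t ∈ Finset.range u, ((b+r) - k + 1 + t)) := by
      intro u hu
      have hu' : u ≤ d := Nat.lt_succ_iff.1 (Finset.mem_range.1 hu)
      rw [if_pos (Nat.le_add_right r u)]
      rw [lueA]
      have e1 : r + u - r = u := by omega
      rw [e1]
      have e2 : j - (r+u) = d - u := by omega
      have e4 : j.choose (r+u) * (r+u).choose r = j.choose r * d.choose u := by
        have h6 := Nat.choose_mul (n := j) (show r ≤ r+u by omega)
        rw [h6, e1, hd]
      have e5 : ∏ t ∈ Finset.range u, ((b-k) + r + 1 + t)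
          = ∏ t ∈ Finset.range u, ((b+r) - k + 1 + t) := by
        apply Finset.prod_congr rfl
        intro t _
        ring
      rw [e2, e5]
      have expand : (-1:ℝ)^(d-u) * ((j.choose (r+u) * k.ascFactorial (d-u) : ℕ) : ℝ)
            * ((-1:ℝ)^u * (((r+u).choose r : ℕ) : ℝ)
               * ∏ t ∈ Finset.range u, ((b+r) - k + 1 + t))
          = ((-1:ℝ)^(d-u) * (-1:ℝ)^u)
            * (((j.choose (r+u) * (r+u).choose r : ℕ) : ℝ) * ((k.ascFactorial (d-u) : ℕ) : ℝ))
            * ∏ t ∈ Finset.range u, ((b+r) - k + 1 + t) := by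
        push_cast
        ring
      rw [expand]
      have e3' : (-1:ℝ)^(d-u) * (-1:ℝ)^u = (-1:ℝ)^d := by
        rw [← pow_add, Nat.sub_add_cancel hu']
      rw [e3', e4]
      push_cast
      ring
    rw [Finset.sum_congr rfl per_term, ← Finset.mul_sum, ← lue_van k (b+r) d]
    rw [lueA]

lemma lue_Ij (b : ℝ) (k : ℕ) (hbk : 0 < b - k) (j : ℕ) :
    ∫ x in Set.Ioi (0:ℝ), (x^(b-(k:ℝ)) * Real.exp (-x)) * ((lueLag b j).eval x)^2
      = ∑ i ∈ Finset.range (j+1),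
          ((j.choose i * k.ascFactorial (j-i) : ℕ) : ℝ)^2 * (i.factorial : ℝ)
            * Real.Gamma (b - k + i + 1) := by
  set P := b - (k:ℝ) with hP
  have hP0 : (0:ℝ) < P := hbk
  have hP1 : (-1:ℝ) < P := by linarith
  set e : ℕ → ℝ := fun i => (-1:ℝ)^(j-i) * ((j.choose i * k.ascFactorial (j-i) : ℕ) : ℝ)
    with he
  have step1 : ∀ x : ℝ, (lueLag b j).eval x
      = ∑ i ∈ Finset.range (j+1), e i * (lueLag P i).eval x := by
    intro x
    conv_lhs => rw [lue_conn b k j]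
    rw [Polynomial.eval_finset_sum]
    exact Finset.sum_congr rfl (fun i _ => by rw [Polynomial.eval_mul, Polynomial.eval_C])
  have inner : ∀ i : ℕ, i ∈ Finset.range (j+1) →
      ∫ x in Set.Ioi (0:ℝ), P.rpow x * 0 = 0 → True := fun _ _ _ => trivial
  -- inner integral value
  have hinner : ∀ i ∈ Finset.range (j+1),
      ∫ x in Set.Ioi (0:ℝ), x^P * Real.exp (-x) * ((lueLag P i).eval x * (lueLag b j).eval x)
        = e i * ((i.factorial : ℝ) * Real.Gamma (P + i + 1)) := by
    intro i hi
    have hfun : (fun x : ℝ => x^P * Real.exp (-x) * ((lueLag P i).eval x * (lueLag b j).eval x))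
        = fun x => ∑ i' ∈ Finset.range (j+1),
            e i' * (x^P * Real.exp (-x) * ((lueLag P i).eval x * (lueLag P i').eval x)) := by
      funext x
      rw [step1 x, Finset.mul_sum, Finset.mul_sum]
      exact Finset.sum_congr rfl (fun i' _ => by ring)
    have hintble : ∀ i' : ℕ, Integrable
        (fun x : ℝ => e i' * (x^P * Real.exp (-x) * ((lueLag P i).eval x * (lueLag P i').eval x)))
        (volume.restrict (Set.Ioi 0)) := by
      intro i'
      have h := lue_int_poly P hP1 (lueLag P i * lueLag P i')
      exact (h.congr_fun (fun x _ => by rw [Polynomial.eval_mul]) measurableSet_Ioi).const_mul _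
    rw [hfun, MeasureTheory.integral_finset_sum _ (fun i' _ => hintble i')]
    have hval : ∀ i' ∈ Finset.range (j+1),
        ∫ x in Set.Ioi (0:ℝ),
          e i' * (x^P * Real.exp (-x) * ((lueLag P i).eval x * (lueLag P i').eval x))
        = if i' = i then e i' * ((i.factorial : ℝ) * Real.Gamma (P + i + 1)) else 0 := by
      intro i' _
      rw [MeasureTheory.integral_const_mul, lue_ortho P hP0 i i', mul_ite, mul_zero]
    rw [Finset.sum_congr rfl hval, Finset.sum_ite_eq' (Finset.range (j+1)) i _, if_pos hi]
  -- outer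
  have hfun2 : (fun x : ℝ => (x^P * Real.exp (-x)) * ((lueLag b j).eval x)^2)
      = fun x => ∑ i ∈ Finset.range (j+1),
          e i * (x^P * Real.exp (-x) * ((lueLag P i).eval x * (lueLag b j).eval x)) := by
    funext x
    rw [sq]
    rw [show (lueLag b j).eval x * (lueLag b j).eval x
      = (∑ i ∈ Finset.range (j+1), e i * (lueLag P i).eval x) * (lueLag b j).eval x from
      congrArg (fun y => y * (lueLag b j).eval x) (step1 x)]
    rw [Finset.sum_mul, Finset.mul_sum]
    exact Finset.sum_congr rfl (fun i _ => by ring)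
  have hintble2 : ∀ i : ℕ, Integrable
      (fun x : ℝ => e i * (x^P * Real.exp (-x) * ((lueLag P i).eval x * (lueLag b j).eval x)))
      (volume.restrict (Set.Ioi 0)) := by
    intro i
    have h := lue_int_poly P hP1 (lueLag P i * lueLag b j)
    exact (h.congr_fun (fun x _ => by rw [Polynomial.eval_mul]) measurableSet_Ioi).const_mul _
  rw [hfun2, MeasureTheory.integral_finset_sum _ (fun i _ => hintble2 i)]
  have hsgn : ∀ i : ℕ, e i * e i = ((j.choose i * k.ascFactorial (j-i) : ℕ) : ℝ)^2 := by
    intro i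
    rw [he]
    have : (-1:ℝ)^(j-i) * (-1:ℝ)^(j-i) = 1 := by
      rw [← mul_pow]
      norm_num
    calc ((-1:ℝ)^(j-i) * _) * ((-1:ℝ)^(j-i) * _)
        = ((-1:ℝ)^(j-i) * (-1:ℝ)^(j-i)) * (((j.choose i * k.ascFactorial (j-i) : ℕ) : ℝ)
          * ((j.choose i * k.ascFactorial (j-i) : ℕ) : ℝ)) := by ring
      _ = _ := by rw [this, sq]; ring
  apply Finset.sum_congr rfl
  intro i hi
  rw [MeasureTheory.integral_const_mul, hinner i hi, ← mul_assoc, hsgn i]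
  ring

lemma lue_poly_eq_zero (b : ℝ) (hb : 0 < b) (d : Polynomial ℝ)
    (hd : ∫ x in Set.Ioi (0:ℝ), x^b * Real.exp (-x) * (d.eval x)^2 = 0) : d = 0 := by
  by_contra hne
  set f : ℝ → ℝ := fun x => x^b * Real.exp (-x) * (d.eval x)^2 with hf
  have hint : Integrable f (volume.restrict (Set.Ioi 0)) := by
    have h := lue_int_poly b (by linarith) (d^2)
    exact h.congr_fun (fun x _ => by rw [hf]; dsimp only; rw [Polynomial.eval_pow]) measurableSet_Ioi
  have hnonneg : 0 ≤ᵐ[volume.restrict (Set.Ioi 0)] f := by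
    filter_upwards [MeasureTheory.ae_restrict_mem measurableSet_Ioi] with x hx
    have hx0 : (0:ℝ) < x := hx
    have h1 : (0:ℝ) ≤ x^b := Real.rpow_nonneg (le_of_lt hx0) b
    have h2 : (0:ℝ) ≤ Real.exp (-x) := le_of_lt (Real.exp_pos _)
    have h3 : (0:ℝ) ≤ (d.eval x)^2 := sq_nonneg _
    positivity
  have hae := (MeasureTheory.integral_eq_zero_iff_of_nonneg_ae hnonneg hint).1 hd
  have hae2 : ∀ᵐ x ∂(volume.restrict (Set.Ioi 0)), f x = 0 := hae
  rw [MeasureTheory.ae_restrict_iff' measurableSet_Ioi] at hae2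
  rw [MeasureTheory.ae_iff] at hae2
  have hsub : Set.Ioi (0:ℝ) ⊆ {x : ℝ | ¬ (x ∈ Set.Ioi (0:ℝ) → f x = 0)} ∪ {x | d.IsRoot x} := by
    intro x hx
    by_cases hroot : d.eval x = 0
    · right; exact hroot
    · left
      simp only [Set.mem_setOf_eq]
      push_neg
      refine ⟨hx, ?_⟩
      have hx0 : (0:ℝ) < x := hx
      have h1 : (0:ℝ) < x^b := Real.rpow_pos_of_pos hx0 b
      have h2 : (0:ℝ) < Real.exp (-x) := Real.exp_pos _
      have h3 : (0:ℝ) < (d.eval x)^2 := by positivity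
      rw [hf]
      positivity
  have hfin : ({x | d.IsRoot x} : Set ℝ).Finite := Polynomial.finite_setOf_isRoot hne
  have hle := le_trans (measure_mono hsub) (measure_union_le (μ := volume) _ _)
  rw [hae2, hfin.measure_zero, Real.volume_Ioi] at hle
  simp at hle

lemma lue_orth_lower (b : ℝ) (hb : 0 < b) (L : ℕ → Polynomial ℝ)
    (hmonic : ∀ m : ℕ, (L m).Monic) (hdeg : ∀ m : ℕ, (L m).natDegree = m)
    (horth : ∀ m l : ℕ, m ≠ l →
      ∫ x in Set.Ioi (0 : ℝ),
        x ^ b * Real.exp (-x) * (L m).eval x * (L l).eval x = 0) :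
    ∀ m : ℕ, ∀ p : Polynomial ℝ, p.natDegree ≤ m → ∀ j, m < j →
      ∫ x in Set.Ioi (0:ℝ), x^b * Real.exp (-x) * ((L j).eval x * p.eval x) = 0 := by
  intro m
  induction m with
  | zero =>
    intro p hp j hj
    have hL0 : L 0 = 1 := ((hmonic 0).natDegree_eq_zero).1 (hdeg 0)
    have key := horth j 0 (by omega)
    have hfun : (fun x : ℝ => x^b * Real.exp (-x) * ((L j).eval x * p.eval x))
        = fun x => (p.coeff 0) * (x^b * Real.exp (-x) * (L j).eval x * (L 0).eval x) := by
      funext x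
      rw [Polynomial.eq_C_of_natDegree_le_zero hp, hL0]
      simp only [Polynomial.eval_C, Polynomial.eval_one, Polynomial.coeff_C_zero]
      ring
    rw [hfun, MeasureTheory.integral_const_mul, key, mul_zero]
  | succ m ih =>
    intro p hp j hj
    set c := p.coeff (m+1) with hc
    set q := p - Polynomial.C c * L (m+1) with hq
    have hLdeg : (L (m+1)).coeff (m+1) = 1 := by
      have h1 := (hmonic (m+1)).coeff_natDegree
      rwa [hdeg (m+1)] at h1
    have hqdeg : q.natDegree ≤ m := by
      apply natDegree_le_of_coeff_zero
      · calc q.natDegree ≤ max p.natDegree (Polynomial.C c * L (m+1)).natDegree :=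
              Polynomial.natDegree_sub_le _ _
          _ ≤ m + 1 := by
              apply max_le hp
              calc (Polynomial.C c * L (m+1)).natDegree ≤ (L (m+1)).natDegree :=
                    Polynomial.natDegree_C_mul_le _ _
                _ = m + 1 := hdeg (m+1)
      · rw [hq, Polynomial.coeff_sub, Polynomial.coeff_C_mul, hLdeg, mul_one, ← hc, sub_self]
    have hfun : (fun x : ℝ => x^b * Real.exp (-x) * ((L j).eval x * p.eval x))
        = fun x => (x^b * Real.exp (-x) * ((L j).eval x * q.eval x))
            + c * (x^b * Real.exp (-x) * (L j).eval x * (L (m+1)).eval x) := by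
      funext x
      have : p.eval x = q.eval x + c * (L (m+1)).eval x := by
        rw [hq]
        simp only [Polynomial.eval_sub, Polynomial.eval_mul, Polynomial.eval_C]
        ring
      rw [this]
      ring
    have hint1 : Integrable (fun x : ℝ => x^b * Real.exp (-x) * ((L j).eval x * q.eval x))
        (volume.restrict (Set.Ioi 0)) := by
      have h := lue_int_poly b (by linarith) (L j * q)
      exact h.congr_fun (fun x _ => by dsimp only; rw [Polynomial.eval_mul]) measurableSet_Ioi
    have hint2 : Integrable
        (fun x : ℝ => c * (x^b * Real.exp (-x) * (L j).eval x * (L (m+1)).eval x))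
        (volume.restrict (Set.Ioi 0)) := by
      have h := lue_int_poly b (by linarith) (L j * L (m+1))
      exact (h.congr_fun (fun x _ => by rw [Polynomial.eval_mul]; ring) measurableSet_Ioi).const_mul _
    rw [hfun, MeasureTheory.integral_add hint1 hint2, ih q hqdeg j (by omega),
      MeasureTheory.integral_const_mul, horth j (m+1) (by omega), mul_zero, add_zero]

lemma lue_L_eq (b : ℝ) (hb : 0 < b) (L : ℕ → Polynomial ℝ)
    (hmonic : ∀ m : ℕ, (L m).Monic) (hdeg : ∀ m : ℕ, (L m).natDegree = m)
    (horth : ∀ m l : ℕ, m ≠ l →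
      ∫ x in Set.Ioi (0 : ℝ),
        x ^ b * Real.exp (-x) * (L m).eval x * (L l).eval x = 0) :
    ∀ j, L j = lueLag b j := by
  intro j
  set dd := L j - lueLag b j with hdd
  by_cases hzero : dd = 0
  · exact sub_eq_zero.1 hzero
  · exfalso
    have hdeg_d : dd.natDegree < j := by
      have hLj0 : L j ≠ 0 := (hmonic j).ne_zero
      have hdegs : (L j).degree = (lueLag b j).degree := by
        rw [Polynomial.degree_eq_natDegree hLj0,
          Polynomial.degree_eq_natDegree (lueLag_monic b j).ne_zero,
          hdeg j, lueLag_natDegree]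
      have hlc : (L j).leadingCoeff = (lueLag b j).leadingCoeff := by
        rw [hmonic j, lueLag_monic b j]
      have h1 := Polynomial.degree_sub_lt hdegs hLj0 hlc
      rw [Polynomial.degree_eq_natDegree hLj0, hdeg j] at h1
      exact (Polynomial.natDegree_lt_iff_degree_lt hzero).2 h1
    have hint1 : ∫ x in Set.Ioi (0:ℝ), x^b * Real.exp (-x) * ((L j).eval x * dd.eval x) = 0 :=
      lue_orth_lower b hb L hmonic hdeg horth dd.natDegree dd le_rfl j hdeg_d
    have hint2 : ∫ x in Set.Ioi (0:ℝ),
        x^b * Real.exp (-x) * ((lueLag b j).eval x * dd.eval x) = 0 := by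
      have hfun : (fun x : ℝ => x^b * Real.exp (-x) * ((lueLag b j).eval x * dd.eval x))
          = fun x => ∑ r ∈ Finset.range (dd.natDegree + 1),
              dd.coeff r * (x^b * Real.exp (-x) * ((lueLag b j).eval x * x^r)) := by
        funext x
        rw [Polynomial.eval_eq_sum_range (p := dd) x, Finset.mul_sum, Finset.mul_sum]
        exact Finset.sum_congr rfl (fun r _ => by ring)
      have hintble : ∀ r : ℕ, Integrable
          (fun x : ℝ => dd.coeff r * (x^b * Real.exp (-x) * ((lueLag b j).eval x * x^r)))
          (volume.restrict (Set.Ioi 0)) := by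
        intro r
        have h := lue_int_poly b (by linarith) (lueLag b j * Polynomial.X ^ r)
        exact (h.congr_fun (fun x _ => by simp [Polynomial.eval_mul, Polynomial.eval_pow])
          measurableSet_Ioi).const_mul _
      rw [hfun, MeasureTheory.integral_finset_sum _ (fun r _ => hintble r)]
      apply Finset.sum_eq_zero
      intro r hr
      have hrlt : r < j := by
        have h9 := Finset.mem_range.1 hr
        omega
      rw [MeasureTheory.integral_const_mul, lue_M2 b hb j r (le_of_lt hrlt),
        if_neg (Nat.ne_of_lt hrlt), mul_zero]
    have hzero_int : ∫ x in Set.Ioi (0:ℝ), x^b * Real.exp (-x) * (dd.eval x)^2 = 0 := by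
      have hfun : (fun x : ℝ => x^b * Real.exp (-x) * (dd.eval x)^2)
          = fun x => (x^b * Real.exp (-x) * ((L j).eval x * dd.eval x))
              - (x^b * Real.exp (-x) * ((lueLag b j).eval x * dd.eval x)) := by
        funext x
        have : dd.eval x = (L j).eval x - (lueLag b j).eval x := by
          rw [hdd, Polynomial.eval_sub]
        rw [sq, this]
        ring
      have hint1' : Integrable (fun x : ℝ => x^b * Real.exp (-x) * ((L j).eval x * dd.eval x))
          (volume.restrict (Set.Ioi 0)) := by
        have h := lue_int_poly b (by linarith) (L j * dd)
        exact h.congr_fun (fun x _ => by dsimp only; rw [Polynomial.eval_mul]) measurableSet_Ioi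
      have hint2' : Integrable
          (fun x : ℝ => x^b * Real.exp (-x) * ((lueLag b j).eval x * dd.eval x))
          (volume.restrict (Set.Ioi 0)) := by
        have h := lue_int_poly b (by linarith) (lueLag b j * dd)
        exact h.congr_fun (fun x _ => by dsimp only; rw [Polynomial.eval_mul]) measurableSet_Ioi
      rw [hfun, MeasureTheory.integral_sub hint1' hint2', hint1, hint2, sub_zero]
    exact hzero (lue_poly_eq_zero b hb dd hzero_int)

lemma lue_absorb (k j : ℕ) (hk : 0 < k) :
    (j+1) * (k+j).choose (k-1) = (k+j) * (k+j-1).choose (k-1) := by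
  have h1 : (k+j).choose (k-1) = (k+j).choose (j+1) := by
    have h := Nat.choose_symm (show j+1 ≤ k+j by omega)
    have e : k+j-(j+1) = k-1 := by omega
    rw [e] at h
    exact h
  have h2 : (k+j-1).choose (k-1) = (k+j-1).choose j := by
    have h := Nat.choose_symm (show j ≤ k+j-1 by omega)
    have e : k+j-1-j = k-1 := by omega
    rw [e] at h
    exact h
  have h3 := Nat.add_one_mul_choose_eq (k+j-1) j
  have e2 : k+j-1+1 = k+j := by omega
  rw [e2] at h3
  rw [h1, h2, h3]
  ring

lemma lue_tele (b : ℝ) (k n : ℕ) (hk : 0 < k) (hbk : (k:ℝ) < b) :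
    ((n:ℝ)+1) * ∑ j ∈ Finset.range (n+1), (((k+j).choose (k-1) : ℕ) : ℝ)
        * (((k+j-1).choose (k-1) : ℕ) : ℝ)
        * (Real.Gamma (b-k+n+1-j) / ((n-j).factorial : ℝ))
    = (b+n) * ∑ j ∈ Finset.range n, (((k+j).choose (k-1) : ℕ) : ℝ)
        * (((k+j-1).choose (k-1) : ℕ) : ℝ)
        * (Real.Gamma (b-k+n-j) / ((n-1-j).factorial : ℝ))
      + ∑ j ∈ Finset.range (n+1), (k:ℝ) * (((k+j-1).choose (k-1) : ℕ) : ℝ)^2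
        * (Real.Gamma (b-k+n+1-j) / ((n-j).factorial : ℝ)) := by
  set c : ℕ → ℝ := fun j => (((k+j).choose (k-1) : ℕ) : ℝ) * (((k+j-1).choose (k-1) : ℕ) : ℝ)
    with hc
  set w : ℕ → ℝ := fun j => Real.Gamma (b-k+n+1-j) / ((n-j).factorial : ℝ) with hw
  set A : ℕ → ℝ := fun j => (k:ℝ) * (((k+j-1).choose (k-1) : ℕ) : ℝ)^2 with hA
  set B : ℕ → ℝ := fun j => (j:ℝ) * (((k+j-1).choose (k-1) : ℕ) : ℝ)^2 with hB
  have habs : ∀ j : ℕ, ((j:ℝ)+1) * (((k+j).choose (k-1) : ℕ) : ℝ)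
      = ((k:ℝ)+j) * (((k+j-1).choose (k-1) : ℕ) : ℝ) := by
    intro j
    have := lue_absorb k j hk
    have hcast := congrArg (fun m : ℕ => (m : ℝ)) this
    push_cast at hcast
    linarith [hcast]
  -- pointwise split of the LHS coefficient
  have P1 : ∀ j : ℕ, ((n:ℝ)+1) * c j = c j * ((n:ℝ)-j) + B j + A j := by
    intro j
    have hbid : ((j:ℝ)+1) * c j = A j + B j := by
      rw [hc, hA, hB]
      have : ((j:ℝ)+1) * ((((k+j).choose (k-1) : ℕ) : ℝ) * (((k+j-1).choose (k-1) : ℕ) : ℝ))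
          = (((j:ℝ)+1) * (((k+j).choose (k-1) : ℕ) : ℝ)) * (((k+j-1).choose (k-1) : ℕ) : ℝ) := by
        ring
      rw [this, habs j]
      ring
    have : ((n:ℝ)+1) * c j = c j * ((n:ℝ)-j) + ((j:ℝ)+1) * c j := by ring
    rw [this, hbid]
    ring
  -- B at successor
  have P2 : ∀ j : ℕ, B (j+1) = ((k:ℝ)+j) * c j := by
    intro j
    rw [hB, hc]
    dsimp only
    have e : k+(j+1)-1 = k+j := by omega
    rw [e]
    push_cast
    have : ((j:ℝ)+1) * (((k+j).choose (k-1) : ℕ) : ℝ) * (((k+j).choose (k-1) : ℕ) : ℝ)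
        = (((j:ℝ)+1) * (((k+j).choose (k-1) : ℕ) : ℝ)) * (((k+j).choose (k-1) : ℕ) : ℝ) := by ring
    rw [sq]
    rw [show ((j:ℝ)+1) * ((((k+j).choose (k-1) : ℕ) : ℝ) * (((k+j).choose (k-1) : ℕ) : ℝ))
      = (((j:ℝ)+1) * (((k+j).choose (k-1) : ℕ) : ℝ)) * (((k+j).choose (k-1) : ℕ) : ℝ) from by ring]
    rw [habs j]
    ring
  -- w recurrence
  have WREC : ∀ j ∈ Finset.range n, ((n:ℝ)-j) * w j = (b-k+n-j) * w (j+1) := by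
    intro j hj
    have hjn : j < n := Finset.mem_range.1 hj
    rw [hw]
    dsimp only
    have harg : b-(k:ℝ)+n+1-j = (b-k+n-j) + 1 := by ring
    have hpos : (0:ℝ) < b-k+n-j := by
      have : (j:ℝ) ≤ (n:ℝ) - 1 := by
        have : (j:ℝ) + 1 ≤ n := by exact_mod_cast hjn
        linarith
      linarith
    rw [harg, Real.Gamma_add_one (ne_of_gt hpos)]
    have hfact : ((n-j).factorial : ℝ) = ((n:ℝ)-j) * ((n-1-j).factorial : ℝ) := by
      have e : n - j = (n-1-j) + 1 := by omega
      rw [e, Nat.factorial_succ]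
      push_cast [show ((n-1-j : ℕ) : ℝ) = (n:ℝ)-1-j from by
        rw [Nat.cast_sub (by omega), Nat.cast_sub (by exact_mod_cast Nat.one_le_iff_ne_zero.2 (by omega))]
        push_cast
        ring]
      ring
    have harg2 : b-(k:ℝ)+n+1-((j:ℝ)+1) = b-k+n-j := by ring
    have e3 : n - (j+1) = n-1-j := by omega
    rw [e3]
    push_cast
    rw [harg2]
    rw [hfact]
    have hf : ((n-1-j).factorial : ℝ) ≠ 0 := by exact_mod_cast Nat.factorial_ne_zero _
    have hnj : ((n:ℝ)-j) ≠ 0 := by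
      have : (j:ℝ) + 1 ≤ n := by exact_mod_cast hjn
      intro hcon
      linarith
    field_simp
  -- main chain
  rw [Finset.mul_sum]
  have lhs_split : ∑ j ∈ Finset.range (n+1), ((n:ℝ)+1) * (c j * w j)
      = ∑ j ∈ Finset.range (n+1), (c j * ((n:ℝ)-j)) * w j
        + ∑ j ∈ Finset.range (n+1), B j * w j
        + ∑ j ∈ Finset.range (n+1), A j * w j := by
    rw [← Finset.sum_add_distrib, ← Finset.sum_add_distrib]
    apply Finset.sum_congr rfl
    intro j _
    have := P1 j
    calc ((n:ℝ)+1) * (c j * w j) = (((n:ℝ)+1) * c j) * w j := by ring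
      _ = (c j * ((n:ℝ)-j) + B j + A j) * w j := by rw [this]
      _ = _ := by ring
  have S1 : ∑ j ∈ Finset.range (n+1), (c j * ((n:ℝ)-j)) * w j
      = ∑ j ∈ Finset.range n, c j * ((b-k+n-j) * w (j+1)) := by
    rw [Finset.sum_range_succ]
    have : (c n * ((n:ℝ)-n)) * w n = 0 := by rw [sub_self, mul_zero, zero_mul]
    rw [this, add_zero]
    apply Finset.sum_congr rfl
    intro j hj
    rw [← WREC j hj]
    ring
  have S2 : ∑ j ∈ Finset.range (n+1), B j * w j = ∑ j ∈ Finset.range n, B (j+1) * w (j+1) := by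
    rw [Finset.sum_range_succ' (fun j => B j * w j) n]
    have : B 0 * w 0 = 0 := by rw [hB]; dsimp only; push_cast; ring
    rw [this, add_zero]
  have S3 : ∑ j ∈ Finset.range n, (c j * ((b-k+n-j) * w (j+1)) + B (j+1) * w (j+1))
      = ∑ j ∈ Finset.range n, (b+n) * (c j * w (j+1)) := by
    apply Finset.sum_congr rfl
    intro j _
    rw [P2 j]
    ring
  rw [lhs_split, S1, S2]
  have comb : ∑ j ∈ Finset.range n, c j * ((b-k+n-j) * w (j+1))
      + ∑ j ∈ Finset.range n, B (j+1) * w (j+1)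
      = ∑ j ∈ Finset.range n, (b+n) * (c j * w (j+1)) := by
    rw [← Finset.sum_add_distrib]
    exact S3
  have final : ∀ j ∈ Finset.range n, (b+n) * (c j * w (j+1))
      = (b+n) * (c j * (Real.Gamma (b-k+n-j) / ((n-1-j).factorial : ℝ))) := by
    intro j hj
    have hjn : j < n := Finset.mem_range.1 hj
    rw [hw]
    dsimp only
    have e3 : n - (j+1) = n-1-j := by omega
    have harg2 : b-(k:ℝ)+n+1-((j+1:ℕ):ℝ) = b-k+n-j := by push_cast; ring
    push_cast
    rw [e3]
    push_cast at harg2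
    rw [harg2]
  calc ∑ j ∈ Finset.range n, c j * ((b-k+n-j) * w (j+1))
        + ∑ j ∈ Finset.range n, B (j+1) * w (j+1)
        + ∑ j ∈ Finset.range (n+1), A j * w j
      = ∑ j ∈ Finset.range n, (b+n) * (c j * w (j+1)) + ∑ j ∈ Finset.range (n+1), A j * w j := by
        rw [comb]
    _ = (b+n) * ∑ j ∈ Finset.range n, c j
          * (Real.Gamma (b-k+n-j) / ((n-1-j).factorial : ℝ))
        + ∑ j ∈ Finset.range (n+1), A j * w j := by
        rw [Finset.sum_congr rfl final, ← Finset.mul_sum]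
    _ = _ := rfl

lemma lue_cnt (k n j : ℕ) (hk : 0 < k) (hjn : j ≤ n) :
    n.choose j * k.ascFactorial j * (n-j).factorial
      = n.factorial * (k+j-1).choose (k-1) := by
  have h1 : k.ascFactorial j = j.factorial * (k+j-1).choose j :=
    Nat.ascFactorial_eq_factorial_mul_choose' k j
  have h2 : (k+j-1).choose j = (k+j-1).choose (k-1) := by
    have h := Nat.choose_symm (show j ≤ k+j-1 by omega)
    have e : k+j-1-j = k-1 := by omega
    rw [e] at h
    exact h.symm
  have h3 : n.choose j * j.factorial * (n-j).factorial = n.factorial :=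
    Nat.choose_mul_factorial_mul_factorial hjn
  calc n.choose j * k.ascFactorial j * (n-j).factorial
      = (n.choose j * j.factorial * (n-j).factorial) * (k+j-1).choose j := by
        rw [h1]; ring
    _ = n.factorial * (k+j-1).choose (k-1) := by rw [h3, h2]

lemma lue_G (b : ℝ) (k : ℕ) (hk : 0 < k) (hbk : (k:ℝ) < b) : ∀ n : ℕ,
    ∑ j ∈ Finset.range n,
      (∑ i ∈ Finset.range (j+1), ((j.choose i * k.ascFactorial (j-i) : ℕ) : ℝ)^2
         * (i.factorial : ℝ) * Real.Gamma (b - k + i + 1))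
        / ((j.factorial : ℝ) * Real.Gamma (b + j + 1))
    = (1/(k:ℝ)) * ∑ j ∈ Finset.range n,
        ((k+j).choose (k-1) : ℝ) * ((k+j-1).choose (k-1) : ℝ)
          * (Real.Gamma (b + n - k - j) / Real.Gamma (b + n))
          * (Real.Gamma ((n:ℝ) + 1) / Real.Gamma ((n:ℝ) - j)) := by
  have hk0 : (k:ℝ) ≠ 0 := by positivity
  have hbk' : (0:ℝ) < b - k := by linarith
  intro n
  induction n with
  | zero => simp
  | succ n ih =>
    have hGbn1_pos : (0:ℝ) < Real.Gamma (b + n + 1) := Real.Gamma_pos_of_pos (by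
      have : (0:ℝ) ≤ n := Nat.cast_nonneg n
      linarith)
    have hGbn_pos : (0:ℝ) < Real.Gamma (b + n) := Real.Gamma_pos_of_pos (by
      have : (0:ℝ) ≤ n := Nat.cast_nonneg n
      linarith)
    have hbn_pos : (0:ℝ) < b + n := by
      have : (0:ℝ) ≤ n := Nat.cast_nonneg n
      linarith
    have hGrec : Real.Gamma (b + n + 1) = (b + n) * Real.Gamma (b + n) :=
      Real.Gamma_add_one (ne_of_gt hbn_pos)
    -- conversion of RHS(n+1) terms
    have convA : ∀ j ∈ Finset.range (n+1),
        ((k+j).choose (k-1) : ℝ) * ((k+j-1).choose (k-1) : ℝ)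
          * (Real.Gamma (b + (n+1:ℕ) - k - j) / Real.Gamma (b + (n+1:ℕ)))
          * (Real.Gamma (((n+1:ℕ):ℝ) + 1) / Real.Gamma (((n+1:ℕ):ℝ) - j))
        = ((n.factorial : ℝ)/Real.Gamma (b+n+1)) * (((n:ℝ)+1)
            * (((k+j).choose (k-1) : ℝ) * ((k+j-1).choose (k-1) : ℝ)
              * (Real.Gamma (b-k+n+1-j) / ((n-j).factorial : ℝ)))) := by
      intro j hj
      have hjn : j ≤ n := Nat.lt_succ_iff.1 (Finset.mem_range.1 hj)
      have e1 : b + ((n+1:ℕ):ℝ) - k - j = b-k+n+1-j := by push_cast; ring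
      have e2 : Real.Gamma (((n+1:ℕ):ℝ) + 1) = ((n+1).factorial : ℝ) :=
        Real.Gamma_nat_eq_factorial (n+1)
      have e3 : Real.Gamma (((n+1:ℕ):ℝ) - j) = ((n-j).factorial : ℝ) := by
        have harg : ((n+1:ℕ):ℝ) - j = ((n-j:ℕ):ℝ) + 1 := by
          rw [Nat.cast_sub hjn]
          push_cast
          ring
        rw [harg, Real.Gamma_nat_eq_factorial]
      have e4 : b + ((n+1:ℕ):ℝ) = b + n + 1 := by push_cast; ring
      rw [e1, e2, e3, e4]
      have e5 : ((n+1).factorial : ℝ) = ((n:ℝ)+1) * (n.factorial : ℝ) := by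
        rw [Nat.factorial_succ]; push_cast; ring
      rw [e5]
      ring
    -- conversion of RHS(n) terms
    have convB : ∀ j ∈ Finset.range n,
        ((k+j).choose (k-1) : ℝ) * ((k+j-1).choose (k-1) : ℝ)
          * (Real.Gamma (b + n - k - j) / Real.Gamma (b + n))
          * (Real.Gamma ((n:ℝ) + 1) / Real.Gamma ((n:ℝ) - j))
        = ((n.factorial : ℝ)/Real.Gamma (b+n+1)) * ((b+(n:ℝ))
            * (((k+j).choose (k-1) : ℝ) * ((k+j-1).choose (k-1) : ℝ)
              * (Real.Gamma (b-k+n-j) / ((n-1-j).factorial : ℝ)))) := by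
      intro j hj
      have hjn : j < n := Finset.mem_range.1 hj
      have e1 : b + (n:ℝ) - k - j = b-k+n-j := by ring
      have e2 : Real.Gamma ((n:ℝ) + 1) = (n.factorial : ℝ) := Real.Gamma_nat_eq_factorial n
      have e3 : Real.Gamma ((n:ℝ) - j) = ((n-1-j).factorial : ℝ) := by
        have harg : (n:ℝ) - j = ((n-1-j:ℕ):ℝ) + 1 := by
          rw [Nat.cast_sub (by omega)]
          rw [Nat.cast_sub (by omega)]
          push_cast
          ring
        rw [harg, Real.Gamma_nat_eq_factorial]
      rw [e1, e2, e3, hGrec]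
      have hf : ((n-1-j).factorial : ℝ) ≠ 0 := by exact_mod_cast Nat.factorial_ne_zero _
      field_simp
    -- conversion of the new LHS term
    have convC : (k:ℝ) * ((∑ i ∈ Finset.range (n+1),
          ((n.choose i * k.ascFactorial (n-i) : ℕ) : ℝ)^2
            * (i.factorial : ℝ) * Real.Gamma (b - k + i + 1))
          / ((n.factorial : ℝ) * Real.Gamma (b + n + 1)))
        = ((n.factorial : ℝ)/Real.Gamma (b+n+1)) * (∑ j ∈ Finset.range (n+1),
            (k:ℝ) * (((k+j-1).choose (k-1) : ℕ) : ℝ)^2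
              * (Real.Gamma (b-k+n+1-j) / ((n-j).factorial : ℝ))) := by
      have reflect := Finset.sum_range_reflect (fun i =>
        ((n.choose i * k.ascFactorial (n-i) : ℕ) : ℝ)^2
          * (i.factorial : ℝ) * Real.Gamma (b - k + i + 1)) (n+1)
      rw [← reflect, Finset.sum_div, Finset.mul_sum, Finset.mul_sum]
      apply Finset.sum_congr rfl
      intro j hj
      have hjn : j ≤ n := Nat.lt_succ_iff.1 (Finset.mem_range.1 hj)
      have e0 : n + 1 - 1 - j = n - j := by omega
      rw [e0]
      have e1 : n - (n-j) = j := by omega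
      rw [e1]
      have e2 : (b - (k:ℝ) + ((n-j:ℕ):ℝ) + 1) = b-k+n+1-j := by
        rw [Nat.cast_sub hjn]; ring
      rw [e2]
      have E : (n.choose (n-j) * k.ascFactorial j : ℕ) * ((n-j).factorial : ℕ)
          = n.factorial * (k+j-1).choose (k-1) := by
        have hsymm : n.choose (n-j) = n.choose j := by
          have h := Nat.choose_symm hjn
          exact h
        rw [hsymm]
        exact lue_cnt k n j hk hjn
      have E' : ((n.choose (n-j) * k.ascFactorial j : ℕ) : ℝ) * ((n-j).factorial : ℝ)
          = (n.factorial : ℝ) * (((k+j-1).choose (k-1) : ℕ) : ℝ) := by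
        exact_mod_cast congrArg (fun m : ℕ => (m:ℝ)) E
      have hfj : ((n-j).factorial : ℝ) ≠ 0 := by exact_mod_cast Nat.factorial_ne_zero _
      have hfn : ((n.factorial : ℝ)) ≠ 0 := by exact_mod_cast Nat.factorial_ne_zero n
      set a : ℝ := ((n.choose (n-j) * k.ascFactorial j : ℕ) : ℝ) with ha
      set C : ℝ := (((k+j-1).choose (k-1) : ℕ) : ℝ) with hC
      set f : ℝ := ((n-j).factorial : ℝ) with hf2
      set Γx : ℝ := Real.Gamma (b-k+n+1-j) with hGx
      -- goal: k * (a^2 * f * Γx / (n! * Γ(b+n+1))) = (n!/Γ(b+n+1)) * (k * C^2 * (Γx / f))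
      have E2 : (a*f)^2 = ((n.factorial : ℝ)*C)^2 := by rw [E']
      field_simp
      linear_combination Γx * E2
    -- assemble
    rw [Finset.sum_range_succ, ih]
    rw [Finset.sum_congr rfl convA, Finset.sum_congr rfl convB]
    rw [← Finset.mul_sum, ← Finset.mul_sum, ← Finset.mul_sum, ← Finset.mul_sum]
    rw [lue_tele b k n hk hbk]
    rw [mul_add]
    rw [← convC]
    field_simp

/-- The negative moments of the `n`-dimensional Laguerre Unitary Ensemble with
parameter `b`: for a positive integer `k < n+1` with `b > k`,
`M(-k,n) = (1/k) ∑_{j=0}^{n-1} C(k+j,k-1) C(k+j-1,k-1) (b+n)_{(-k-j)}/(n+1)_{(-j-1)}`,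
with `(a)_{(m)} = Γ(a+m)/Γ(a)`. -/
theorem lue_negative_moments (b : ℝ) (n k : ℕ) (hn : 0 < n) (hk : 0 < k)
    (hkn : k < n + 1) (hbk : (k : ℝ) < b)
    (L : ℕ → Polynomial ℝ)
    (hmonic : ∀ m : ℕ, (L m).Monic)
    (hdeg : ∀ m : ℕ, (L m).natDegree = m)
    (horth : ∀ m l : ℕ, m ≠ l →
      ∫ x in Set.Ioi (0 : ℝ),
        x ^ b * Real.exp (-x) * (L m).eval x * (L l).eval x = 0)
    (hnorm : ∀ j : ℕ,
      ∫ x in Set.Ioi (0 : ℝ), x ^ b * Real.exp (-x) * ((L j).eval x) ^ 2 =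
        Real.Gamma ((j : ℝ) + 1) * Real.Gamma (b + (j : ℝ) + 1)) :
    ∫ x in Set.Ioi (0 : ℝ), x ^ (-(k : ℝ)) *
        (x ^ b * Real.exp (-x) * ∑ j ∈ Finset.range n,
          ((L j).eval x) ^ 2 / (Real.Gamma ((j : ℝ) + 1) * Real.Gamma (b + (j : ℝ) + 1))) =
      (1 / (k : ℝ)) * ∑ j ∈ Finset.range n,
        (Nat.choose (k + j) (k - 1) : ℝ) * (Nat.choose (k + j - 1) (k - 1) : ℝ) *
          (Real.Gamma (b + (n : ℝ) - (k : ℝ) - (j : ℝ)) / Real.Gamma (b + (n : ℝ))) *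
          (Real.Gamma ((n : ℝ) + 1) / Real.Gamma ((n : ℝ) - (j : ℝ))) := by
  have hk1 : (1:ℝ) ≤ k := by exact_mod_cast hk
  have hb : (0:ℝ) < b := by linarith
  have hbk' : (0:ℝ) < b - k := by linarith
  have hL := lue_L_eq b hb L hmonic hdeg horth
  -- rewrite the integrand on Ioi 0
  have hfun : Set.EqOn
      (fun x : ℝ => x ^ (-(k : ℝ)) *
        (x ^ b * Real.exp (-x) * ∑ j ∈ Finset.range n,
          ((L j).eval x) ^ 2 / (Real.Gamma ((j : ℝ) + 1) * Real.Gamma (b + (j : ℝ) + 1))))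
      (fun x : ℝ => ∑ j ∈ Finset.range n,
        (1 / (Real.Gamma ((j : ℝ) + 1) * Real.Gamma (b + (j : ℝ) + 1)))
          * ((x ^ (b - (k:ℝ)) * Real.exp (-x)) * ((lueLag b j).eval x) ^ 2))
      (Set.Ioi 0) := by
    intro x hx
    have hx0 : (0:ℝ) < x := hx
    have hxp : x ^ (b - (k:ℝ)) = x ^ (-(k:ℝ)) * x ^ b := by
      rw [show b - (k:ℝ) = -(k:ℝ) + b from by ring, Real.rpow_add hx0]
    dsimp only
    simp only [hL]
    rw [Finset.mul_sum, Finset.mul_sum]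
    apply Finset.sum_congr rfl
    intro j _
    rw [hxp]
    ring
  rw [MeasureTheory.setIntegral_congr_fun measurableSet_Ioi hfun]
  have hint : ∀ j : ℕ, Integrable
      (fun x : ℝ => (1 / (Real.Gamma ((j : ℝ) + 1) * Real.Gamma (b + (j : ℝ) + 1)))
        * ((x ^ (b - (k:ℝ)) * Real.exp (-x)) * ((lueLag b j).eval x) ^ 2))
      (volume.restrict (Set.Ioi 0)) := by
    intro j
    have h := lue_int_poly (b - k) (by linarith) ((lueLag b j)^2)
    exact (h.congr_fun (fun x _ => by rw [Polynomial.eval_pow]) measurableSet_Ioi).const_mul _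
  rw [MeasureTheory.integral_finset_sum _ (fun j _ => hint j)]
  have hval : ∀ j ∈ Finset.range n,
      ∫ x in Set.Ioi (0:ℝ),
        (1 / (Real.Gamma ((j : ℝ) + 1) * Real.Gamma (b + (j : ℝ) + 1)))
          * ((x ^ (b - (k:ℝ)) * Real.exp (-x)) * ((lueLag b j).eval x) ^ 2)
      = (∑ i ∈ Finset.range (j+1), ((j.choose i * k.ascFactorial (j-i) : ℕ) : ℝ)^2
           * (i.factorial : ℝ) * Real.Gamma (b - k + i + 1))
          / ((j.factorial : ℝ) * Real.Gamma (b + j + 1)) := by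
    intro j _
    rw [MeasureTheory.integral_const_mul, lue_Ij b k hbk' j]
    rw [Real.Gamma_nat_eq_factorial j]
    rw [one_div, inv_mul_eq_div]
  rw [Finset.sum_congr rfl hval]
  exact lue_G b k hk hbk n
end

section
/- The first moment of the Jacobi Unitary Ensemble eigenvalue density with parameters a, b and dimension n equals n(b+n)/(a+b+2n). -/
open Polynomial Finset MeasureTheory Real Set

lemma jue_rpow_prod_bound {a b x : ℝ} (hx : x ∈ Set.Ioo (0:ℝ) 1) :
    x ^ b * (1 - x) ^ a ≤
      (max 1 ((1/2:ℝ) ^ a)) * x ^ b + (max 1 ((1/2:ℝ) ^ b)) * (1 - x) ^ a := by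
  obtain ⟨h0, h1⟩ := hx
  have hx1 : (0:ℝ) < 1 - x := by linarith
  rcases le_or_gt x (1/2) with hle | hlt
  · have h2 : (1/2:ℝ) ≤ 1 - x := by linarith
    have hb1 : (1 - x) ^ a ≤ max 1 ((1/2:ℝ) ^ a) := by
      rcases le_or_gt 0 a with hA | hA
      · exact le_max_of_le_left (Real.rpow_le_one hx1.le (by linarith) hA)
      · exact le_max_of_le_right (Real.rpow_le_rpow_of_nonpos (by norm_num) h2 hA.le)
    calc x ^ b * (1 - x) ^ a ≤ x ^ b * max 1 ((1/2:ℝ) ^ a) := by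
          exact mul_le_mul_of_nonneg_left hb1 (Real.rpow_nonneg h0.le b)
      _ ≤ (max 1 ((1/2:ℝ) ^ a)) * x ^ b + (max 1 ((1/2:ℝ) ^ b)) * (1 - x) ^ a := by
          have : 0 ≤ (max 1 ((1/2:ℝ) ^ b)) * (1 - x) ^ a :=
            mul_nonneg (le_trans zero_le_one (le_max_left _ _)) (Real.rpow_nonneg hx1.le a)
          nlinarith [Real.rpow_nonneg h0.le b]
  · have h2 : (1/2:ℝ) ≤ x := hlt.le
    have hb1 : x ^ b ≤ max 1 ((1/2:ℝ) ^ b) := by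
      rcases le_or_gt 0 b with hA | hA
      · exact le_max_of_le_left (Real.rpow_le_one h0.le h1.le hA)
      · exact le_max_of_le_right (Real.rpow_le_rpow_of_nonpos (by norm_num) h2 hA.le)
    have : x ^ b * (1 - x) ^ a ≤ (max 1 ((1/2:ℝ) ^ b)) * (1 - x) ^ a :=
      mul_le_mul_of_nonneg_right hb1 (Real.rpow_nonneg hx1.le a)
    nlinarith [Real.rpow_nonneg h0.le b, Real.rpow_nonneg hx1.le a,
      mul_nonneg (Real.rpow_nonneg h0.le b) (le_trans zero_le_one (le_max_left 1 ((1/2:ℝ)^a)))]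

lemma jue_w_cont {a b : ℝ} : ContinuousOn (fun x : ℝ => x ^ b * (1 - x) ^ a) (Set.Ioo 0 1) := by
  apply ContinuousOn.mul
  · intro x hx
    exact (Real.continuousAt_rpow_const x b (Or.inl (ne_of_gt hx.1))).continuousWithinAt
  · intro x hx
    exact ((Real.continuousAt_rpow_const (1 - x) a (Or.inl (by have := hx.2; intro hc; linarith))).comp
      ((continuous_const.sub continuous_id).continuousAt)).continuousWithinAt

lemma jue_w_poly_integrable {a b : ℝ} (ha : -1 < a) (hb : -1 < b) (q : Polynomial ℝ) :
    IntegrableOn (fun x : ℝ => x ^ b * (1 - x) ^ a * q.eval x) (Set.Ioo 0 1) := by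
  have g1 : IntegrableOn (fun x : ℝ => x ^ b) (Set.Ioo 0 1) := by
    have := intervalIntegral.intervalIntegrable_rpow' (a := 0) (b := 1) hb
    rwa [intervalIntegrable_iff_integrableOn_Ioo_of_le zero_le_one] at this
  have g2 : IntegrableOn (fun x : ℝ => (1 - x) ^ a) (Set.Ioo 0 1) := by
    have := (intervalIntegral.intervalIntegrable_rpow' (a := 0) (b := 1) ha).comp_sub_left 1
    norm_num at this
    have := this.symm
    rwa [intervalIntegrable_iff_integrableOn_Ioo_of_le zero_le_one] at this
  obtain ⟨Cq, hCq⟩ := (isCompact_Icc (a := (0:ℝ)) (b := 1)).exists_bound_of_continuousOn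
    (Polynomial.continuous q).continuousOn
  have hmeas : AEStronglyMeasurable (fun x : ℝ => x ^ b * (1 - x) ^ a * q.eval x)
      (volume.restrict (Set.Ioo 0 1)) :=
    (jue_w_cont.mul (Polynomial.continuous q).continuousOn).aestronglyMeasurable measurableSet_Ioo
  apply Integrable.mono' (((g1.const_mul _).add (g2.const_mul _)).const_mul Cq) hmeas
  rw [ae_restrict_iff' measurableSet_Ioo]
  filter_upwards with x hx
  have hw0 : 0 ≤ x ^ b * (1 - x) ^ a :=
    mul_nonneg (Real.rpow_nonneg hx.1.le b) (Real.rpow_nonneg (by have := hx.2; linarith) a)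
  have hq : |q.eval x| ≤ Cq := by
    have := hCq x ⟨hx.1.le, hx.2.le⟩
    simpa using this
  have hbd := jue_rpow_prod_bound (a := a) (b := b) hx
  have h0C : (0:ℝ) ≤ Cq := le_trans (abs_nonneg _) hq
  calc ‖x ^ b * (1 - x) ^ a * q.eval x‖ = x ^ b * (1 - x) ^ a * |q.eval x| := by
        rw [norm_mul, Real.norm_eq_abs, Real.norm_eq_abs, abs_of_nonneg hw0]
  _ ≤ (max 1 ((1/2:ℝ) ^ a) * x ^ b + max 1 ((1/2:ℝ) ^ b) * (1 - x) ^ a) * Cq := by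
        apply mul_le_mul hbd hq (abs_nonneg _) (le_trans hw0 hbd)
  _ = Cq * (max 1 ((1/2:ℝ) ^ a) * x ^ b + max 1 ((1/2:ℝ) ^ b) * (1 - x) ^ a) := mul_comm _ _

noncomputable def jueJ (a b : ℝ) (q : Polynomial ℝ) : ℝ :=
  ∫ x in Set.Ioo (0:ℝ) 1, x ^ b * (1 - x) ^ a * q.eval x

lemma jueJ_add {a b : ℝ} (ha : -1 < a) (hb : -1 < b) (p q : Polynomial ℝ) :
    jueJ a b (p + q) = jueJ a b p + jueJ a b q := by
  unfold jueJ
  rw [← integral_add (jue_w_poly_integrable ha hb p) (jue_w_poly_integrable ha hb q)]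
  congr 1 with x
  simp [mul_add]

lemma jueJ_smul {a b : ℝ} (c : ℝ) (q : Polynomial ℝ) :
    jueJ a b (Polynomial.C c * q) = c * jueJ a b q := by
  unfold jueJ
  rw [← integral_const_mul]
  congr 1 with x
  simp; ring

lemma jue_ortho {a b : ℝ} (ha : -1 < a) (hb : -1 < b) (P : ℕ → Polynomial ℝ)
    (hmonic : ∀ m : ℕ, (P m).Monic) (hdeg : ∀ m : ℕ, (P m).natDegree = m)
    (horth' : ∀ m l : ℕ, m ≠ l → jueJ a b (P m * P l) = 0) :
    ∀ (d : ℕ) (q : Polynomial ℝ), q.natDegree ≤ d → ∀ m : ℕ, d ≤ m →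
      jueJ a b (P m * q) = q.coeff m * jueJ a b (P m * P m) := by
  intro d
  induction d with
  | zero =>
    intro q hq m hm
    have hP0 : P 0 = 1 := ((hmonic 0).natDegree_eq_zero).mp (hdeg 0)
    have hqC : q = Polynomial.C (q.coeff 0) := Polynomial.eq_C_of_natDegree_le_zero hq
    rcases Nat.eq_zero_or_pos m with rfl | hm0
    · calc jueJ a b (P 0 * q) = jueJ a b (Polynomial.C (q.coeff 0) * (P 0 * P 0)) := by
            rw [hP0, ← hqC]; ring_nf
      _ = q.coeff 0 * jueJ a b (P 0 * P 0) := jueJ_smul _ _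
    · have h1 : jueJ a b (P m * q) = q.coeff 0 * jueJ a b (P m * P 0) := by
        calc jueJ a b (P m * q) = jueJ a b (Polynomial.C (q.coeff 0) * (P m * P 0)) := by
              rw [hP0, ← hqC]; ring_nf
        _ = q.coeff 0 * jueJ a b (P m * P 0) := jueJ_smul _ _
      rw [h1, horth' m 0 (Nat.pos_iff_ne_zero.mp hm0), mul_zero,
        Polynomial.coeff_eq_zero_of_natDegree_lt (lt_of_le_of_lt hq hm0), zero_mul]
  | succ d ih =>
    intro q hq m hm
    set c := q.coeff (d + 1) with hc
    set r := q - Polynomial.C c * P (d + 1) with hr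
    have hrdeg : r.natDegree ≤ d := by
      apply Polynomial.natDegree_le_iff_coeff_eq_zero.mpr
      intro k hk
      rw [hr, Polynomial.coeff_sub, Polynomial.coeff_C_mul]
      rcases eq_or_lt_of_le (Nat.succ_le_of_lt hk) with hk1 | hk1
      · rw [← hk1, hc]
        have : (P (d+1)).coeff (d+1) = 1 := by
          have := (hmonic (d+1)).coeff_natDegree
          rwa [hdeg (d+1)] at this
        rw [this, mul_one, sub_self]
      · rw [Polynomial.coeff_eq_zero_of_natDegree_lt (lt_of_le_of_lt hq hk1),
          Polynomial.coeff_eq_zero_of_natDegree_lt (by rw [hdeg (d+1)]; exact hk1),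
          mul_zero, sub_self]
    have hsplit : P m * q = Polynomial.C c * (P m * P (d+1)) + P m * r := by
      rw [hr]; ring
    have hJ : jueJ a b (P m * q) =
        c * jueJ a b (P m * P (d+1)) + r.coeff m * jueJ a b (P m * P m) := by
      rw [hsplit, jueJ_add ha hb, jueJ_smul, ih r hrdeg m (le_trans (Nat.le_succ d) hm)]
    rcases eq_or_lt_of_le hm with hm1 | hm1
    · rw [hJ, ← hm1]
      have hrc : r.coeff (d+1) = q.coeff (d+1) - c := by
        rw [hr, Polynomial.coeff_sub, Polynomial.coeff_C_mul]
        have : (P (d+1)).coeff (d+1) = 1 := by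
          have := (hmonic (d+1)).coeff_natDegree
          rwa [hdeg (d+1)] at this
        rw [this, mul_one]
      rw [hrc, ← hc]; ring
    · rw [hJ, horth' m (d+1) (by omega), mul_zero, zero_add]
      have hrc : r.coeff m = q.coeff m := by
        rw [hr, Polynomial.coeff_sub, Polynomial.coeff_C_mul,
          show (P (d+1)).coeff m = 0 from
            Polynomial.coeff_eq_zero_of_natDegree_lt (by rw [hdeg (d+1)]; exact hm1),
          mul_zero, sub_zero]
      rw [hrc]

lemma jue_pearson {a b : ℝ} (ha : -1 < a) (hb : -1 < b) (p : Polynomial ℝ) :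
    jueJ a b (Polynomial.X * (1 - Polynomial.X) * p.derivative
      + (Polynomial.C (b+1) - Polynomial.C (a+b+2) * Polynomial.X) * p) = 0 := by
  set q : Polynomial ℝ := Polynomial.X * (1 - Polynomial.X) * p.derivative
      + (Polynomial.C (b+1) - Polynomial.C (a+b+2) * Polynomial.X) * p with hq
  set F : ℝ → ℝ := fun x => x ^ (b+1) * (1-x) ^ (a+1) * p.eval x with hF
  have hb1 : (0:ℝ) < b + 1 := by linarith
  have ha1 : (0:ℝ) < a + 1 := by linarith
  have hFcont : ContinuousOn F (Set.Icc 0 1) := by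
    apply Continuous.continuousOn
    apply Continuous.mul ?_ (Polynomial.continuous p)
    apply Continuous.mul
    · exact continuous_iff_continuousAt.mpr fun x =>
        Real.continuousAt_rpow_const x (b+1) (Or.inr hb1.le)
    · exact (continuous_iff_continuousAt.mpr fun x =>
        Real.continuousAt_rpow_const x (a+1) (Or.inr ha1.le)).comp
        (continuous_const.sub continuous_id)
  have hderiv : ∀ x ∈ Set.Ioo (0:ℝ) 1,
      HasDerivAt F (x ^ b * (1 - x) ^ a * q.eval x) x := by
    intro x hx
    have hx0 : x ≠ 0 := ne_of_gt hx.1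
    have hx1 : (1:ℝ) - x ≠ 0 := by have := hx.2; intro hc; linarith
    have h1 : HasDerivAt (fun y : ℝ => y ^ (b+1)) ((b+1) * x ^ b) x := by
      have := Real.hasDerivAt_rpow_const (x := x) (p := b+1) (Or.inl hx0)
      simpa using this
    have h2 : HasDerivAt (fun y : ℝ => (1-y) ^ (a+1)) (-((a+1) * (1-x) ^ a)) x := by
      have hin : HasDerivAt (fun y : ℝ => 1 - y) (-1) x := by
        simpa using (hasDerivAt_id' x).const_sub (1:ℝ)
      have hout := Real.hasDerivAt_rpow_const (x := 1 - x) (p := a+1) (Or.inl hx1)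
      have := HasDerivAt.comp x (by simpa using hout) hin
      simpa [Function.comp_def] using this
    have h3 : HasDerivAt (fun y : ℝ => p.eval y) (p.derivative.eval x) x :=
      p.hasDerivAt x
    have := (h1.mul h2).mul h3
    refine HasDerivAt.congr_deriv (f := F) this ?_
    have e1 : x ^ (b+1) = x ^ b * x := Real.rpow_add_one hx0 b
    have e2 : (1-x) ^ (a+1) = (1-x) ^ a * (1-x) := Real.rpow_add_one hx1 a
    rw [hq]
    simp only [Polynomial.eval_add, Polynomial.eval_mul, Polynomial.eval_sub,
      Polynomial.eval_X, Polynomial.eval_one, Polynomial.eval_C, Pi.mul_apply]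
    rw [e1, e2]
    ring
  have hint : IntervalIntegrable (fun x : ℝ => x ^ b * (1 - x) ^ a * q.eval x) volume 0 1 := by
    rw [intervalIntegrable_iff_integrableOn_Ioo_of_le zero_le_one]
    exact jue_w_poly_integrable ha hb q
  have key := intervalIntegral.integral_eq_sub_of_hasDeriv_right_of_le zero_le_one hFcont
    (fun x hx => (hderiv x hx).hasDerivWithinAt) hint
  have hF1 : F 1 = 0 := by
    simp only [hF, sub_self]
    rw [Real.zero_rpow (ne_of_gt ha1)]
    ring
  have hF0 : F 0 = 0 := by
    simp only [hF]
    rw [Real.zero_rpow (ne_of_gt hb1)]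
    ring
  have : jueJ a b q = ∫ x in (0:ℝ)..1, x ^ b * (1 - x) ^ a * q.eval x := by
    rw [intervalIntegral.integral_of_le zero_le_one, integral_Ioc_eq_integral_Ioo]
    rfl
  rw [this, key, hF1, hF0, sub_zero]

lemma jueJ_sq_pos {a b : ℝ} (ha : -1 < a) (hb : -1 < b) (p : Polynomial ℝ) (hp : p ≠ 0) :
    0 < jueJ a b (p * p) := by
  set f : ℝ → ℝ := fun x => x ^ b * (1 - x) ^ a * (p * p).eval x with hf
  have hnonneg : 0 ≤ᵐ[volume.restrict (Set.Ioo (0:ℝ) 1)] f := by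
    apply (ae_restrict_iff' measurableSet_Ioo).mpr
    filter_upwards with x hx
    have h1 : (0:ℝ) ≤ x ^ b := Real.rpow_nonneg hx.1.le b
    have h2 : (0:ℝ) ≤ (1-x) ^ a := Real.rpow_nonneg (by have := hx.2; linarith) a
    simp only [hf, Pi.zero_apply, Polynomial.eval_mul]
    exact mul_nonneg (mul_nonneg h1 h2) (mul_self_nonneg _)
  rw [show jueJ a b (p * p) = ∫ x in Set.Ioo (0:ℝ) 1, f x from rfl]
  rw [setIntegral_pos_iff_support_of_nonneg_ae hnonneg (jue_w_poly_integrable ha hb (p*p))]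
  have hsub : Set.Ioo (0:ℝ) 1 \ {x | p.IsRoot x} ⊆ Function.support f ∩ Set.Ioo 0 1 := by
    rintro x ⟨hx, hroot⟩
    refine ⟨?_, hx⟩
    have h1 : (0:ℝ) < x ^ b := Real.rpow_pos_of_pos hx.1 b
    have h2 : (0:ℝ) < (1-x) ^ a := Real.rpow_pos_of_pos (by have := hx.2; linarith) a
    have h3 : p.eval x ≠ 0 := hroot
    simp only [hf, Function.mem_support, Polynomial.eval_mul]
    positivity
  have hZ : volume {x : ℝ | p.IsRoot x} = 0 :=
    (Polynomial.finite_setOf_isRoot hp).measure_zero volume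
  have : volume (Set.Ioo (0:ℝ) 1 \ {x | p.IsRoot x}) = volume (Set.Ioo (0:ℝ) 1) :=
    measure_diff_null hZ
  calc (0:ENNReal) < volume (Set.Ioo (0:ℝ) 1 \ {x | p.IsRoot x}) := by
        rw [this, Real.volume_Ioo]; norm_num
  _ ≤ volume (Function.support f ∩ Set.Ioo 0 1) := measure_mono hsub

lemma jue_g_deg (P : ℕ → Polynomial ℝ) (hmonic : ∀ m : ℕ, (P m).Monic)
    (hdeg : ∀ m : ℕ, (P m).natDegree = m) (j : ℕ) :
    (Polynomial.X * P j - P (j+1)).natDegree ≤ j := by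
  apply Polynomial.natDegree_le_iff_coeff_eq_zero.mpr
  intro k hk
  obtain ⟨k', rfl⟩ : ∃ k', k = k' + 1 := ⟨k - 1, by omega⟩
  rw [Polynomial.coeff_sub, Polynomial.coeff_X_mul]
  rcases eq_or_lt_of_le (Nat.lt_succ_iff.mp hk) with h1 | h1
  · subst h1
    have e1 : (P j).coeff j = 1 := by
      have := (hmonic j).coeff_natDegree; rwa [hdeg j] at this
    have e2 : (P (j+1)).coeff (j+1) = 1 := by
      have := (hmonic (j+1)).coeff_natDegree; rwa [hdeg (j+1)] at this
    rw [e1, e2, sub_self]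
  · rw [Polynomial.coeff_eq_zero_of_natDegree_lt (by rw [hdeg j]; exact h1),
      Polynomial.coeff_eq_zero_of_natDegree_lt (by rw [hdeg (j+1)]; omega), sub_self]

lemma jue_moment_step {a b : ℝ} (ha : -1 < a) (hb : -1 < b) (P : ℕ → Polynomial ℝ)
    (hmonic : ∀ m : ℕ, (P m).Monic) (hdeg : ∀ m : ℕ, (P m).natDegree = m)
    (horth' : ∀ m l : ℕ, m ≠ l → jueJ a b (P m * P l) = 0) (j : ℕ) :
    jueJ a b (Polynomial.X * (P j * P j)) =
      ((Polynomial.X * P j).coeff j - (Polynomial.X * P (j+1)).coeff (j+1)) *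
        jueJ a b (P j * P j) := by
  have hsplit : Polynomial.X * (P j * P j) =
      P j * P (j+1) + P j * (Polynomial.X * P j - P (j+1)) := by ring
  rw [hsplit, jueJ_add ha hb, horth' j (j+1) (by omega), zero_add,
    jue_ortho ha hb P hmonic hdeg horth' j _ (jue_g_deg P hmonic hdeg j) j le_rfl]
  congr 1
  rw [Polynomial.coeff_sub, Polynomial.coeff_X_mul]

lemma jue_s_closed {a b : ℝ} (ha : -1 < a) (hb : -1 < b) (P : ℕ → Polynomial ℝ)
    (hmonic : ∀ m : ℕ, (P m).Monic) (hdeg : ∀ m : ℕ, (P m).natDegree = m)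
    (horth' : ∀ m l : ℕ, m ≠ l → jueJ a b (P m * P l) = 0) : ∀ j : ℕ,
    (a + b + 2*(j:ℝ)) * (Polynomial.X * P j).coeff j = -((j:ℝ) * (b + (j:ℝ))) := by
  set s : ℕ → ℝ := fun j => (Polynomial.X * P j).coeff j with hs
  have hs0 : s 0 = 0 := by
    simp [hs, Polynomial.mul_coeff_zero]
  have hH : ∀ j, jueJ a b (P j * P j) ≠ 0 := by
    intro j
    exact ne_of_gt (jueJ_sq_pos ha hb (P j) (hmonic j).ne_zero)
  have hsalt : ∀ j : ℕ, 0 < j → s j = (P j).coeff (j-1) := by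
    intro j hj
    obtain ⟨j', rfl⟩ : ∃ j', j = j' + 1 := ⟨j - 1, by omega⟩
    simp [hs, Polynomial.coeff_X_mul]
  -- the recurrence
  have hrec : ∀ j : ℕ, (a + b + 2*(j:ℝ)) * s j - (a + b + 2*(j:ℝ) + 2) * s (j+1)
      = b + 1 + 2*(j:ℝ) := by
    intro j
    set q : Polynomial ℝ := (P j).derivative with hqd
    set u : Polynomial ℝ := Polynomial.X * (1 - Polynomial.X) * q
      + Polynomial.C (j:ℝ) * P (j+1) with hu
    have hqdeg : q.natDegree ≤ j - 1 := by
      have := Polynomial.natDegree_derivative_le (P j)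
      rwa [hdeg j] at this
    -- u has degree ≤ j
    have hudeg1 : u.natDegree ≤ j + 1 := by
      apply le_trans (Polynomial.natDegree_add_le _ _)
      apply max_le
      · rcases Nat.eq_zero_or_pos j with rfl | hj
        · have hq0 : q = 0 := by
            rw [hqd, ((hmonic 0).natDegree_eq_zero).mp (hdeg 0)]
            simp
          simp [hq0]
        apply le_trans (Polynomial.natDegree_mul_le)
        have h1 : (Polynomial.X * (1 - Polynomial.X) : Polynomial ℝ).natDegree ≤ 2 := by
          apply le_trans (Polynomial.natDegree_mul_le)
          have h3 : ((1 - Polynomial.X : Polynomial ℝ)).natDegree ≤ 1 := by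
            apply le_trans (Polynomial.natDegree_sub_le _ _)
            simp [Polynomial.natDegree_one, Polynomial.natDegree_X]
          have h2 := Polynomial.natDegree_X_le (R := ℝ)
          omega
        omega
      · apply le_trans (Polynomial.natDegree_C_mul_le _ _)
        rw [hdeg (j+1)]
    have hXq : ∀ k, j - 1 < k → q.coeff k = 0 := fun k hk =>
      Polynomial.coeff_eq_zero_of_natDegree_lt (lt_of_le_of_lt hqdeg hk)
    have hsigma : Polynomial.X * (1 - Polynomial.X) * q
        = Polynomial.X * q - Polynomial.X * (Polynomial.X * q) := by ring
    have hucoeff_top : u.coeff (j+1) = 0 := by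
      rcases Nat.eq_zero_or_pos j with rfl | hj
      · have hq0 : q = 0 := by
          rw [hqd, ((hmonic 0).natDegree_eq_zero).mp (hdeg 0)]
          simp
        simp [hu, hq0]
      · rw [hu, Polynomial.coeff_add, hsigma, Polynomial.coeff_sub,
          Polynomial.coeff_X_mul, Polynomial.coeff_X_mul]
        obtain ⟨j', rfl⟩ : ∃ j', j = j' + 1 := ⟨j - 1, by omega⟩
        rw [Polynomial.coeff_X_mul]
        have e1 : q.coeff (j'+1) = 0 := hXq _ (by omega)
        have e3 : (P (j'+1)).coeff (j'+1) = 1 := by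
          have := (hmonic (j'+1)).coeff_natDegree; rwa [hdeg (j'+1)] at this
        have e2 : q.coeff j' = ((j':ℝ)+1) := by
          rw [hqd, Polynomial.coeff_derivative, e3]; push_cast; ring
        have e4 : (P (j'+1+1)).coeff (j'+1+1) = 1 := by
          have := (hmonic (j'+2)).coeff_natDegree; rwa [hdeg (j'+2)] at this
        rw [Polynomial.coeff_C_mul, e1, e2, e4]
        push_cast; ring
    have hudeg : u.natDegree ≤ j := by
      apply Polynomial.natDegree_le_iff_coeff_eq_zero.mpr
      intro k hk
      rcases eq_or_lt_of_le (Nat.succ_le_of_lt hk) with h1 | h1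
      · rw [← h1]; exact hucoeff_top
      · exact Polynomial.coeff_eq_zero_of_natDegree_lt (lt_of_le_of_lt hudeg1 h1)
    -- the coefficient of u at j
    have hgamma : u.coeff j = (j:ℝ) - ((j:ℝ) - 1) * s j + (j:ℝ) * s (j+1) := by
      have hPj1 : (P (j+1)).coeff j = s (j+1) := by
        rw [hs]; simp [Polynomial.coeff_X_mul]
      rcases Nat.eq_zero_or_pos j with rfl | hj
      · have hq0 : q = 0 := by
          rw [hqd, ((hmonic 0).natDegree_eq_zero).mp (hdeg 0)]
          simp
        simp [hu, hq0, hs0]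
      · obtain ⟨j', rfl⟩ : ∃ j', j = j' + 1 := ⟨j - 1, by omega⟩
        rw [hu, Polynomial.coeff_add, hsigma, Polynomial.coeff_sub,
          Polynomial.coeff_X_mul, Polynomial.coeff_C_mul, hPj1]
        have e3 : (P (j'+1)).coeff (j'+1) = 1 := by
          have := (hmonic (j'+1)).coeff_natDegree; rwa [hdeg (j'+1)] at this
        have e2 : q.coeff j' = ((j':ℝ)+1) := by
          rw [hqd, Polynomial.coeff_derivative, e3]; push_cast; ring
        have e5 : (Polynomial.X * (Polynomial.X * q)).coeff (j'+1)
            = (j':ℝ) * s (j'+1) := by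
          rw [Polynomial.coeff_X_mul]
          rcases Nat.eq_zero_or_pos j' with rfl | hj'
          · simp [Polynomial.mul_coeff_zero]
          · obtain ⟨j'', rfl⟩ : ∃ j'', j' = j'' + 1 := ⟨j' - 1, by omega⟩
            rw [Polynomial.coeff_X_mul]
            have e7 : q.coeff j'' = (P (j''+1+1)).coeff (j''+1) * ((j'':ℝ)+1) := by
              rw [hqd, Polynomial.coeff_derivative]
            have e6 : (P (j''+1+1)).coeff (j''+1) = s (j''+1+1) := by
              have := hsalt (j''+1+1) (by omega)
              simpa using this.symm
            rw [e7, e6]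
            push_cast; ring
        rw [e5, e2]
        push_cast; ring
    -- Pearson applied to (P j)^2
    have hpear := jue_pearson ha hb (P j * P j)
    have hT : Polynomial.X * (1 - Polynomial.X) * (P j * P j).derivative
        + (Polynomial.C (b+1) - Polynomial.C (a+b+2) * Polynomial.X) * (P j * P j)
        = Polynomial.C 2 * (P j * u)
          + (Polynomial.C (b+1) * (P j * P j)
          + (Polynomial.C (-(a+b+2)) * (Polynomial.X * (P j * P j))
          + Polynomial.C (-(2*(j:ℝ))) * (P j * P (j+1)))) := by
      rw [hu, Polynomial.derivative_mul]
      simp only [map_neg, map_mul, Polynomial.C_1, map_ofNat]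
      ring
    rw [hT, jueJ_add ha hb, jueJ_add ha hb, jueJ_add ha hb,
      jueJ_smul, jueJ_smul, jueJ_smul, jueJ_smul,
      jue_ortho ha hb P hmonic hdeg horth' j u hudeg j le_rfl,
      jue_moment_step ha hb P hmonic hdeg horth' j,
      horth' j (j+1) (by omega), hgamma] at hpear
    have hfac : (2 * ((j:ℝ) - ((j:ℝ) - 1) * s j + (j:ℝ) * s (j+1))
        + (b+1) + (-(a+b+2)) * (s j - s (j+1))) * jueJ a b (P j * P j) = 0 := by
      rw [← hpear, hs]; ring
    have hzero := (mul_eq_zero.mp hfac).resolve_right (hH j)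
    linarith [hzero]
  -- closed form by induction
  intro j
  induction j with
  | zero => simpa using hs0
  | succ j ih =>
    have h2 := hrec j
    push_cast
    push_cast at ih h2
    nlinarith [h2, ih]

/-- The first moment of the eigenvalue density of the `n`-dimensional Jacobi Unitary
Ensemble with parameters `a, b > -1` equals `n(b+n)/(a+b+2n)`. -/
theorem jue_first_moment (a b : ℝ) (ha : -1 < a) (hb : -1 < b) (n : ℕ) (hn : 0 < n)
    (P : ℕ → Polynomial ℝ)
    (hmonic : ∀ m : ℕ, (P m).Monic)
    (hdeg : ∀ m : ℕ, (P m).natDegree = m)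
    (horth : ∀ m l : ℕ, m ≠ l →
      ∫ x in Set.Ioo (0 : ℝ) 1,
        x ^ b * (1 - x) ^ a * (P m).eval x * (P l).eval x = 0)
    (h : ℕ → ℝ)
    (hh : ∀ j : ℕ, h j = ∫ x in Set.Ioo (0 : ℝ) 1,
      x ^ b * (1 - x) ^ a * ((P j).eval x) ^ 2) :
    ∫ x in Set.Ioo (0 : ℝ) 1,
        x * (x ^ b * (1 - x) ^ a * ∑ j ∈ Finset.range n, ((P j).eval x) ^ 2 / h j) =
      (n : ℝ) * (b + (n : ℝ)) / (a + b + 2 * (n : ℝ)) := by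
  have horth' : ∀ m l : ℕ, m ≠ l → jueJ a b (P m * P l) = 0 := by
    intro m l hml
    rw [← horth m l hml]
    unfold jueJ
    congr 1 with x
    simp [Polynomial.eval_mul, mul_assoc]
  have hhJ : ∀ j : ℕ, h j = jueJ a b (P j * P j) := by
    intro j
    rw [hh j]
    unfold jueJ
    congr 1 with x
    simp [Polynomial.eval_mul, sq]
  have hHne : ∀ j : ℕ, jueJ a b (P j * P j) ≠ 0 := fun j =>
    ne_of_gt (jueJ_sq_pos ha hb (P j) (hmonic j).ne_zero)
  set s : ℕ → ℝ := fun j => (Polynomial.X * P j).coeff j with hs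
  have hs0 : s 0 = 0 := by simp [hs, Polynomial.mul_coeff_zero]
  -- rewrite the integrand as a finite sum of integrable pieces
  have hinteg : ∀ j : ℕ, IntegrableOn
      (fun x : ℝ => (h j)⁻¹ *
        (x ^ b * (1 - x) ^ a * (Polynomial.X * (P j * P j)).eval x)) (Set.Ioo 0 1) :=
    fun j => (jue_w_poly_integrable ha hb (Polynomial.X * (P j * P j))).const_mul _
  have hsum : ∫ x in Set.Ioo (0 : ℝ) 1,
        x * (x ^ b * (1 - x) ^ a * ∑ j ∈ Finset.range n, ((P j).eval x) ^ 2 / h j)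
      = ∑ j ∈ Finset.range n, (h j)⁻¹ * jueJ a b (Polynomial.X * (P j * P j)) := by
    rw [show (fun x : ℝ => x * (x ^ b * (1 - x) ^ a *
          ∑ j ∈ Finset.range n, ((P j).eval x) ^ 2 / h j))
        = fun x : ℝ => ∑ j ∈ Finset.range n, (h j)⁻¹ *
          (x ^ b * (1 - x) ^ a * (Polynomial.X * (P j * P j)).eval x) from ?_]
    · rw [integral_finset_sum _ (fun j _ => hinteg j)]
      congr 1 with j
      rw [integral_const_mul]
      rfl
    · funext x
      rw [Finset.mul_sum, Finset.mul_sum]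
      congr 1 with j
      simp only [Polynomial.eval_mul, Polynomial.eval_X]
      field_simp
  rw [hsum]
  have hterm : ∀ j : ℕ, (h j)⁻¹ * jueJ a b (Polynomial.X * (P j * P j))
      = s j - s (j+1) := by
    intro j
    rw [jue_moment_step ha hb P hmonic hdeg horth' j, hhJ j,
      mul_comm _ (jueJ a b (P j * P j)), ← mul_assoc, inv_mul_cancel₀ (hHne j), one_mul]
  rw [Finset.sum_congr rfl (fun j _ => hterm j), Finset.sum_range_sub' s n, hs0, zero_sub]
  have hclosed : (a + b + 2*(n:ℝ)) * s n = -((n:ℝ) * (b + (n:ℝ))) :=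
    jue_s_closed ha hb P hmonic hdeg horth' n
  have hpos : (0:ℝ) < a + b + 2 * (n:ℝ) := by
    have : (1:ℝ) ≤ (n:ℝ) := by exact_mod_cast hn
    linarith
  rw [eq_div_iff hpos.ne']
  linarith [hclosed]
end

section
/- The incomplete beta epsilon-transform identity: for 0 < x < 1, a, b > -1 and every positive integer k, (1/2)∫_0^1 sgn(x-t)·t^b(1-t)^a dt = ∑_{j=1}^{k} d_j·x^{b+j}(1-x)^{a+1} + (a+b+k+1)·d_k·(1/2)∫_0^1 sgn(x-t)·t^{b+k}(1-t)^a dt, where d_j = Γ(a+b+j+1)·Γ(b+1)/(Γ(a+b+2)·Γ(b+1+j)). -/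
open Finset MeasureTheory Real

private lemma ibeta_integrable {a b : ℝ} (ha : -1 < a) (hb : -1 < b) :
    IntegrableOn (fun t : ℝ => t ^ b * (1 - t) ^ a) (Set.Ioo 0 1) volume := by
  have h1 : IntegrableOn (fun t : ℝ => t ^ b * (1 - t) ^ a) (Set.Icc 0 (1/2)) volume := by
    apply IntegrableOn.mul_continuousOn
    · rw [integrableOn_Icc_iff_integrableOn_Ioc]
      exact (intervalIntegral.intervalIntegrable_rpow' hb (a := 0) (b := 1/2)).1
    · apply ContinuousOn.rpow_const (by fun_prop)
      intro t ht
      left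
      simp only [Set.mem_Icc] at ht
      nlinarith [ht.1, ht.2]
    · exact isCompact_Icc
  have h2 : IntegrableOn (fun t : ℝ => t ^ b * (1 - t) ^ a) (Set.Icc (1/2) 1) volume := by
    have := (intervalIntegral.intervalIntegrable_rpow' ha (a := 0) (b := 1/2)).comp_sub_left 1
    apply IntegrableOn.continuousOn_mul (g := fun t : ℝ => t ^ b)
    · apply ContinuousOn.rpow_const (by fun_prop)
      intro t ht
      left
      simp only [Set.mem_Icc] at ht
      nlinarith [ht.1, ht.2]
    · rw [integrableOn_Icc_iff_integrableOn_Ioc]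
      norm_num at this
      exact this.2
    · exact isCompact_Icc
  have : Set.Ioo (0:ℝ) 1 ⊆ Set.Icc 0 (1/2) ∪ Set.Icc (1/2) 1 := by
    intro t ht; by_cases h : t ≤ 1/2
    · exact Or.inl ⟨ht.1.le, h⟩
    · exact Or.inr ⟨le_of_not_ge h, ht.2.le⟩
  exact (h1.union h2).mono_set this

private lemma ftc_piece {a c : ℝ} (ha : -1 < a) (hc : -1 < c) {u v : ℝ} (huv : u ≤ v)
    (hu : 0 ≤ u) (hv : v ≤ 1) :
    ∫ t in u..v, ((c+1) * (t^c * (1-t)^a) - (a+c+2) * (t^(c+1) * (1-t)^a))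
      = v^(c+1)*(1-v)^(a+1) - u^(c+1)*(1-u)^(a+1) := by
  have hc1 : (0:ℝ) ≤ c + 1 := by linarith
  have ha1 : (0:ℝ) ≤ a + 1 := by linarith
  apply intervalIntegral.integral_eq_sub_of_hasDeriv_right_of_le huv
  · apply ContinuousOn.mul
    · exact ContinuousOn.rpow_const (by fun_prop) (fun t _ => Or.inr hc1)
    · exact ContinuousOn.rpow_const (by fun_prop) (fun t _ => Or.inr ha1)
  · intro t ht
    have ht0 : (0:ℝ) < t := lt_of_le_of_lt hu ht.1
    have ht1 : t < 1 := lt_of_lt_of_le ht.2 hv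
    have h1t : (0:ℝ) < 1 - t := by linarith
    have d1 : HasDerivAt (fun t : ℝ => t ^ (c+1)) ((c+1) * t ^ c) t := by
      have := Real.hasDerivAt_rpow_const (x := t) (p := c+1) (Or.inl ht0.ne')
      simpa using this
    have d2 : HasDerivAt (fun t : ℝ => (1-t) ^ (a+1)) (-((a+1) * (1-t) ^ a)) t := by
      have h := Real.hasDerivAt_rpow_const (x := 1 - t) (p := a+1) (Or.inl h1t.ne')
      have h3 : HasDerivAt (fun t : ℝ => 1 - t) (-1) t := (hasDerivAt_id t).const_sub 1
      have := h.comp t h3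
      simpa [Function.comp_def] using this
    have := (d1.mul d2).hasDerivWithinAt (s := Set.Ioi t)
    convert this using 1
    · ext v; rfl
    have e1 : t ^ (c+1) = t ^ c * t := by
      rw [Real.rpow_add ht0, Real.rpow_one]
    have e2 : (1-t) ^ (a+1) = (1-t) ^ a * (1-t) := by
      rw [Real.rpow_add h1t, Real.rpow_one]
    rw [e1, e2]; ring
  · have h1 : IntegrableOn (fun t : ℝ => t^c*(1-t)^a) (Set.Ioo u v) volume :=
      (ibeta_integrable ha hc).mono_set (Set.Ioo_subset_Ioo hu hv)
    have h2 : IntegrableOn (fun t : ℝ => t^(c+1)*(1-t)^a) (Set.Ioo u v) volume :=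
      (ibeta_integrable ha (by linarith : (-1:ℝ) < c+1)).mono_set (Set.Ioo_subset_Ioo hu hv)
    rw [intervalIntegrable_iff_integrableOn_Ioo_of_le huv]
    exact (h1.const_mul _).sub (h2.const_mul _)

private lemma sgn_split {a c x : ℝ} (ha : -1 < a) (hc : -1 < c) (hx0 : 0 < x) (hx1 : x < 1) :
    ∫ t in Set.Ioo (0:ℝ) 1, Real.sign (x - t) * t ^ c * (1 - t) ^ a
      = (∫ t in Set.Ioo (0:ℝ) x, t ^ c * (1 - t) ^ a)
        - ∫ t in Set.Ioo x 1, t ^ c * (1 - t) ^ a := by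
  have hI1 : IntegrableOn (fun t : ℝ => t ^ c * (1 - t) ^ a) (Set.Ioo 0 x) volume :=
    (ibeta_integrable ha hc).mono_set (Set.Ioo_subset_Ioo le_rfl hx1.le)
  have hI2 : IntegrableOn (fun t : ℝ => t ^ c * (1 - t) ^ a) (Set.Ioo x 1) volume :=
    (ibeta_integrable ha hc).mono_set (Set.Ioo_subset_Ioo hx0.le le_rfl)
  have heq1 : Set.EqOn (fun t : ℝ => t ^ c * (1 - t) ^ a)
      (fun t : ℝ => Real.sign (x - t) * t ^ c * (1 - t) ^ a) (Set.Ioo 0 x) := by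
    intro t ht
    simp only
    rw [Real.sign_of_pos (by linarith [ht.2] : (0:ℝ) < x - t)]
    ring
  have heq2 : Set.EqOn (fun t : ℝ => -(t ^ c * (1 - t) ^ a))
      (fun t : ℝ => Real.sign (x - t) * t ^ c * (1 - t) ^ a) (Set.Ioo x 1) := by
    intro t ht
    simp only
    rw [Real.sign_of_neg (by linarith [ht.1] : x - t < 0)]
    ring
  have hset : (Set.Ioo (0:ℝ) x ∪ Set.Ioo x 1) = Set.Ioo 0 1 \ {x} := by
    ext t
    simp only [Set.mem_union, Set.mem_Ioo, Set.mem_diff, Set.mem_singleton_iff]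
    constructor
    · rintro (⟨h1, h2⟩ | ⟨h1, h2⟩)
      · exact ⟨⟨h1, by linarith⟩, by linarith⟩
      · exact ⟨⟨by linarith, h2⟩, by exact fun h => absurd h.symm (ne_of_lt h1)⟩
    · rintro ⟨⟨h1, h2⟩, h3⟩
      rcases lt_trichotomy t x with h | h | h
      · exact Or.inl ⟨h1, h⟩
      · exact absurd h h3
      · exact Or.inr ⟨h, h2⟩
  have hae : ((Set.Ioo (0:ℝ) x ∪ Set.Ioo x 1 : Set ℝ) : Set ℝ) =ᵐ[volume] (Set.Ioo (0:ℝ) 1 : Set ℝ) := by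
    rw [hset]
    exact diff_ae_eq_self.mpr (measure_mono_null Set.inter_subset_right (measure_singleton x))
  rw [← MeasureTheory.setIntegral_congr_set hae,
    MeasureTheory.setIntegral_union (Set.disjoint_left.mpr
        (fun t ht ht' => absurd ht.2 (not_lt.mpr ht'.1.le))) measurableSet_Ioo
      (MeasureTheory.IntegrableOn.congr_fun hI1 heq1 measurableSet_Ioo)
      (MeasureTheory.IntegrableOn.congr_fun hI2.neg heq2 measurableSet_Ioo),
    MeasureTheory.setIntegral_congr_fun measurableSet_Ioo heq1.symm,
    MeasureTheory.setIntegral_congr_fun measurableSet_Ioo heq2.symm,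
    MeasureTheory.integral_neg]
  ring

private noncomputable def Ifun (a x c : ℝ) : ℝ :=
  (1/2) * ∫ t in Set.Ioo (0:ℝ) 1, Real.sign (x - t) * t ^ c * (1 - t) ^ a

private noncomputable def dcoef (a b : ℝ) (j : ℕ) : ℝ :=
  Real.Gamma (a + b + (j:ℝ) + 1) * Real.Gamma (b + 1) /
    (Real.Gamma (a + b + 2) * Real.Gamma (b + 1 + (j:ℝ)))

private lemma step_lemma {a c x : ℝ} (ha : -1 < a) (hc : -1 < c) (hx0 : 0 < x) (hx1 : x < 1) :
    Ifun a x c = (1/(c+1)) * (x^(c+1)*(1-x)^(a+1)) + ((a+c+2)/(c+1)) * Ifun a x (c+1) := by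
  unfold Ifun
  have hc1 : (0:ℝ) < c + 1 := by linarith
  have ha1 : (0:ℝ) < a + 1 := by linarith
  have key : ∀ u v : ℝ, u ≤ v → 0 ≤ u → v ≤ 1 →
      (c+1) * (∫ t in Set.Ioo u v, t^c*(1-t)^a)
        - (a+c+2) * (∫ t in Set.Ioo u v, t^(c+1)*(1-t)^a)
      = v^(c+1)*(1-v)^(a+1) - u^(c+1)*(1-u)^(a+1) := by
    intro u v huv hu hv
    have h1 : IntegrableOn (fun t : ℝ => t^c*(1-t)^a) (Set.Ioo u v) volume :=
      (ibeta_integrable ha hc).mono_set (Set.Ioo_subset_Ioo hu hv)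
    have h2 : IntegrableOn (fun t : ℝ => t^(c+1)*(1-t)^a) (Set.Ioo u v) volume :=
      (ibeta_integrable ha (by linarith : (-1:ℝ) < c+1)).mono_set (Set.Ioo_subset_Ioo hu hv)
    have hF := ftc_piece ha hc huv hu hv
    rw [intervalIntegral.integral_of_le huv, MeasureTheory.integral_Ioc_eq_integral_Ioo] at hF
    rw [← hF, MeasureTheory.integral_sub (h1.const_mul _) (h2.const_mul _),
      MeasureTheory.integral_const_mul, MeasureTheory.integral_const_mul]
  have E1 := key 0 x hx0.le le_rfl hx1.le
  have E2 := key x 1 hx1.le hx0.le le_rfl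
  rw [Real.zero_rpow hc1.ne'] at E1
  rw [show (1:ℝ) - 1 = 0 by ring, Real.zero_rpow ha1.ne'] at E2
  rw [sgn_split ha hc hx0 hx1, sgn_split ha (by linarith : (-1:ℝ) < c+1) hx0 hx1]
  field_simp
  nlinarith [E1, E2]

private lemma aux_main (a b : ℝ) (ha : -1 < a) (hb : -1 < b) (x : ℝ) (hx0 : 0 < x) (hx1 : x < 1) :
    ∀ k : ℕ, 1 ≤ k →
      Ifun a x b = (∑ j ∈ Finset.Icc 1 k, dcoef a b j * x ^ (b + (j:ℝ)) * (1-x)^(a+1))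
        + (a + b + (k:ℝ) + 1) * dcoef a b k * Ifun a x (b + (k:ℝ)) := by
  have hb1 : (0:ℝ) < b + 1 := by linarith
  have hΓb1 : Real.Gamma (b+1) ≠ 0 := (Real.Gamma_pos_of_pos hb1).ne'
  have hΓab2 : Real.Gamma (a+b+2) ≠ 0 :=
    (Real.Gamma_pos_of_pos (by linarith : (0:ℝ) < a+b+2)).ne'
  intro k hk
  induction k, hk using Nat.le_induction with
  | base =>
      have hd1 : dcoef a b 1 = 1/(b+1) := by
        unfold dcoef
        push_cast
        rw [show a + b + 1 + 1 = a + b + 2 by ring, show b + 1 + 1 = (b+1) + 1 by ring,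
          Real.Gamma_add_one hb1.ne']
        field_simp
      rw [Finset.Icc_self, Finset.sum_singleton, hd1]
      have := step_lemma ha hb hx0 hx1
      push_cast
      rw [this]
      ring
  | succ k hk IH =>
      have hkc : (1:ℝ) ≤ (k:ℝ) := by exact_mod_cast hk
      have hbk1 : (0:ℝ) < b + k + 1 := by linarith
      have habk1 : (0:ℝ) < a + b + k + 1 := by linarith
      have hΓbk : Real.Gamma (b + 1 + (k:ℝ)) ≠ 0 :=
        (Real.Gamma_pos_of_pos (by linarith)).ne'
      have hd : dcoef a b (k+1) = (a+b+k+1)/(b+k+1) * dcoef a b k := by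
        unfold dcoef
        push_cast
        rw [show a + b + ((k:ℝ)+1) + 1 = (a + b + (k:ℝ) + 1) + 1 by ring,
          show b + 1 + ((k:ℝ)+1) = (b + 1 + (k:ℝ)) + 1 by ring,
          Real.Gamma_add_one habk1.ne', Real.Gamma_add_one (by linarith : (0:ℝ) < b+1+(k:ℝ)).ne']
        field_simp
        ring
      rw [Finset.sum_Icc_succ_top (by omega : 1 ≤ k + 1), IH,
        step_lemma ha (by linarith : (-1:ℝ) < b + (k:ℝ)) hx0 hx1]
      push_cast
      rw [hd]
      have e1 : b + (k:ℝ) + 1 = b + ((k:ℝ)+1) := by ring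
      rw [e1]
      generalize (∑ j ∈ Finset.Icc 1 k, dcoef a b j * x ^ (b + (j:ℝ)) * (1-x)^(a+1)) = S
      field_simp
      ring

/-- The incomplete beta epsilon-transform identity: for `0 < x < 1`, `a, b > -1` and
every positive integer `k`,
`(1/2)∫_0^1 sgn(x-t) t^b (1-t)^a dt
  = ∑_{j=1}^k d_j x^{b+j} (1-x)^{a+1}
    + (a+b+k+1) d_k (1/2)∫_0^1 sgn(x-t) t^{b+k} (1-t)^a dt`,
where `d_j = Γ(a+b+j+1)Γ(b+1)/(Γ(a+b+2)Γ(b+1+j))`. -/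
theorem jacobi_epsilon_transform (a b : ℝ) (ha : -1 < a) (hb : -1 < b) (k : ℕ)
    (hk : 0 < k) (x : ℝ) (hx0 : 0 < x) (hx1 : x < 1) :
    (1 / 2) * ∫ t in Set.Ioo (0 : ℝ) 1,
        Real.sign (x - t) * t ^ b * (1 - t) ^ a =
      (∑ j ∈ Finset.Icc 1 k,
        (Real.Gamma (a + b + (j : ℝ) + 1) * Real.Gamma (b + 1) /
            (Real.Gamma (a + b + 2) * Real.Gamma (b + 1 + (j : ℝ)))) *
          x ^ (b + (j : ℝ)) * (1 - x) ^ (a + 1)) +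
      (a + b + (k : ℝ) + 1) *
        (Real.Gamma (a + b + (k : ℝ) + 1) * Real.Gamma (b + 1) /
          (Real.Gamma (a + b + 2) * Real.Gamma (b + 1 + (k : ℝ)))) *
        ((1 / 2) * ∫ t in Set.Ioo (0 : ℝ) 1,
          Real.sign (x - t) * t ^ (b + (k : ℝ)) * (1 - t) ^ a) := by
  have := aux_main a b ha hb x hx0 hx1 k hk
  simpa only [Ifun, dcoef, mul_assoc] using this
end
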